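/- arXiv:1303.0054 — 6 statements merged into one kernel-verified Lean document; each statement's English description precedes it below -/
import Mathlib

section
/- Let N ≥ 1, let μ be probability weights on {1,…,N}, and let f_1,…,f_n : {1,…,N} → ℝ be functions that are nonnegative (f_i(j) ≥ 0 for all i, j) and nondecreasing (f_i(j) ≤ f_i(j') whenever j ≤ j'). Then E_n(f_1,…,f_n) ≥ 0. -/
open Finset


variable {α : Type*} [DecidableEq α]

/-- The signed weighted sum over finpartitions of `s`. -/
noncomputable def Wt (v : Finset α → ℝ) (s : Finset α) : ℝ :=
  ∑ σ : Finpartition s, (-1 : ℝ) ^ (σ.parts.card + 1) *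
      (∏ b ∈ σ.parts, ((b.card - 1).factorial : ℝ)) * ∏ b ∈ σ.parts, v b

/-- Insert `a` into the part `b` of `σ` (or as a singleton if `b = ∅`), producing a
finpartition of `insert a s`. -/
def insPart {a : α} {s : Finset α} (ha : a ∉ s) (σ : Finpartition s) (b : Finset α)
    (hb : b ∈ insert (∅ : Finset α) σ.parts) : Finpartition (insert a s) where
  parts := insert (insert a b) (σ.parts.erase b)
  supIndep := by
    rw [supIndep_iff_pairwiseDisjoint, coe_insert]
    have hbs : b ⊆ s := by
      rcases mem_insert.1 hb with h | h
      · simp [h]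
      · exact σ.le h
    refine (σ.disjoint.subset (by simp [Finset.erase_subset])).insert ?_
    intro d hd hne
    simp only [mem_coe, mem_erase] at hd
    rw [disjoint_left]
    intro x hx hxd
    rcases mem_insert.1 hx with rfl | hxb
    · exact ha (σ.le hd.2 hxd)
    · rcases mem_insert.1 hb with rfl | hbp
      · exact notMem_empty x hxb
      · exact (disjoint_left.1 (σ.disjoint hbp hd.2 (Ne.symm hd.1)) hxb) hxd
  sup_parts := by
    ext x
    simp only [sup_insert, sup_eq_union, id_eq, mem_union, Finset.mem_sup, mem_insert, mem_erase]
    constructor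
    · rintro ((rfl | hxb) | ⟨d, ⟨hdb, hdp⟩, hxd⟩)
      · exact Or.inl rfl
      · rcases mem_insert.1 hb with rfl | hbp
        · exact absurd hxb (notMem_empty x)
        · exact Or.inr (σ.le hbp hxb)
      · exact Or.inr (σ.le hdp hxd)
    · rintro (rfl | hxs)
      · exact Or.inl (Or.inl rfl)
      · obtain ⟨d, hdp, hxd⟩ := σ.exists_mem hxs
        by_cases hdb : d = b
        · exact Or.inl (Or.inr (hdb ▸ hxd))
        · exact Or.inr ⟨d, ⟨hdb, hdp⟩, hxd⟩
  bot_notMem := by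
    simp only [bot_eq_empty, mem_insert, mem_erase]
    rintro (h | ⟨-, h⟩)
    · exact (insert_ne_empty a b) h.symm
    · exact σ.bot_notMem h

@[simp] lemma insPart_parts {a : α} {s : Finset α} (ha : a ∉ s) (σ : Finpartition s)
    (b : Finset α) (hb : b ∈ insert (∅ : Finset α) σ.parts) :
    (insPart ha σ b hb).parts = insert (insert a b) (σ.parts.erase b) := rfl

/-- Remove `a` from a finpartition of `insert a s`. -/
def remPart {a : α} {s : Finset α} (ha : a ∉ s) (τ : Finpartition (insert a s)) :
    Finpartition s :=
  (τ.avoid {a}).copy (by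
    rw [insert_sdiff_of_mem _ (mem_singleton_self a), sdiff_singleton_eq_erase,
      erase_eq_of_notMem ha])

lemma mem_remPart {a : α} {s : Finset α} (ha : a ∉ s) (τ : Finpartition (insert a s))
    (c : Finset α) :
    c ∈ (remPart ha τ).parts ↔ ∃ d ∈ τ.parts, ¬d ⊆ {a} ∧ d \ {a} = c := by
  simp [remPart, Finpartition.mem_avoid, Finpartition.copy]

lemma not_mem_of_mem_parts {a : α} {s : Finset α} (ha : a ∉ s) {σ : Finpartition s}
    {d : Finset α} (hd : d ∈ σ.parts) : a ∉ d := fun h => ha (σ.le hd h)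

section InvLemmas
variable {a : α} {s : Finset α} (ha : a ∉ s)

lemma insPart_part_eq (σ : Finpartition s) (b : Finset α)
    (hb : b ∈ insert (∅ : Finset α) σ.parts) :
    (insPart ha σ b hb).part a = insert a b :=
  Finpartition.part_eq_of_mem _ (mem_insert_self _ _) (mem_insert_self _ _)

lemma subset_of_mem_insert_empty {σ : Finpartition s} {b : Finset α}
    (hb : b ∈ insert (∅ : Finset α) σ.parts) : b ⊆ s := by
  rcases mem_insert.1 hb with rfl | h
  · simp
  · exact σ.le h

lemma remPart_insPart (σ : Finpartition s) (b : Finset α)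
    (hb : b ∈ insert (∅ : Finset α) σ.parts) :
    remPart ha (insPart ha σ b hb) = σ := by
  have hab : a ∉ b := fun h => ha (subset_of_mem_insert_empty hb h)
  ext c
  rw [mem_remPart]
  simp only [insPart_parts, mem_insert, mem_erase]
  constructor
  · rintro ⟨d, (rfl | ⟨hdb, hdp⟩), hd1, hd2⟩
    · rcases mem_insert.1 hb with rfl | hbp
      · exact absurd (by simp) hd1
      · rw [sdiff_singleton_eq_erase, erase_insert hab] at hd2
        exact hd2 ▸ hbp
    · have had : a ∉ d := not_mem_of_mem_parts ha hdp
      rw [sdiff_singleton_eq_erase, erase_eq_of_notMem had] at hd2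
      exact hd2 ▸ hdp
  · intro hc
    by_cases hcb : c = b
    · subst hcb
      refine ⟨insert a c, Or.inl rfl, ?_, ?_⟩
      · obtain ⟨x, hx⟩ := σ.nonempty_of_mem_parts hc
        intro hsub
        have : x = a := mem_singleton.1 (hsub (mem_insert_of_mem hx))
        exact hab (this ▸ hx)
      · rw [sdiff_singleton_eq_erase, erase_insert hab]
    · have hac : a ∉ c := not_mem_of_mem_parts ha hc
      refine ⟨c, Or.inr ⟨hcb, hc⟩, ?_, ?_⟩
      · obtain ⟨x, hx⟩ := σ.nonempty_of_mem_parts hc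
        intro hsub
        exact hac ((mem_singleton.1 (hsub hx)) ▸ hx)
      · rw [sdiff_singleton_eq_erase, erase_eq_of_notMem hac]

end InvLemmas

section InvLemmas2
variable {a : α} {s : Finset α} (ha : a ∉ s) (τ : Finpartition (insert a s))

lemma erase_part_mem :
    (τ.part a).erase a ∈ insert (∅ : Finset α) (remPart ha τ).parts := by
  have hB : τ.part a ∈ τ.parts := τ.part_mem.2 (mem_insert_self a s)
  by_cases h : (τ.part a).erase a = ∅
  · rw [h]; exact mem_insert_self _ _
  · refine mem_insert_of_mem ((mem_remPart ha τ _).2 ⟨τ.part a, hB, ?_, ?_⟩)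
    · intro hsub
      obtain ⟨x, hx⟩ := nonempty_of_ne_empty h
      have hxa := (mem_erase.1 hx).1
      exact hxa (mem_singleton.1 (hsub (mem_erase.1 hx).2))
    · rw [sdiff_singleton_eq_erase]

lemma insPart_remPart :
    insPart ha (remPart ha τ) ((τ.part a).erase a) (erase_part_mem ha τ) = τ := by
  have hB : τ.part a ∈ τ.parts := τ.part_mem.2 (mem_insert_self a s)
  have haB : a ∈ τ.part a := τ.mem_part (mem_insert_self a s)
  ext c
  simp only [insPart_parts, mem_insert, mem_erase]
  rw [insert_erase haB]
  constructor
  · rintro (rfl | ⟨hne, hc⟩)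
    · exact hB
    · rw [mem_remPart] at hc
      obtain ⟨d, hdp, hd1, hd2⟩ := hc
      by_cases hdB : d = τ.part a
      · exfalso
        apply hne
        rw [← hd2, hdB, sdiff_singleton_eq_erase]
      · have had : a ∉ d := fun h => hdB (τ.eq_of_mem_parts hdp hB h haB)
        rw [sdiff_singleton_eq_erase, erase_eq_of_notMem had] at hd2
        exact hd2 ▸ hdp
  · intro hc
    by_cases hcB : c = τ.part a
    · exact Or.inl hcB
    · have hac : a ∉ c := fun h => hcB (τ.eq_of_mem_parts hc hB h haB)
      refine Or.inr ⟨?_, ?_⟩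
      · intro heq
        obtain ⟨x, hx⟩ := τ.nonempty_of_mem_parts hc
        have hxB : x ∈ τ.part a := (mem_erase.1 (heq ▸ hx)).2
        exact (disjoint_left.1 (τ.disjoint hc hB hcB) hx) hxB
      · rw [mem_remPart]
        refine ⟨c, hc, ?_, ?_⟩
        · intro hsub
          obtain ⟨x, hx⟩ := τ.nonempty_of_mem_parts hc
          exact hac ((mem_singleton.1 (hsub hx)) ▸ hx)
        · rw [sdiff_singleton_eq_erase, erase_eq_of_notMem hac]

end InvLemmas2

section Rec
variable {a : α} {s : Finset α}

lemma term_insPart (ha : a ∉ s) (v : Finset α → ℝ)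
    (hv : ∀ b ⊆ s, b.Nonempty → v (insert a b) = v b)
    (σ : Finpartition s) (b : Finset α) (hb : b ∈ insert (∅ : Finset α) σ.parts) :
    (-1 : ℝ) ^ ((insPart ha σ b hb).parts.card + 1) *
        (∏ p ∈ (insPart ha σ b hb).parts, ((p.card - 1).factorial : ℝ)) *
        ∏ p ∈ (insPart ha σ b hb).parts, v p =
      (if b = ∅ then -(v {a}) else (b.card : ℝ)) *
        ((-1 : ℝ) ^ (σ.parts.card + 1) *
          (∏ p ∈ σ.parts, ((p.card - 1).factorial : ℝ)) * ∏ p ∈ σ.parts, v p) := by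
  have hab : a ∉ b := fun h => ha (subset_of_mem_insert_empty hb h)
  have hnm : insert a b ∉ σ.parts.erase b := fun h =>
    (not_mem_of_mem_parts ha (mem_of_mem_erase h)) (mem_insert_self a b)
  rcases mem_insert.1 hb with rfl | hbp
  · have hsing : ({a} : Finset α) ∉ σ.parts := fun h => ha (σ.le h (mem_singleton_self a))
    have herase : σ.parts.erase ∅ = σ.parts :=
      erase_eq_of_notMem (by simpa using σ.bot_notMem)
    simp only [insPart_parts, LawfulSingleton.insert_empty_eq, herase, if_pos rfl]
    rw [card_insert_of_notMem hsing, prod_insert hsing, prod_insert hsing]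
    simp only [card_singleton]
    norm_num
    ring
  · have hbne : b ≠ ∅ := by simpa using σ.ne_bot hbp
    have hbcard : 0 < b.card := card_pos.2 (nonempty_of_ne_empty hbne)
    simp only [insPart_parts, if_neg hbne]
    rw [card_insert_of_notMem hnm, card_erase_add_one hbp,
      prod_insert hnm, prod_insert hnm,
      card_insert_of_notMem hab, Nat.add_sub_cancel,
      hv b (σ.le hbp) (nonempty_of_ne_empty hbne),
      ← Nat.mul_factorial_pred hbcard.ne']
    rw [← Finset.mul_prod_erase σ.parts _ hbp, ← Finset.mul_prod_erase σ.parts v hbp]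
    push_cast
    ring

lemma Wt_insert (ha : a ∉ s) (v : Finset α → ℝ)
    (hv : ∀ b ⊆ s, b.Nonempty → v (insert a b) = v b) :
    Wt v (insert a s) = ((s.card : ℝ) - v {a}) * Wt v s := by
  classical
  have main : ∑ τ : Finpartition (insert a s),
      ((-1 : ℝ) ^ (τ.parts.card + 1) *
        (∏ p ∈ τ.parts, ((p.card - 1).factorial : ℝ)) * ∏ p ∈ τ.parts, v p) =
      ∑ q ∈ (univ : Finset (Finpartition s)).sigma
          (fun σ => insert (∅ : Finset α) σ.parts),
        (if q.2 = ∅ then -(v {a}) else (q.2.card : ℝ)) *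
          ((-1 : ℝ) ^ (q.1.parts.card + 1) *
            (∏ p ∈ q.1.parts, ((p.card - 1).factorial : ℝ)) * ∏ p ∈ q.1.parts, v p) := by
    refine (Finset.sum_bij'
      (i := fun q (hq : q ∈ _) => insPart ha q.1 q.2 (mem_sigma.1 hq).2)
      (j := fun τ _ => ⟨remPart ha τ, (τ.part a).erase a⟩)
      (fun q hq => mem_univ _)
      (fun τ _ => mem_sigma.2 ⟨mem_univ _, erase_part_mem ha τ⟩)
      (fun q hq => ?_) (fun τ _ => insPart_remPart ha τ)
      (fun q hq => (term_insPart ha v hv q.1 q.2 (mem_sigma.1 hq).2).symm)).symm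
    obtain ⟨σ, b⟩ := q
    have hb := (mem_sigma.1 hq).2
    have hab : a ∉ b := fun h => ha (subset_of_mem_insert_empty hb h)
    refine Sigma.ext (remPart_insPart ha σ b hb) (heq_of_eq ?_)
    dsimp only
    rw [insPart_part_eq ha σ b hb, erase_insert hab]
  rw [Wt, main, Finset.sum_sigma, Wt, Finset.mul_sum]
  refine Finset.sum_congr rfl fun σ _ => ?_
  rw [Finset.sum_insert (by simpa using σ.bot_notMem), if_pos rfl]
  rw [Finset.sum_congr rfl (fun b hb => by
    rw [if_neg (by simpa using σ.ne_bot hb)] :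
      ∀ b ∈ σ.parts, _ = (b.card : ℝ) * _)]
  dsimp only
  rw [← Finset.sum_mul]
  have hcard : (∑ b ∈ σ.parts, (b.card : ℝ)) = (s.card : ℝ) := by
    rw [← Nat.cast_sum, σ.sum_card_parts]
  rw [hcard]
  ring
end Rec

lemma Wt_singleton (v : Finset α → ℝ) (a : α) : Wt v {a} = v {a} := by
  classical
  haveI : Unique (Finpartition ({a} : Finset α)) :=
    IsAtom.uniqueFinpartition (P := Finpartition.indiscrete (by simp))
      (Finset.isAtom_singleton a)
  rw [Wt, Fintype.sum_unique]
  have hd : (default : Finpartition ({a} : Finset α)) =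
      Finpartition.indiscrete (by simp) := Subsingleton.elim _ _
  rw [hd]
  simp

lemma Wt_nonneg (v : Finset α → ℝ) (k : α → ℕ)
    (hv0 : ∀ x, 0 ≤ v {x}) (hv1 : ∀ x, v {x} ≤ 1)
    (hva : ∀ (x : α) (b : Finset α), b.Nonempty → x ∉ b → (∀ y ∈ b, k x ≤ k y) →
      v (insert x b) = v b) :
    ∀ s : Finset α, s.Nonempty → 0 ≤ Wt v s := by
  intro s
  induction s using Finset.strongInduction with
  | _ s ih =>
    intro hs
    obtain ⟨a, has, hmin⟩ := s.exists_min_image k hs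
    rcases eq_or_ne (s.erase a) ∅ with he | he
    · have : s = {a} := by
        apply Finset.eq_singleton_iff_unique_mem.2 ⟨has, fun x hx => ?_⟩
        by_contra hxa
        exact (notMem_empty x) (he ▸ mem_erase.2 ⟨hxa, hx⟩)
      rw [this, Wt_singleton]
      exact hv0 a
    · have hane : a ∉ s.erase a := notMem_erase a s
      have hsplit : s = insert a (s.erase a) := (insert_erase has).symm
      rw [hsplit, Wt_insert hane v (fun b hb hbne => hva a b hbne
        (fun h => hane (hb h))
        (fun y hy => hmin y (mem_of_mem_erase (hb hy))))]
      have h1 : (0 : ℝ) ≤ ((s.erase a).card : ℝ) - v {a} := by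
        have : 1 ≤ (s.erase a).card := card_pos.2 (nonempty_of_ne_empty he)
        have := hv1 a
        have : (1 : ℝ) ≤ ((s.erase a).card : ℝ) := by exact_mod_cast ‹1 ≤ (s.erase a).card›
        linarith [hv1 a]
      exact mul_nonneg h1 (ih (s.erase a) (erase_ssubset has) (nonempty_of_ne_empty he))

section MainAux

/-- indicator of `{j : k ≤ j}` -/
def gfun {N : ℕ} (k j : Fin N) : ℝ := if k ≤ j then 1 else 0

/-- increments of `f i` -/
noncomputable def cfun {n N : ℕ} (f : Fin n → Fin N → ℝ) (i : Fin n) (k : Fin N) : ℝ :=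
  f i k - (if h : (k : ℕ) = 0 then 0
    else f i ⟨(k : ℕ) - 1, lt_of_le_of_lt (Nat.sub_le _ _) k.isLt⟩)

lemma cfun_nonneg {n N : ℕ} (f : Fin n → Fin N → ℝ) (hf0 : ∀ i j, 0 ≤ f i j)
    (hfmono : ∀ i, Monotone (f i)) (i : Fin n) (k : Fin N) : 0 ≤ cfun f i k := by
  unfold cfun
  split
  · simpa using hf0 i k
  · rw [sub_nonneg]
    exact hfmono i (by simp [Fin.le_def])

lemma decomp {n N : ℕ} (f : Fin n → Fin N → ℝ) (i : Fin n) (j : Fin N) :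
    f i j = ∑ k : Fin N, cfun f i k * gfun k j := by
  have key : ∀ (m : ℕ) (hm : m < N),
      ∑ k ∈ Iic (⟨m, hm⟩ : Fin N), cfun f i k = f i ⟨m, hm⟩ := by
    intro m
    induction m with
    | zero =>
      intro hm
      have h0 : Iic ((⟨0, hm⟩ : Fin N)) = {(⟨0, hm⟩ : Fin N)} := by
        ext x
        simp [Fin.le_def, Fin.ext_iff, Nat.le_zero]
      rw [h0, sum_singleton]
      simp [cfun]
    | succ m ihm =>
      intro hm
      have hm' : m < N := by omega
      have hins : Iic ((⟨m + 1, hm⟩ : Fin N)) =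
          insert (⟨m + 1, hm⟩ : Fin N) (Iic (⟨m, hm'⟩ : Fin N)) := by
        ext x
        simp only [mem_Iic, mem_insert, Fin.le_def, Fin.ext_iff]
        omega
      rw [hins, sum_insert (by simp [Fin.le_def]), ihm hm']
      unfold cfun
      rw [dif_neg (Nat.succ_ne_zero m)]
      have : f i ⟨m + 1 - 1, lt_of_le_of_lt (Nat.sub_le _ _) hm⟩ = f i ⟨m, hm'⟩ := rfl
      rw [this]
      ring
  have hfil : (univ.filter (fun k : Fin N => k ≤ j)) = Iic j := by
    ext x; simp
  calc f i j = ∑ k ∈ Iic j, cfun f i k := by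
        rw [show j = (⟨(j : ℕ), j.isLt⟩ : Fin N) from rfl] at *
        exact (key _ _).symm
    _ = ∑ k : Fin N, cfun f i k * gfun k j := by
        rw [← hfil, sum_filter]
        refine sum_congr rfl fun k _ => ?_
        unfold gfun
        split <;> simp

lemma prod_gfun {n N : ℕ} (b : Finset (Fin n)) (κ : Fin n → Fin N) (j : Fin N) :
    ∏ s ∈ b, gfun (κ s) j = if ∀ s ∈ b, κ s ≤ j then 1 else 0 := by
  classical
  simp only [gfun]
  rw [Finset.prod_boole]
  congr

end MainAux

section Expand
variable {n N : ℕ}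

/-- Regroup a function along the parts of a finpartition. -/
def pieq (σ : Finpartition (univ : Finset (Fin n))) :
    (Fin n → Fin N) ≃ ((b : {x // x ∈ σ.parts}) → ({s : Fin n // s ∈ b.1} → Fin N)) where
  toFun κ := fun _ s => κ s.1
  invFun K := fun i => K ⟨σ.part i, σ.part_mem.2 (mem_univ i)⟩ ⟨i, σ.mem_part (mem_univ i)⟩
  left_inv κ := rfl
  right_inv K := by
    funext b s
    obtain ⟨b, hb⟩ := b
    obtain ⟨x, hx⟩ := s
    have hbp : σ.part x = b := σ.part_eq_of_mem hb hx
    dsimp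
    subst hbp
    rfl

lemma expand (μ : Fin N → ℝ) (f : Fin n → Fin N → ℝ)
    (σ : Finpartition (univ : Finset (Fin n))) :
    ∏ b ∈ σ.parts, (∑ j, μ j * ∏ s ∈ b, f s j) =
    ∑ κ : Fin n → Fin N, (∏ i, cfun f i (κ i)) *
      ∏ b ∈ σ.parts, (∑ j, μ j * ∏ s ∈ b, gfun (κ s) j) := by
  classical
  have step1 : ∀ b : Finset (Fin n),
      (∑ j, μ j * ∏ s ∈ b, f s j) =
      ∑ κb : {x // x ∈ b} → Fin N,
        (∏ s, cfun f s.1 (κb s)) * ∑ j, μ j * ∏ s, gfun (κb s) j := by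
    intro b
    have h1 : ∀ j : Fin N, ∏ s ∈ b, f s j =
        ∑ κb : {x // x ∈ b} → Fin N, ∏ s, (cfun f s.1 (κb s) * gfun (κb s) j) := by
      intro j
      rw [← Finset.prod_coe_sort b (fun s => f s j)]
      calc ∏ s : {x // x ∈ b}, f s.1 j
          = ∏ s : {x // x ∈ b}, ∑ k ∈ (univ : Finset (Fin N)), cfun f s.1 k * gfun k j :=
            Fintype.prod_congr _ _ fun s => decomp f s.1 j
        _ = ∑ κb ∈ Fintype.piFinset (fun _ : {x // x ∈ b} => (univ : Finset (Fin N))),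
              ∏ s, (cfun f s.1 (κb s) * gfun (κb s) j) := Finset.prod_univ_sum _ _
        _ = ∑ κb : {x // x ∈ b} → Fin N, ∏ s, (cfun f s.1 (κb s) * gfun (κb s) j) := by
            rw [Fintype.piFinset_univ]
    calc ∑ j, μ j * ∏ s ∈ b, f s j
        = ∑ j, ∑ κb : {x // x ∈ b} → Fin N,
            μ j * ∏ s, (cfun f s.1 (κb s) * gfun (κb s) j) := by
          refine Fintype.sum_congr _ _ fun j => ?_
          rw [h1 j, Finset.mul_sum]
      _ = ∑ κb : {x // x ∈ b} → Fin N, ∑ j,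
            μ j * ∏ s, (cfun f s.1 (κb s) * gfun (κb s) j) := Finset.sum_comm
      _ = ∑ κb : {x // x ∈ b} → Fin N,
            (∏ s, cfun f s.1 (κb s)) * ∑ j, μ j * ∏ s, gfun (κb s) j := by
          refine Fintype.sum_congr _ _ fun κb => ?_
          rw [Finset.mul_sum]
          refine Fintype.sum_congr _ _ fun j => ?_
          rw [Finset.prod_mul_distrib]
          ring
  calc ∏ b ∈ σ.parts, (∑ j, μ j * ∏ s ∈ b, f s j)
      = ∏ b : {x // x ∈ σ.parts},
          ∑ κb : {x // x ∈ b.1} → Fin N,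
            (∏ s, cfun f s.1 (κb s)) * ∑ j, μ j * ∏ s, gfun (κb s) j := by
        rw [← Finset.prod_coe_sort σ.parts (fun b => ∑ j, μ j * ∏ s ∈ b, f s j)]
        exact Fintype.prod_congr _ _ fun b => step1 b.1
    _ = ∑ K ∈ Fintype.piFinset
          (fun _ : {x // x ∈ σ.parts} => (univ : Finset ({x // x ∈ _} → Fin N))),
          ∏ b : {x // x ∈ σ.parts},
            ((∏ s, cfun f s.1 (K b s)) * ∑ j, μ j * ∏ s, gfun (K b s) j) :=
        Finset.prod_univ_sum _ _
    _ = ∑ K : (b : {x // x ∈ σ.parts}) → ({s : Fin n // s ∈ b.1} → Fin N),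
          ∏ b : {x // x ∈ σ.parts},
            ((∏ s, cfun f s.1 (K b s)) * ∑ j, μ j * ∏ s, gfun (K b s) j) := by
        rw [Fintype.piFinset_univ]
    _ = ∑ κ : Fin n → Fin N, (∏ i, cfun f i (κ i)) *
          ∏ b ∈ σ.parts, (∑ j, μ j * ∏ s ∈ b, gfun (κ s) j) := by
        refine (Fintype.sum_equiv (pieq σ) _ _ fun κ => ?_).symm
        show (∏ i, cfun f i (κ i)) * ∏ b ∈ σ.parts, (∑ j, μ j * ∏ s ∈ b, gfun (κ s) j) =
          ∏ b : {x // x ∈ σ.parts},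
            ((∏ s : {s : Fin n // s ∈ b.1}, cfun f s.1 (κ s.1)) *
              ∑ j, μ j * ∏ s : {s : Fin n // s ∈ b.1}, gfun (κ s.1) j)
        rw [Finset.prod_mul_distrib]
        congr 1
        · calc ∏ i, cfun f i (κ i)
              = ∏ i ∈ σ.parts.biUnion id, cfun f i (κ i) := by rw [σ.biUnion_parts]
            _ = ∏ b ∈ σ.parts, ∏ s ∈ b, cfun f s (κ s) :=
                Finset.prod_biUnion (σ.supIndep.pairwiseDisjoint)
            _ = ∏ b : {x // x ∈ σ.parts}, ∏ s : {s : Fin n // s ∈ b.1},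
                  cfun f s.1 (κ s.1) := by
                rw [← Finset.prod_coe_sort σ.parts (fun b => ∏ s ∈ b, cfun f s (κ s))]
                exact Fintype.prod_congr _ _ fun b =>
                  (Finset.prod_coe_sort b.1 (fun s => cfun f s (κ s))).symm
        · rw [← Finset.prod_coe_sort σ.parts
            (fun b => ∑ j, μ j * ∏ s ∈ b, gfun (κ s) j)]
          refine Fintype.prod_congr _ _ fun b => ?_
          refine Fintype.sum_congr _ _ fun j => ?_
          rw [Finset.prod_coe_sort b.1 (fun s => gfun (κ s) j)]

end Expand

lemma gfun_nonneg {N : ℕ} (k j : Fin N) : 0 ≤ gfun k j := by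
  unfold gfun; split <;> norm_num

lemma gfun_le_one {N : ℕ} (k j : Fin N) : gfun k j ≤ 1 := by
  unfold gfun; split <;> norm_num

theorem stmt0' (N n : ℕ) (hN : 1 ≤ N) (hn : 1 ≤ n)
    (μ : Fin N → ℝ) (hμ0 : ∀ j, 0 ≤ μ j) (hμ1 : ∑ j, μ j = 1)
    (f : Fin n → Fin N → ℝ) (hf0 : ∀ i j, 0 ≤ f i j) (hfmono : ∀ i, Monotone (f i)) :
    0 ≤ ∑ σ : Finpartition (Finset.univ : Finset (Fin n)),
        (-1 : ℝ) ^ (σ.parts.card + 1) *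
          (∏ b ∈ σ.parts, ((b.card - 1).factorial : ℝ)) *
          ∏ b ∈ σ.parts, (∑ j, μ j * ∏ s ∈ b, f s j) := by
  classical
  have hrw : ∀ σ : Finpartition (univ : Finset (Fin n)),
      (-1 : ℝ) ^ (σ.parts.card + 1) *
          (∏ b ∈ σ.parts, ((b.card - 1).factorial : ℝ)) *
          ∏ b ∈ σ.parts, (∑ j, μ j * ∏ s ∈ b, f s j) =
      ∑ κ : Fin n → Fin N, (∏ i, cfun f i (κ i)) *
          ((-1 : ℝ) ^ (σ.parts.card + 1) *
            (∏ b ∈ σ.parts, ((b.card - 1).factorial : ℝ)) *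
            ∏ b ∈ σ.parts, (∑ j, μ j * ∏ s ∈ b, gfun (κ s) j)) := by
    intro σ
    rw [expand μ f σ, Finset.mul_sum]
    exact Fintype.sum_congr _ _ fun κ => by ring
  have htot : ∑ σ : Finpartition (Finset.univ : Finset (Fin n)),
      ((-1 : ℝ) ^ (σ.parts.card + 1) *
        (∏ b ∈ σ.parts, ((b.card - 1).factorial : ℝ)) *
        ∏ b ∈ σ.parts, (∑ j, μ j * ∏ s ∈ b, f s j)) =
      ∑ κ : Fin n → Fin N, (∏ i, cfun f i (κ i)) *
        Wt (fun b => ∑ j, μ j * ∏ s ∈ b, gfun (κ s) j) univ := by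
    calc ∑ σ : Finpartition (Finset.univ : Finset (Fin n)), _
        = ∑ σ : Finpartition (Finset.univ : Finset (Fin n)),
            ∑ κ : Fin n → Fin N, (∏ i, cfun f i (κ i)) *
              ((-1 : ℝ) ^ (σ.parts.card + 1) *
                (∏ b ∈ σ.parts, ((b.card - 1).factorial : ℝ)) *
                ∏ b ∈ σ.parts, (∑ j, μ j * ∏ s ∈ b, gfun (κ s) j)) :=
          Fintype.sum_congr _ _ hrw
      _ = ∑ κ : Fin n → Fin N, ∑ σ : Finpartition (Finset.univ : Finset (Fin n)),
            (∏ i, cfun f i (κ i)) *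
              ((-1 : ℝ) ^ (σ.parts.card + 1) *
                (∏ b ∈ σ.parts, ((b.card - 1).factorial : ℝ)) *
                ∏ b ∈ σ.parts, (∑ j, μ j * ∏ s ∈ b, gfun (κ s) j)) := Finset.sum_comm
      _ = _ := Fintype.sum_congr _ _ fun κ => by rw [Wt, Finset.mul_sum]
  rw [htot]
  refine Finset.sum_nonneg fun κ _ => mul_nonneg
    (Finset.prod_nonneg fun i _ => cfun_nonneg f hf0 hfmono i (κ i)) ?_
  refine Wt_nonneg _ (fun i => ((κ i : ℕ))) ?_ ?_ ?_ univ ⟨⟨0, hn⟩, mem_univ _⟩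
  · intro x
    refine Finset.sum_nonneg fun j _ => mul_nonneg (hμ0 j) ?_
    rw [prod_singleton]
    exact gfun_nonneg _ _
  · intro x
    rw [← hμ1]
    refine Finset.sum_le_sum fun j _ => ?_
    rw [prod_singleton]
    exact mul_le_of_le_one_right (hμ0 j) (gfun_le_one _ _)
  · intro x b hbne hxb hmin
    refine Fintype.sum_congr _ _ fun j => ?_
    congr 1
    rw [prod_insert hxb, prod_gfun]
    by_cases hA : ∀ s ∈ b, κ s ≤ j
    · rw [if_pos hA]
      obtain ⟨y, hy⟩ := hbne
      have hxj : κ x ≤ j := le_trans (by exact_mod_cast hmin y hy) (hA y hy)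
      unfold gfun
      rw [if_pos hxj]
      norm_num
    · rw [if_neg hA]
      ring


/-- Let `N ≥ 1`, let `μ` be probability weights on `{1,…,N}`, and let
`f 1, …, f n : {1,…,N} → ℝ` be nonnegative nondecreasing functions.  Then
`E_n(f_1,…,f_n) = ∑_{σ ⊢ [n]} (-1)^{ℓ(σ)+1} (∏_i (|σ_i|-1)!) ∏_i ⟨∏_{s ∈ σ_i} f_s⟩_μ ≥ 0`. -/
theorem stmt0 (N n : ℕ) (hN : 1 ≤ N) (hn : 1 ≤ n)
    (μ : Fin N → ℝ) (hμ0 : ∀ j, 0 ≤ μ j) (hμ1 : ∑ j, μ j = 1)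
    (f : Fin n → Fin N → ℝ) (hf0 : ∀ i j, 0 ≤ f i j) (hfmono : ∀ i, Monotone (f i)) :
    0 ≤ ∑ σ : Finpartition (Finset.univ : Finset (Fin n)),
        (-1 : ℝ) ^ (σ.parts.card + 1) *
          (∏ b ∈ σ.parts, ((b.card - 1).factorial : ℝ)) *
          ∏ b ∈ σ.parts, (∑ j, μ j * ∏ s ∈ b, f s j) := by
  exact stmt0' N n hN hn μ hμ0 hμ1 f hf0 hfmono
end

section
/- Let N ≥ 1, n ≥ 1, and let μ(1),…,μ(N) be arbitrary real numbers. For any functions f_1,…,f_n : {1,…,N} → ℝ one has the multilinear expansion E_n(f_1,…,f_n) = Σ_{g : {1,…,n} → {1,…,N}} F_{m(g)}(μ) · ∏_{s=1}^n f_s(g(s)), where for g : {1,…,n} → {1,…,N} one sets m_j(g) = |g^{−1}(j)| for 1 ≤ j ≤ N, and F_{m_1,…,m_N}(μ) = −∏_{j=1}^N ∏_{i=1}^{m_j} (i − 1 − μ(j)). -/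
open Finset


/-- rising factorial product -/
noncomputable def G (x : ℝ) (m : ℕ) : ℝ := ∏ i ∈ Finset.range m, (x + i)

lemma lemB (x : ℝ) : ∀ p : ℕ, x * ∑ r ∈ Finset.range (p+1), ((p.factorial : ℝ) / r.factorial) * G x r = G x (p+1) := by
  intro p
  induction p with
  | zero => simp [G]
  | succ p ih =>
    rw [Finset.sum_range_succ]
    have h1 : ∀ r ∈ Finset.range (p+1), (((p+1).factorial : ℝ) / r.factorial) * G x r
        = (p+1) * (((p.factorial : ℝ) / r.factorial) * G x r) := by
      intro r _
      rw [Nat.factorial_succ]; push_cast; ring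
    rw [Finset.sum_congr rfl h1, ← Finset.mul_sum]
    have h2 : ((p+1).factorial : ℝ) / (p+1).factorial = 1 := by
      rw [div_self]; positivity
    rw [h2, one_mul, mul_add]
    have h3 : x * ((↑p + 1) * ∑ i ∈ Finset.range (p + 1), (p.factorial : ℝ) / ↑i.factorial * G x i)
        = (↑p+1) * (x * ∑ i ∈ Finset.range (p + 1), (p.factorial : ℝ) / ↑i.factorial * G x i) := by ring
    rw [h3, ih]
    have hG : G x (p+1+1) = G x (p+1) * (x + ((p:ℝ)+1)) := by
      simp only [G, Finset.prod_range_succ]; push_cast; ring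
    rw [hG]; ring

lemma lemB' (x : ℝ) (p : ℕ) :
    ∑ k ∈ Finset.range (p+1), (p.choose k : ℝ) * ((k.factorial : ℝ) * x * G x (p - k)) = G x (p+1) := by
  have h : ∀ k ∈ Finset.range (p+1), (p.choose k : ℝ) * ((k.factorial : ℝ) * x * G x (p-k))
      = x * (((p.factorial : ℝ) / ((p-k).factorial)) * G x (p-k)) := by
    intro k hk
    have hk' : k ≤ p := by simpa using Nat.lt_succ_iff.mp (Finset.mem_range.mp hk)
    have hc : ((p.choose k : ℝ) * k.factorial) = (p.factorial : ℝ) / ((p-k).factorial) := by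
      rw [eq_div_iff (by positivity)]
      exact_mod_cast Nat.choose_mul_factorial_mul_factorial hk'
    rw [← hc]; ring
  rw [Finset.sum_congr rfl h, ← Finset.mul_sum]
  have hr := Finset.sum_range_reflect (fun r => (p.factorial : ℝ) / r.factorial * G x r) (p+1)
  simp only [Nat.add_sub_cancel] at hr
  rw [hr]
  exact lemB x p

lemma sig_ext {α : Type*} [DecidableEq α] {T : Finset α} {B B' : Finset α} (h : B = B')
    {q : Finpartition (T \ B)} {q' : Finpartition (T \ B')} (hq : q.parts = q'.parts) :
    (⟨B, q⟩ : Σ C : Finset α, Finpartition (T \ C)) = ⟨B', q'⟩ := by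
  subst h
  exact congrArg _ (Finpartition.ext hq)

lemma lemA {α : Type*} [DecidableEq α] (x : ℝ) (T : Finset α) :
    ∑ π : Finpartition T, ∏ b ∈ π.parts, (((b.card - 1).factorial : ℝ) * x) = G x T.card := by
  induction T using Finset.strongInduction with
  | _ T ih =>
  rcases T.eq_empty_or_nonempty with rfl | ⟨a, ha⟩
  · have h1 : ∀ π : Finpartition (∅ : Finset α), π.parts = ∅ :=
      fun π => Finpartition.parts_eq_empty_iff.2 Finset.bot_eq_empty.symm
    have hcard : Fintype.card (Finpartition (∅ : Finset α)) = 1 :=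
      Fintype.card_eq_one_iff.2 ⟨⊥, fun y => Finpartition.ext (by rw [h1, h1])⟩
    rw [Finset.sum_congr rfl (fun π _ => by rw [h1 π, Finset.prod_empty])]
    simp [G, hcard]
  · -- avoid-parts lemma
    have R1 : ∀ π : Finpartition T, (π.avoid (π.part a)).parts = π.parts.erase (π.part a) := by
      intro π
      ext c
      rw [Finpartition.mem_avoid, Finset.mem_erase]
      constructor
      · rintro ⟨d, hd, hdB, rfl⟩
        have hne : d ≠ π.part a := fun h => hdB (h ▸ le_refl _)
        have hdisj : Disjoint d (π.part a) :=
          π.disjoint (Finset.mem_coe.2 hd) (Finset.mem_coe.2 (π.part_mem.2 ha)) hne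
        rw [sdiff_eq_left.2 hdisj]
        exact ⟨hne, hd⟩
      · rintro ⟨hne, hc⟩
        have hdisj : Disjoint c (π.part a) :=
          π.disjoint (Finset.mem_coe.2 hc) (Finset.mem_coe.2 (π.part_mem.2 ha)) hne
        exact ⟨c, hc, fun hle => π.ne_bot hc (hdisj.eq_bot_of_le hle),
          sdiff_eq_left.2 hdisj⟩
    have R2 : ∀ (B : Finset α), a ∈ B → ∀ (π' : Finpartition (T \ B))
        (hb : B ≠ ⊥) (hab : Disjoint (T \ B) B) (hc : (T \ B) ⊔ B = T),
        (⟨(π'.extend hb hab hc).part a,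
          (π'.extend hb hab hc).avoid ((π'.extend hb hab hc).part a)⟩
          : Σ C : Finset α, Finpartition (T \ C)) = ⟨B, π'⟩ := by
      intro B haB π' hb hab hc
      set E := π'.extend hb hab hc with hE
      have hBparts : B ∈ E.parts := by
        rw [hE, Finpartition.extend_parts]; exact Finset.mem_insert_self _ _
      have h1 : E.part a = B := Finpartition.part_eq_of_mem E hBparts haB
      refine sig_ext h1 ?_
      rw [h1]
      ext c
      rw [Finpartition.mem_avoid]
      constructor
      · rintro ⟨d, hd, hdB, rfl⟩
        rw [hE, Finpartition.extend_parts, Finset.mem_insert] at hd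
        rcases hd with rfl | hd
        · exact absurd le_rfl hdB
        · have hdisj : Disjoint d B := sdiff_disjoint.mono_left (π'.le hd)
          rwa [sdiff_eq_left.2 hdisj]
      · intro hc'
        have hdisj : Disjoint c B := sdiff_disjoint.mono_left (π'.le hc')
        refine ⟨c, ?_, fun hle => π'.ne_bot hc' (hdisj.eq_bot_of_le hle),
          sdiff_eq_left.2 hdisj⟩
        rw [hE, Finpartition.extend_parts]
        exact Finset.mem_insert_of_mem hc'
    have key : (∑ π : Finpartition T, ∏ b ∈ π.parts, (((b.card - 1).factorial : ℝ) * x))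
        = ∑ B ∈ T.powerset.filter (fun B => a ∈ B), (((B.card - 1).factorial : ℝ) * x) *
            ∑ π' : Finpartition (T \ B), ∏ b ∈ π'.parts, (((b.card - 1).factorial : ℝ) * x) := by
      simp_rw [Finset.mul_sum]
      rw [Finset.sum_sigma']
      refine Finset.sum_bij'
        (fun π _ => (⟨π.part a, π.avoid (π.part a)⟩ : Σ C : Finset α, Finpartition (T \ C)))
        (fun p hp => p.2.extend
          (by simpa [Finset.bot_eq_empty, ← Finset.nonempty_iff_ne_empty] using
            ⟨a, (Finset.mem_filter.1 (Finset.mem_sigma.1 hp).1).2⟩)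
          sdiff_disjoint
          (sdiff_sup_cancel (Finset.le_iff_subset.2
            (Finset.mem_powerset.1 (Finset.mem_filter.1 (Finset.mem_sigma.1 hp).1).1))))
        ?_ ?_ ?_ ?_ ?_
      · -- maps into sigma set
        intro π _
        rw [Finset.mem_sigma]
        exact ⟨Finset.mem_filter.2 ⟨Finset.mem_powerset.2 (π.le (π.part_mem.2 ha)), π.mem_part ha⟩,
          Finset.mem_univ _⟩
      · intro p hp
        exact Finset.mem_univ _
      · -- left inverse : extend ∘ avoid = id
        intro π _
        refine Finpartition.ext ?_
        rw [Finpartition.extend_parts, R1, Finset.insert_erase (π.part_mem.2 ha)]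
      · -- right inverse
        rintro ⟨B, π'⟩ hp
        exact R2 B (Finset.mem_filter.1 (Finset.mem_sigma.1 hp).1).2 π' _ _ _
      · -- weights
        intro π _
        rw [← Finset.mul_prod_erase _ _ (π.part_mem.2 ha), R1]
    rw [key]
    have hstep : ∀ B ∈ T.powerset.filter (fun B => a ∈ B),
        (((B.card - 1).factorial : ℝ) * x) *
            ∑ π' : Finpartition (T \ B), ∏ b ∈ π'.parts, (((b.card - 1).factorial : ℝ) * x)
          = (((B.card - 1).factorial : ℝ) * x) * G x (T.card - B.card) := by
      intro B hB
      have hBT : B ⊆ T := Finset.mem_powerset.1 (Finset.mem_filter.1 hB).1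
      have haB : a ∈ B := (Finset.mem_filter.1 hB).2
      rw [ih (T \ B) (Finset.sdiff_ssubset hBT ⟨a, haB⟩), Finset.card_sdiff_of_subset hBT]
    rw [Finset.sum_congr rfl hstep]
    -- reindex by C = B.erase a over powerset of T.erase a
    have hbij : ∑ B ∈ T.powerset.filter (fun B => a ∈ B),
          (((B.card - 1).factorial : ℝ) * x) * G x (T.card - B.card)
        = ∑ C ∈ (T.erase a).powerset,
          ((C.card.factorial : ℝ) * x) * G x ((T.erase a).card - C.card) := by
      refine Finset.sum_nbij' (fun B => B.erase a) (fun C => insert a C) ?_ ?_ ?_ ?_ ?_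
      · intro B hB
        exact Finset.mem_powerset.2 (Finset.erase_subset_erase a
          (Finset.mem_powerset.1 (Finset.mem_filter.1 hB).1))
      · intro C hC
        refine Finset.mem_filter.2 ⟨Finset.mem_powerset.2 ?_, Finset.mem_insert_self _ _⟩
        exact Finset.insert_subset ha ((Finset.mem_powerset.1 hC).trans (Finset.erase_subset _ _))
      · intro B hB
        exact Finset.insert_erase (Finset.mem_filter.1 hB).2
      · intro C hC
        exact Finset.erase_insert (fun h => (Finset.mem_erase.1 ((Finset.mem_powerset.1 hC) h)).1 rfl)
      · intro B hB
        have haB : a ∈ B := (Finset.mem_filter.1 hB).2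
        have hBT : B ⊆ T := Finset.mem_powerset.1 (Finset.mem_filter.1 hB).1
        have h1 : (B.erase a).card = B.card - 1 := Finset.card_erase_of_mem haB
        have h2 : (T.erase a).card = T.card - 1 := Finset.card_erase_of_mem ha
        have hB1 : 1 ≤ B.card := Finset.card_pos.2 ⟨a, haB⟩
        have hT1 : 1 ≤ T.card := Finset.card_pos.2 ⟨a, ha⟩
        have hBc : B.card ≤ T.card := Finset.card_le_card hBT
        rw [h1, h2]
        congr 2
        omega
    rw [hbij, Finset.sum_powerset]
    have hconst : ∀ j ∈ Finset.range ((T.erase a).card + 1),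
        ∑ C ∈ Finset.powersetCard j (T.erase a),
            ((C.card.factorial : ℝ) * x) * G x ((T.erase a).card - C.card)
          = ((T.erase a).card.choose j : ℝ) * ((j.factorial : ℝ) * x * G x ((T.erase a).card - j)) := by
      intro j _
      rw [Finset.sum_congr rfl (fun C hC => by
        rw [(Finset.mem_powersetCard.1 hC).2]), Finset.sum_const, Finset.card_powersetCard,
        nsmul_eq_mul]
    rw [Finset.sum_congr rfl hconst, lemB' x ((T.erase a).card)]
    congr 1
    have h2 : (T.erase a).card = T.card - 1 := Finset.card_erase_of_mem ha
    have hT1 : 1 ≤ T.card := Finset.card_pos.2 ⟨a, ha⟩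
    omega

variable {n N : ℕ}

/-- the fiber of `g` over `j` -/
def fib (g : Fin n → Fin N) (j : Fin N) : Finset (Fin n) :=
  Finset.univ.filter (fun s => g s = j)

lemma mem_fib {g : Fin n → Fin N} {j : Fin N} {s : Fin n} : s ∈ fib g j ↔ g s = j := by
  simp [fib]

lemma fib_disj {g : Fin n → Fin N} {j k : Fin N} (h : j ≠ k) : Disjoint (fib g j) (fib g k) :=
  Finset.disjoint_left.2 fun s hs hs' => h ((mem_fib.1 hs).symm.trans (mem_fib.1 hs'))

/-- Glue a family of partitions of the fibers of `g` into a partition of `univ`. -/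
def glue (g : Fin n → Fin N) (q : ∀ j, Finpartition (fib g j)) :
    Finpartition (Finset.univ : Finset (Fin n)) where
  parts := Finset.univ.biUnion (fun j => (q j).parts)
  supIndep := by
    rw [Finset.supIndep_iff_pairwiseDisjoint]
    rintro b hb c hc hbc
    rw [Finset.mem_coe, Finset.mem_biUnion] at hb hc
    obtain ⟨j, -, hbj⟩ := hb
    obtain ⟨k, -, hck⟩ := hc
    rcases eq_or_ne j k with rfl | hjk
    · exact (q j).disjoint hbj hck hbc
    · exact (fib_disj hjk).mono ((q j).le hbj) ((q k).le hck)
  sup_parts := by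
    apply le_antisymm
    · exact Finset.sup_le fun b _ => Finset.le_iff_subset.2 (Finset.subset_univ b)
    · intro s _
      have h1 : s ∈ fib g (g s) := mem_fib.2 rfl
      have h2 : (q (g s)).part s ∈ Finset.univ.biUnion (fun j => (q j).parts) :=
        Finset.mem_biUnion.2 ⟨g s, Finset.mem_univ _, (q (g s)).part_mem.2 h1⟩
      exact Finset.le_sup (f := id) h2 ((q (g s)).mem_part h1)
  bot_notMem := by
    rw [Finset.mem_biUnion]
    rintro ⟨j, -, h⟩
    exact (q j).bot_notMem h

lemma glue_parts (g : Fin n → Fin N) (q : ∀ j, Finpartition (fib g j)) :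
    (glue g q).parts = Finset.univ.biUnion (fun j => (q j).parts) := rfl

lemma mem_glue_parts {g : Fin n → Fin N} {q : ∀ j, Finpartition (fib g j)} {b : Finset (Fin n)} :
    b ∈ (glue g q).parts ↔ ∃ j, b ∈ (q j).parts := by
  simp [glue_parts]

/-- restriction of a partition to the fibers -/
def restr (g : Fin n → Fin N) (σ : Finpartition (Finset.univ : Finset (Fin n)))
    (hsup : ∀ j, ((σ.parts.filter (· ⊆ fib g j)).sup id = fib g j)) :
    ∀ j, Finpartition (fib g j) :=
  fun j => σ.ofSubset (Finset.filter_subset _ _) (hsup j)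

lemma restr_parts {g : Fin n → Fin N} {σ : Finpartition (Finset.univ : Finset (Fin n))}
    {hsup : ∀ j, ((σ.parts.filter (· ⊆ fib g j)).sup id = fib g j)} (j : Fin N) :
    (restr g σ hsup j).parts = σ.parts.filter (· ⊆ fib g j) := rfl

/-- `Const σ g` : `g` is constant on each part -/
def Const (σ : Finpartition (Finset.univ : Finset (Fin n))) (g : Fin n → Fin N) : Prop :=
  ∀ b ∈ σ.parts, ∀ u ∈ b, ∀ t ∈ b, g u = g t

lemma part_subset_fib {g : Fin n → Fin N} {σ : Finpartition (Finset.univ : Finset (Fin n))}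
    (hc : Const σ g) {b : Finset (Fin n)} (hb : b ∈ σ.parts) {u : Fin n} (hu : u ∈ b) :
    b ⊆ fib g (g u) :=
  fun t ht => mem_fib.2 (hc b hb t ht u hu)

lemma hsupOf {g : Fin n → Fin N} {σ : Finpartition (Finset.univ : Finset (Fin n))}
    (hc : Const σ g) (j : Fin N) :
    ((σ.parts.filter (· ⊆ fib g j)).sup id = fib g j) := by
  apply le_antisymm
  · exact Finset.sup_le fun b hb => Finset.le_iff_subset.2 (Finset.mem_filter.1 hb).2
  · intro s hs
    have hps := σ.part_mem.2 (Finset.mem_univ s)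
    have hmem := σ.mem_part (Finset.mem_univ s)
    have hsub : σ.part s ⊆ fib g (g s) := part_subset_fib hc hps hmem
    rw [mem_fib.1 hs] at hsub
    have hin : σ.part s ∈ σ.parts.filter (· ⊆ fib g j) := Finset.mem_filter.2 ⟨hps, hsub⟩
    exact Finset.le_sup (f := id) hin hmem

lemma parts_decomp {g : Fin n → Fin N} {σ : Finpartition (Finset.univ : Finset (Fin n))}
    (hc : Const σ g) :
    σ.parts = Finset.univ.biUnion (fun j => σ.parts.filter (· ⊆ fib g j)) := by
  ext b
  rw [Finset.mem_biUnion]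
  constructor
  · intro hb
    obtain ⟨u, hu⟩ := σ.nonempty_of_mem_parts hb
    exact ⟨g u, Finset.mem_univ _, Finset.mem_filter.2 ⟨hb, part_subset_fib hc hb hu⟩⟩
  · rintro ⟨j, -, hb⟩
    exact (Finset.mem_filter.1 hb).1

lemma filter_fib_pairwise {g : Fin n → Fin N} {σ : Finpartition (Finset.univ : Finset (Fin n))} :
    Set.PairwiseDisjoint (Finset.univ : Finset (Fin N))
      (fun j => σ.parts.filter (· ⊆ fib g j)) := by
  intro j _ k _ hjk
  rw [Function.onFun, Finset.disjoint_left]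
  intro b hbj hbk
  obtain ⟨u, hu⟩ := σ.nonempty_of_mem_parts (Finset.mem_filter.1 hbj).1
  exact hjk (((mem_fib.1 ((Finset.mem_filter.1 hbj).2 hu)).symm).trans
    (mem_fib.1 ((Finset.mem_filter.1 hbk).2 hu)))

lemma prod_decomp {g : Fin n → Fin N} {σ : Finpartition (Finset.univ : Finset (Fin n))}
    (hc : Const σ g) (W : Finset (Fin n) → ℝ) :
    ∏ b ∈ σ.parts, W b = ∏ j, ∏ b ∈ σ.parts.filter (· ⊆ fib g j), W b := by
  conv_lhs => rw [parts_decomp hc]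
  exact Finset.prod_biUnion filter_fib_pairwise

lemma sig_ext2 {σ σ' : Finpartition (Finset.univ : Finset (Fin n))} (hσ : σ = σ')
    {h : ∀ b ∈ σ.parts, Fin N} {h' : ∀ b ∈ σ'.parts, Fin N}
    (hh : ∀ b (hb : b ∈ σ.parts) (hb' : b ∈ σ'.parts), h b hb = h' b hb') :
    (⟨σ, h⟩ : Σ τ : Finpartition (Finset.univ : Finset (Fin n)), ∀ b ∈ τ.parts, Fin N)
      = ⟨σ', h'⟩ := by
  subst hσ
  exact congrArg _ (funext fun b => funext fun hb => hh b hb hb)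

lemma hvalOf {g : Fin n → Fin N} {σ : Finpartition (Finset.univ : Finset (Fin n))}
    {h : ∀ b ∈ σ.parts, Fin N}
    (hG : (fun s => h (σ.part s) (σ.part_mem.2 (Finset.mem_univ s))) = g)
    {b : Finset (Fin n)} (hb : b ∈ σ.parts) {u : Fin n} (hu : u ∈ b) : h b hb = g u := by
  have e : σ.part u = b := σ.part_eq_of_mem hb hu
  subst e
  exact congrFun hG u

lemma constOf {g : Fin n → Fin N} {σ : Finpartition (Finset.univ : Finset (Fin n))}
    {h : ∀ b ∈ σ.parts, Fin N}
    (hG : (fun s => h (σ.part s) (σ.part_mem.2 (Finset.mem_univ s))) = g) : Const σ g := by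
  intro b hb u hu t ht
  rw [← hvalOf hG hb hu, ← hvalOf hG hb ht]

lemma glue_restr {g : Fin n → Fin N} {σ : Finpartition (Finset.univ : Finset (Fin n))}
    (hc : Const σ g)
    (hsup : ∀ j, ((σ.parts.filter (· ⊆ fib g j)).sup id = fib g j)) :
    glue g (restr g σ hsup) = σ := by
  refine Finpartition.ext ?_
  rw [glue_parts]
  exact (parts_decomp hc).symm

lemma glue_const {g : Fin n → Fin N} (q : ∀ j, Finpartition (fib g j)) : Const (glue g q) g := by
  intro b hb u hu t ht
  obtain ⟨j, hbj⟩ := mem_glue_parts.1 hb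
  have hsub : b ⊆ fib g j := Finset.le_iff_subset.1 ((q j).le hbj)
  rw [mem_fib.1 (hsub hu), mem_fib.1 (hsub ht)]

lemma restr_glue {g : Fin n → Fin N} (q : ∀ j, Finpartition (fib g j))
    (hsup : ∀ j, (((glue g q).parts.filter (· ⊆ fib g j)).sup id = fib g j)) :
    restr g (glue g q) hsup = q := by
  funext j
  refine Finpartition.ext ?_
  rw [restr_parts]
  ext b
  rw [Finset.mem_filter]
  constructor
  · rintro ⟨hb, hsub⟩
    obtain ⟨k, hbk⟩ := mem_glue_parts.1 hb
    obtain ⟨u, hu⟩ := (q k).nonempty_of_mem_parts hbk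
    have h1 : g u = j := mem_fib.1 (hsub hu)
    have h2 : g u = k := mem_fib.1 (Finset.le_iff_subset.1 ((q k).le hbk) hu)
    obtain rfl : k = j := h2.symm.trans h1
    exact hbk
  · intro hb
    exact ⟨mem_glue_parts.2 ⟨j, hb⟩, Finset.le_iff_subset.1 ((q j).le hb)⟩

/-- canonical value of `μ ∘ g` on a block -/
noncomputable def vOf (g : Fin n → Fin N) (μ : Fin N → ℝ) (b : Finset (Fin n)) : ℝ :=
  if h : b.Nonempty then μ (g h.choose) else 1

lemma vOf_eq_h {g : Fin n → Fin N} {μ : Fin N → ℝ}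
    {σ : Finpartition (Finset.univ : Finset (Fin n))} {h : ∀ b ∈ σ.parts, Fin N}
    (hG : (fun s => h (σ.part s) (σ.part_mem.2 (Finset.mem_univ s))) = g)
    {b : Finset (Fin n)} (hb : b ∈ σ.parts) : vOf g μ b = μ (h b hb) := by
  have hne : b.Nonempty := σ.nonempty_of_mem_parts hb
  rw [vOf, dif_pos hne, hvalOf hG hb hne.choose_spec]

lemma vOf_eq_fib {g : Fin n → Fin N} {μ : Fin N → ℝ} {b : Finset (Fin n)}
    (hne : b.Nonempty) {j : Fin N} (hsub : b ⊆ fib g j) : vOf g μ b = μ j := by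
  rw [vOf, dif_pos hne, mem_fib.1 (hsub hne.choose_spec)]

lemma value1 {g : Fin n → Fin N} {μ : Fin N → ℝ}
    {σ : Finpartition (Finset.univ : Finset (Fin n))} {h : ∀ b ∈ σ.parts, Fin N}
    (hG : (fun s => h (σ.part s) (σ.part_mem.2 (Finset.mem_univ s))) = g) :
    (-1 : ℝ) ^ (σ.parts.card + 1) * (∏ b ∈ σ.parts, ((b.card - 1).factorial : ℝ)) *
        ∏ b ∈ σ.parts.attach, μ (h b.1 b.2)
      = -∏ b ∈ σ.parts, (((b.card - 1).factorial : ℝ) * (-(vOf g μ b))) := by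
  have e1 : ∏ b ∈ σ.parts.attach, μ (h b.1 b.2) = ∏ b ∈ σ.parts, vOf g μ b := by
    rw [← Finset.prod_attach σ.parts (fun b => vOf g μ b)]
    exact Finset.prod_congr rfl fun b _ => (vOf_eq_h hG b.2).symm
  rw [e1]
  have e2 : ∏ b ∈ σ.parts, (((b.card - 1).factorial : ℝ) * (-(vOf g μ b)))
      = (∏ b ∈ σ.parts, ((b.card - 1).factorial : ℝ)) *
          ((-1 : ℝ) ^ σ.parts.card * ∏ b ∈ σ.parts, vOf g μ b) := by
    rw [Finset.prod_mul_distrib]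
    congr 1
    calc ∏ b ∈ σ.parts, (-(vOf g μ b)) = ∏ b ∈ σ.parts, ((-1) * vOf g μ b) :=
          Finset.prod_congr rfl fun b _ => by ring
      _ = _ := by rw [Finset.prod_mul_distrib, Finset.prod_const]
  rw [e2]
  ring

lemma value2 {g : Fin n → Fin N} {μ : Fin N → ℝ}
    {σ : Finpartition (Finset.univ : Finset (Fin n))} (hc : Const σ g)
    (hsup : ∀ j, ((σ.parts.filter (· ⊆ fib g j)).sup id = fib g j)) :
    -∏ j, ∏ b ∈ (restr g σ hsup j).parts, (((b.card - 1).factorial : ℝ) * (-μ j))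
      = -∏ b ∈ σ.parts, (((b.card - 1).factorial : ℝ) * (-(vOf g μ b))) := by
  congr 1
  rw [prod_decomp hc (fun b => ((b.card - 1).factorial : ℝ) * (-(vOf g μ b)))]
  refine Finset.prod_congr rfl fun j _ => Finset.prod_congr rfl fun b hb => ?_
  have hb' := Finset.mem_filter.1 hb
  rw [vOf_eq_fib (σ.nonempty_of_mem_parts hb'.1) hb'.2]

lemma coeff (g : Fin n → Fin N) (μ : Fin N → ℝ) :
    ∑ p ∈ ((Finset.univ : Finset (Finpartition (Finset.univ : Finset (Fin n)))).sigma
        (fun σ => σ.parts.pi (fun _ => (Finset.univ : Finset (Fin N))))).filter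
        (fun p => (fun s => p.2 (p.1.part s) (p.1.part_mem.2 (Finset.mem_univ s))) = g),
      ((-1 : ℝ) ^ (p.1.parts.card + 1) * (∏ b ∈ p.1.parts, ((b.card - 1).factorial : ℝ)) *
        ∏ b ∈ p.1.parts.attach, μ (p.2 b.1 b.2))
    = ∑ q : ∀ j, Finpartition (fib g j),
        -∏ j, ∏ b ∈ (q j).parts, (((b.card - 1).factorial : ℝ) * (-μ j)) := by
  refine Finset.sum_bij'
    (fun p hp => restr g p.1 (hsupOf (constOf (Finset.mem_filter.1 hp).2)))
    (fun q _ => ⟨glue g q, fun b hb => g ((Finpartition.nonempty_of_mem_parts _ hb).choose)⟩)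
    (fun p hp => Finset.mem_univ _) ?_ ?_ ?_ ?_
  · -- backward maps into the filtered sigma set
    intro q _
    refine Finset.mem_filter.2 ⟨Finset.mem_sigma.2 ⟨Finset.mem_univ _, ?_⟩, ?_⟩
    · exact Finset.mem_pi.2 fun b hb => Finset.mem_univ _
    · funext s
      have hps := (glue g q).part_mem.2 (Finset.mem_univ s)
      have hmem := (glue g q).mem_part (Finset.mem_univ s)
      exact glue_const q _ hps _
        (Finpartition.nonempty_of_mem_parts _ hps).choose_spec _ hmem
  · -- left inverse
    rintro ⟨σ, h⟩ hp
    have hG := (Finset.mem_filter.1 hp).2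
    refine sig_ext2 (glue_restr (constOf hG) _) ?_
    intro b hb hb'
    exact (hvalOf hG hb' (Finpartition.nonempty_of_mem_parts _ hb).choose_spec).symm
  · -- right inverse
    intro q hq
    exact restr_glue q _
  · -- values
    rintro ⟨σ, h⟩ hp
    have hG := (Finset.mem_filter.1 hp).2
    rw [value1 hG, ← value2 (constOf hG) (hsupOf (constOf hG))]

lemma gOf_eq {σ : Finpartition (Finset.univ : Finset (Fin n))} {h : ∀ b ∈ σ.parts, Fin N}
    {b : Finset (Fin n)} (hb : b ∈ σ.parts) {s : Fin n} (hs : s ∈ b) :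
    h (σ.part s) (σ.part_mem.2 (Finset.mem_univ s)) = h b hb := by
  have e : σ.part s = b := σ.part_eq_of_mem hb hs
  subst e
  rfl

lemma PP (σ : Finpartition (Finset.univ : Finset (Fin n))) (F : Fin n → ℝ) :
    ∏ b ∈ σ.parts, ∏ s ∈ b, F s = ∏ s, F s := by
  conv_rhs => rw [← σ.biUnion_parts]
  rw [Finset.prod_biUnion (Finset.supIndep_iff_pairwiseDisjoint.1 σ.supIndep)]
  exact Finset.prod_congr rfl fun b _ => rfl

/-- Multilinear expansion of `E_n`: for arbitrary real weights `μ` and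
arbitrary functions `f_1,…,f_n : {1,…,N} → ℝ`,
`E_n(f_1,…,f_n) = ∑_{g : [n] → [N]} F_{m(g)}(μ) ∏_s f_s(g(s))`, where `m_j(g) = |g⁻¹(j)|`
and `F_{m_1,…,m_N}(μ) = -∏_{j=1}^N ∏_{i=1}^{m_j} (i - 1 - μ(j))`. -/
theorem stmt1 (N n : ℕ) (hN : 1 ≤ N) (hn : 1 ≤ n)
    (μ : Fin N → ℝ) (f : Fin n → Fin N → ℝ) :
    (∑ σ : Finpartition (Finset.univ : Finset (Fin n)),
        (-1 : ℝ) ^ (σ.parts.card + 1) *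
          (∏ b ∈ σ.parts, ((b.card - 1).factorial : ℝ)) *
          ∏ b ∈ σ.parts, (∑ j, μ j * ∏ s ∈ b, f s j))
      = ∑ g : Fin n → Fin N,
          (-(∏ j : Fin N, ∏ i ∈ Finset.range ((Finset.univ.filter fun s => g s = j).card),
              ((i : ℝ) - μ j))) * ∏ s : Fin n, f s (g s) := by
  classical
  have step2 : ∀ (σ : Finpartition (Finset.univ : Finset (Fin n)))
      (h : ∀ b ∈ σ.parts, Fin N),
      ∏ b ∈ σ.parts.attach, (μ (h b.1 b.2) * ∏ s ∈ b.1, f s (h b.1 b.2))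
        = (∏ b ∈ σ.parts.attach, μ (h b.1 b.2)) *
            ∏ s, f s (h (σ.part s) (σ.part_mem.2 (Finset.mem_univ s))) := by
    intro σ h
    rw [Finset.prod_mul_distrib]
    congr 1
    have e1 : ∀ b ∈ σ.parts.attach, ∏ s ∈ b.1, f s (h b.1 b.2)
        = ∏ s ∈ b.1, f s (h (σ.part s) (σ.part_mem.2 (Finset.mem_univ s))) := fun b _ =>
      Finset.prod_congr rfl fun s hs => congrArg (f s) (gOf_eq b.2 hs).symm
    rw [Finset.prod_congr rfl e1, Finset.prod_attach σ.parts
      (fun b => ∏ s ∈ b, f s (h (σ.part s) (σ.part_mem.2 (Finset.mem_univ s))))]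
    exact PP σ _
  calc (∑ σ : Finpartition (Finset.univ : Finset (Fin n)),
        (-1 : ℝ) ^ (σ.parts.card + 1) *
          (∏ b ∈ σ.parts, ((b.card - 1).factorial : ℝ)) *
          ∏ b ∈ σ.parts, (∑ j, μ j * ∏ s ∈ b, f s j))
      = ∑ σ : Finpartition (Finset.univ : Finset (Fin n)),
          ∑ h ∈ σ.parts.pi (fun _ => (Finset.univ : Finset (Fin N))),
          ((-1 : ℝ) ^ (σ.parts.card + 1) * (∏ b ∈ σ.parts, ((b.card - 1).factorial : ℝ)) *
            ∏ b ∈ σ.parts.attach, μ (h b.1 b.2)) *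
            ∏ s, f s (h (σ.part s) (σ.part_mem.2 (Finset.mem_univ s))) := by
        refine Finset.sum_congr rfl fun σ _ => ?_
        have hps : (∏ b ∈ σ.parts, ∑ j, μ j * ∏ s ∈ b, f s j)
            = ∑ h ∈ σ.parts.pi (fun _ => (Finset.univ : Finset (Fin N))),
                ∏ b ∈ σ.parts.attach, (μ (h b.1 b.2) * ∏ s ∈ b.1, f s (h b.1 b.2)) :=
          Finset.prod_sum _ _ _
        rw [hps, Finset.mul_sum]
        refine Finset.sum_congr rfl fun h _ => ?_
        rw [step2 σ h]
        ring
    _ = ∑ p ∈ ((Finset.univ : Finset (Finpartition (Finset.univ : Finset (Fin n)))).sigma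
          (fun σ => σ.parts.pi (fun _ => (Finset.univ : Finset (Fin N))))),
          ((-1 : ℝ) ^ (p.1.parts.card + 1) * (∏ b ∈ p.1.parts, ((b.card - 1).factorial : ℝ)) *
            ∏ b ∈ p.1.parts.attach, μ (p.2 b.1 b.2)) *
            ∏ s, f s (p.2 (p.1.part s) (p.1.part_mem.2 (Finset.mem_univ s))) :=
        Finset.sum_sigma' _ _ _
    _ = ∑ g : Fin n → Fin N,
          ∑ p ∈ ((Finset.univ : Finset (Finpartition (Finset.univ : Finset (Fin n)))).sigma
            (fun σ => σ.parts.pi (fun _ => (Finset.univ : Finset (Fin N))))).filter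
            (fun p => (fun s => p.2 (p.1.part s) (p.1.part_mem.2 (Finset.mem_univ s))) = g),
          ((-1 : ℝ) ^ (p.1.parts.card + 1) * (∏ b ∈ p.1.parts, ((b.card - 1).factorial : ℝ)) *
            ∏ b ∈ p.1.parts.attach, μ (p.2 b.1 b.2)) *
            ∏ s, f s (p.2 (p.1.part s) (p.1.part_mem.2 (Finset.mem_univ s))) :=
        (Finset.sum_fiberwise _ _ _).symm
    _ = ∑ g : Fin n → Fin N,
          (∑ p ∈ ((Finset.univ : Finset (Finpartition (Finset.univ : Finset (Fin n)))).sigma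
            (fun σ => σ.parts.pi (fun _ => (Finset.univ : Finset (Fin N))))).filter
            (fun p => (fun s => p.2 (p.1.part s) (p.1.part_mem.2 (Finset.mem_univ s))) = g),
          ((-1 : ℝ) ^ (p.1.parts.card + 1) * (∏ b ∈ p.1.parts, ((b.card - 1).factorial : ℝ)) *
            ∏ b ∈ p.1.parts.attach, μ (p.2 b.1 b.2))) * ∏ s, f s (g s) := by
        refine Finset.sum_congr rfl fun g _ => ?_
        rw [Finset.sum_mul]
        refine Finset.sum_congr rfl fun p hp => ?_
        have hG := (Finset.mem_filter.1 hp).2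
        rw [Finset.prod_congr rfl (fun s (_ : s ∈ (Finset.univ : Finset (Fin n))) =>
          congrArg (f s) (congrFun hG s))]
    _ = ∑ g : Fin n → Fin N,
          (-(∏ j : Fin N, ∏ i ∈ Finset.range ((Finset.univ.filter fun s => g s = j).card),
              ((i : ℝ) - μ j))) * ∏ s : Fin n, f s (g s) := by
        refine Finset.sum_congr rfl fun g _ => ?_
        congr 1
        rw [coeff g μ, Finset.sum_neg_distrib]
        congr 1
        rw [← Fintype.prod_sum (fun j (π : Finpartition (fib g j)) =>
          ∏ b ∈ π.parts, (((b.card - 1).factorial : ℝ) * (-μ j)))]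
        refine Finset.prod_congr rfl fun j _ => ?_
        rw [lemA (-μ j) (fib g j), G]
        exact Finset.prod_congr rfl fun i _ => by ring
end

section
/- Let N ≥ 1, let m_1,…,m_N be nonnegative integers, and let μ(1),…,μ(N) be real numbers. Then Σ over all arrays (k_{i,j})_{i≥1, 1≤j≤N} of nonnegative integers satisfying Σ_{i≥1} i·k_{i,j} = m_j for every j, of the quantity (−1)^{(Σ_{j=1}^N κ_j) − 1} · (∏_{j=1}^N μ(j)^{κ_j}) · (∏_{j=1}^N m_j!) / (∏_{j=1}^N ∏_{i≥1} i^{k_{i,j}} · k_{i,j}!), where κ_j = Σ_{i≥1} k_{i,j}, equals −∏_{j=1}^N ∏_{i=1}^{m_j} (i − 1 − μ(j)). (In each array only finitely many k_{i,j} are nonzero, namely k_{i,j} = 0 whenever i > m_j, so the sum and products are finite.) -/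
open Finset

private noncomputable def Dfun (M : ℕ) (k : Fin M → ℕ) : ℝ :=
  ∏ i : Fin M, (((i : ℕ) + 1 : ℝ) ^ (k i) * ((k i).factorial : ℝ))

private def Aset (M m : ℕ) : Finset (Fin M → ℕ) :=
  (Fintype.piFinset fun _ : Fin M => Finset.range (M + 1)).filter
    (fun k => ∑ i : Fin M, ((i : ℕ) + 1) * k i = m)

private noncomputable def wfun (M : ℕ) (x : ℝ) (k : Fin M → ℕ) : ℝ :=
  x ^ (∑ i, k i) / Dfun M k

private noncomputable def Tfun (M : ℕ) (x : ℝ) (m : ℕ) : ℝ := ∑ k ∈ Aset M m, wfun M x k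

private lemma Dfun_pos (M : ℕ) (k : Fin M → ℕ) : 0 < Dfun M k :=
  Finset.prod_pos fun i _ => mul_pos (pow_pos (by positivity) _)
    (by exact_mod_cast (k i).factorial_pos)

private lemma sum_of_mem {M m : ℕ} {k : Fin M → ℕ} (h : k ∈ Aset M m) :
    ∑ i : Fin M, ((i : ℕ) + 1) * k i = m := (mem_filter.1 h).2

private lemma mem_Aset {M m : ℕ} (hm : m ≤ M) {k : Fin M → ℕ} :
    k ∈ Aset M m ↔ ∑ i : Fin M, ((i : ℕ) + 1) * k i = m := by
  constructor
  · exact fun h => (mem_filter.1 h).2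
  · intro h
    refine mem_filter.2 ⟨Fintype.mem_piFinset.2 fun i => Finset.mem_range.2 ?_, h⟩
    have h1 : ((i : ℕ) + 1) * k i ≤ m := by
      rw [← h]
      exact Finset.single_le_sum (f := fun i : Fin M => ((i : ℕ) + 1) * k i)
        (fun _ _ => Nat.zero_le _) (mem_univ i)
    have h2 : k i ≤ ((i : ℕ) + 1) * k i := Nat.le_mul_of_pos_left _ (Nat.succ_pos _)
    omega

private lemma Aset_zero (M : ℕ) : Aset M 0 = {fun _ => 0} := by
  ext k
  rw [mem_Aset (Nat.zero_le M), Finset.mem_singleton]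
  constructor
  · intro h
    funext i
    have h2 := (Finset.sum_eq_zero_iff.1 h) i (mem_univ i)
    rcases Nat.mul_eq_zero.1 h2 with h3 | h3
    · omega
    · exact h3
  · intro h; subst h; simp

private lemma Tfun_zero (M : ℕ) (x : ℝ) : Tfun M x 0 = 1 := by
  rw [Tfun, Aset_zero, Finset.sum_singleton, wfun, Dfun]
  simp

private lemma key {M : ℕ} (x : ℝ) (i : Fin M) {k : Fin M → ℕ} (hk : k i ≠ 0) :
    (((i : ℕ) + 1 : ℝ) * (k i)) * wfun M x k
      = x * wfun M x (Function.update k i (k i - 1)) := by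
  have hκ : ∑ j : Fin M, Function.update k i (k i - 1) j = (∑ j : Fin M, k j) - 1 := by
    have e1 : ∑ j : Fin M, k j = k i + ∑ j ∈ univ.erase i, k j :=
      (Finset.add_sum_erase _ _ (mem_univ i)).symm
    have e2 : ∑ j : Fin M, Function.update k i (k i - 1) j
        = (k i - 1) + ∑ j ∈ univ.erase i, k j := by
      rw [← Finset.add_sum_erase _ _ (mem_univ i), Function.update_self]
      congr 1
      exact Finset.sum_congr rfl fun j hj =>
        Function.update_of_ne (Finset.ne_of_mem_erase hj) _ _
    omega
  have hκpos : 1 ≤ ∑ j : Fin M, k j :=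
    le_trans (Nat.one_le_iff_ne_zero.2 hk)
      (Finset.single_le_sum (f := fun j => k j) (fun _ _ => Nat.zero_le _) (mem_univ i))
  obtain ⟨n, hn⟩ := Nat.exists_eq_succ_of_ne_zero hk
  have hDk : Dfun M k = (((i : ℕ) + 1 : ℝ) * (k i)) * Dfun M (Function.update k i (k i - 1)) := by
    rw [Dfun, Dfun, ← Finset.mul_prod_erase _ _ (mem_univ i),
      ← Finset.mul_prod_erase _ (fun j : Fin M => (((j : ℕ) + 1 : ℝ) ^ (Function.update k i (k i - 1) j) * ((Function.update k i (k i - 1) j).factorial : ℝ))) (mem_univ i)]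
    have e3 : ∏ j ∈ univ.erase i,
        (((j : ℕ) + 1 : ℝ) ^ (Function.update k i (k i - 1) j) * ((Function.update k i (k i - 1) j).factorial : ℝ))
        = ∏ j ∈ univ.erase i, (((j : ℕ) + 1 : ℝ) ^ (k j) * ((k j).factorial : ℝ)) := by
      refine Finset.prod_congr rfl fun j hj => ?_
      rw [Function.update_of_ne (Finset.ne_of_mem_erase hj)]
    rw [e3, Function.update_self, hn]
    simp only [Nat.succ_sub_one]
    rw [pow_succ, Nat.factorial_succ]
    push_cast
    ring
  rw [wfun, wfun, hκ, hDk]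
  have hxpow : x ^ (∑ j : Fin M, k j) = x * x ^ ((∑ j : Fin M, k j) - 1) := by
    obtain ⟨t, ht⟩ := Nat.exists_eq_add_of_le hκpos
    rw [ht]
    simp [pow_add]
  rw [hxpow]
  have hc : (((i : ℕ) + 1 : ℝ) * (k i)) ≠ 0 := by
    rw [hn]; push_cast; positivity
  have hD : Dfun M (Function.update k i (k i - 1)) ≠ 0 := ne_of_gt (Dfun_pos _ _)
  field_simp

private lemma innerSum {M m : ℕ} (x : ℝ) (hm : m + 1 ≤ M) (i : Fin M) (hi : (i : ℕ) ≤ m) :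
    ∑ k ∈ Aset M (m + 1), (((i : ℕ) + 1 : ℝ) * (k i)) * wfun M x k
      = x * Tfun M x (m - (i : ℕ)) := by
  rw [Tfun, Finset.mul_sum]
  rw [← Finset.sum_filter_of_ne (p := fun k : Fin M → ℕ => k i ≠ 0)
    (fun k _ hne => by
      intro h0
      apply hne
      rw [h0]
      simp)]
  refine Finset.sum_nbij' (fun k => Function.update k i (k i - 1))
    (fun c => Function.update c i (c i + 1)) ?_ ?_ ?_ ?_ ?_
  · intro k hk
    obtain ⟨hk1, hk2⟩ := Finset.mem_filter.1 hk
    have hsum := sum_of_mem hk1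
    rw [mem_Aset (by omega)]
    beta_reduce
    have e1 : ∑ j : Fin M, ((j : ℕ) + 1) * k j
        = ((i : ℕ) + 1) * k i + ∑ j ∈ univ.erase i, ((j : ℕ) + 1) * k j :=
      (Finset.add_sum_erase _ _ (mem_univ i)).symm
    have e2 : ∑ j : Fin M, ((j : ℕ) + 1) * Function.update k i (k i - 1) j
        = ((i : ℕ) + 1) * (k i - 1) + ∑ j ∈ univ.erase i, ((j : ℕ) + 1) * k j := by
      rw [← Finset.add_sum_erase _ (fun j : Fin M => ((j : ℕ) + 1) * Function.update k i (k i - 1) j) (mem_univ i), Function.update_self]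
      congr 1
      exact Finset.sum_congr rfl fun j hj => by
        rw [Function.update_of_ne (Finset.ne_of_mem_erase hj)]
    have e3 : ((i : ℕ) + 1) * (k i - 1) + ((i : ℕ) + 1) = ((i : ℕ) + 1) * k i := by
      rw [← Nat.mul_succ]
      congr 1
      omega
    rw [e1] at hsum
    rw [e2]
    rw [← e3] at hsum
    generalize hB : ((i : ℕ) + 1) * (k i - 1) = B at hsum ⊢
    generalize hR : ∑ j ∈ univ.erase i, ((j : ℕ) + 1) * k j = R at hsum ⊢
    omega
  · intro c hc
    have hsum' : ∑ j : Fin M, ((j : ℕ) + 1) * c j = m - (i : ℕ) := (mem_Aset (by omega)).1 hc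
    beta_reduce
    refine Finset.mem_filter.2 ⟨?_, ?_⟩
    · rw [mem_Aset (by omega)]
      have e1 : ∑ j : Fin M, ((j : ℕ) + 1) * c j
          = ((i : ℕ) + 1) * c i + ∑ j ∈ univ.erase i, ((j : ℕ) + 1) * c j :=
        (Finset.add_sum_erase _ _ (mem_univ i)).symm
      have e2 : ∑ j : Fin M, ((j : ℕ) + 1) * Function.update c i (c i + 1) j
          = ((i : ℕ) + 1) * (c i + 1) + ∑ j ∈ univ.erase i, ((j : ℕ) + 1) * c j := by
        rw [← Finset.add_sum_erase _ (fun j : Fin M => ((j : ℕ) + 1) * Function.update c i (c i + 1) j) (mem_univ i), Function.update_self]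
        congr 1
        exact Finset.sum_congr rfl fun j hj => by
          rw [Function.update_of_ne (Finset.ne_of_mem_erase hj)]
      have e3 : ((i : ℕ) + 1) * (c i + 1) = ((i : ℕ) + 1) * c i + ((i : ℕ) + 1) :=
        Nat.mul_succ _ _
      rw [e1] at hsum'
      rw [e2, e3]
      generalize hB : ((i : ℕ) + 1) * c i = B at hsum' ⊢
      generalize hR : ∑ j ∈ univ.erase i, ((j : ℕ) + 1) * c j = R at hsum' ⊢
      omega
    · simp
  · intro k hk
    have hki : k i ≠ 0 := (Finset.mem_filter.1 hk).2
    funext j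
    rcases eq_or_ne j i with rfl | hji
    · simp [Function.update_self]
      omega
    · simp [Function.update_of_ne hji]
  · intro c _
    funext j
    rcases eq_or_ne j i with rfl | hji
    · simp [Function.update_self]
    · simp [Function.update_of_ne hji]
  · intro k hk
    exact key x i (Finset.mem_filter.1 hk).2

private lemma rec1 {M m : ℕ} (x : ℝ) (hm : m + 1 ≤ M) :
    ((m : ℝ) + 1) * Tfun M x (m + 1) = x * ∑ r ∈ range (m + 1), Tfun M x r := by
  have step1 : ((m : ℝ) + 1) * Tfun M x (m + 1)
      = ∑ k ∈ Aset M (m + 1), ∑ i : Fin M, (((i : ℕ) + 1 : ℝ) * (k i)) * wfun M x k := by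
    rw [Tfun, Finset.mul_sum]
    refine Finset.sum_congr rfl fun k hk => ?_
    have h := sum_of_mem hk
    have hcast : ((m : ℝ) + 1) = ∑ i : Fin M, (((i : ℕ) + 1 : ℝ) * (k i)) := by
      have := congrArg (fun n : ℕ => (n : ℝ)) h
      push_cast at this
      rw [← this]
    rw [hcast, Finset.sum_mul]
  rw [step1, Finset.sum_comm]
  have step2 : ∀ i : Fin M, ∑ k ∈ Aset M (m + 1), (((i : ℕ) + 1 : ℝ) * (k i)) * wfun M x k
      = if (i : ℕ) ≤ m then x * Tfun M x (m - (i : ℕ)) else 0 := by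
    intro i
    by_cases hi : (i : ℕ) ≤ m
    · rw [if_pos hi]
      exact innerSum x hm i hi
    · rw [if_neg hi]
      refine Finset.sum_eq_zero fun k hk => ?_
      have h := sum_of_mem hk
      have h1 : ((i : ℕ) + 1) * k i ≤ m + 1 := by
        rw [← h]
        exact Finset.single_le_sum (f := fun j : Fin M => ((j : ℕ) + 1) * k j)
          (fun _ _ => Nat.zero_le _) (mem_univ i)
      have h2 : k i = 0 := by
        by_contra h3
        have h4 : (i : ℕ) + 1 ≤ ((i : ℕ) + 1) * k i :=
          Nat.le_mul_of_pos_right _ (Nat.pos_of_ne_zero h3)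
        omega
      rw [h2]
      simp
  rw [Finset.sum_congr rfl fun i _ => step2 i]
  rw [Fin.sum_univ_eq_sum_range (fun n => if n ≤ m then x * Tfun M x (m - n) else 0) M]
  rw [← Finset.sum_subset (Finset.range_subset_range.2 hm)
    (fun n _ hn => if_neg (by rw [Finset.mem_range] at hn; omega))]
  rw [Finset.sum_congr rfl (fun n hn => if_pos (by rw [Finset.mem_range] at hn; omega))]
  rw [Finset.mul_sum]
  exact Finset.sum_range_reflect (fun r => x * Tfun M x r) (m + 1)

private lemma hockey (x : ℝ) (m : ℕ) :
    ∑ r ∈ range (m + 1), (∏ i ∈ range r, (x + (i : ℝ))) / (r.factorial : ℝ)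
      = (∏ i ∈ range m, (x + 1 + (i : ℝ))) / (m.factorial : ℝ) := by
  induction m with
  | zero => simp
  | succ n ih =>
    rw [Finset.sum_range_succ, ih]
    have h1 : ∏ i ∈ range (n + 1), (x + (i : ℝ)) = x * ∏ i ∈ range n, (x + 1 + (i : ℝ)) := by
      rw [Finset.prod_range_succ']
      have : ∀ i ∈ range n, (x + ((i + 1 : ℕ) : ℝ)) = (x + 1 + (i : ℝ)) := by
        intro i _
        push_cast
        ring
      rw [Finset.prod_congr rfl this]
      push_cast
      ring
    rw [h1, Finset.prod_range_succ, Nat.factorial_succ]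
    have hn0 : ((n.factorial : ℝ)) ≠ 0 := by exact_mod_cast n.factorial_ne_zero
    have hn1 : ((n : ℝ) + 1) ≠ 0 := by positivity
    field_simp
    push_cast
    ring

private lemma Tval {M : ℕ} (x : ℝ) :
    ∀ m, m ≤ M → Tfun M x m = (∏ i ∈ range m, (x + (i : ℝ))) / (m.factorial : ℝ) := by
  intro m
  induction m using Nat.strong_induction_on with
  | _ m ih =>
    match m with
    | 0 => intro _; simp [Tfun_zero]
    | (n + 1) =>
      intro hm
      have hrec := rec1 x (M := M) (m := n) hm
      have hsum : ∑ r ∈ range (n + 1), Tfun M x r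
          = (∏ i ∈ range n, (x + 1 + (i : ℝ))) / (n.factorial : ℝ) := by
        rw [← hockey x n]
        exact Finset.sum_congr rfl fun r hr => by
          rw [Finset.mem_range] at hr
          exact ih r (by omega) (by omega)
      rw [hsum] at hrec
      have hn1 : ((n : ℝ) + 1) ≠ 0 := by positivity
      have hn0 : ((n.factorial : ℝ)) ≠ 0 := by exact_mod_cast n.factorial_ne_zero
      have h1 : ∏ i ∈ range (n + 1), (x + (i : ℝ)) = x * ∏ i ∈ range n, (x + 1 + (i : ℝ)) := by
        rw [Finset.prod_range_succ']
        have : ∀ i ∈ range n, (x + ((i + 1 : ℕ) : ℝ)) = (x + 1 + (i : ℝ)) := by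
          intro i _
          push_cast
          ring
        rw [Finset.prod_congr rfl this]
        push_cast
        ring
      rw [h1, Nat.factorial_succ]
      have := hrec
      field_simp at this ⊢
      push_cast
      linarith [this]

private lemma Ssum {M mm : ℕ} (hm : mm ≤ M) (y : ℝ) :
    ∑ c ∈ Aset M mm, ((-y) ^ (∑ i, c i) * ((mm.factorial : ℝ)) / Dfun M c)
      = ∏ i ∈ range mm, ((i : ℝ) - y) := by
  have h1 : ∀ c ∈ Aset M mm, (-y) ^ (∑ i, c i) * ((mm.factorial : ℝ)) / Dfun M c
      = (mm.factorial : ℝ) * wfun M (-y) c := by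
    intro c _
    rw [wfun]
    ring
  rw [Finset.sum_congr rfl h1, ← Finset.mul_sum, ← Tfun, Tval (-y) mm hm]
  have hfac : ((mm.factorial : ℝ)) ≠ 0 := by exact_mod_cast mm.factorial_ne_zero
  rw [← mul_div_assoc, mul_comm, mul_div_assoc, div_self hfac, mul_one]
  exact Finset.prod_congr rfl fun i _ => by ring

/-- For real numbers `μ(1),…,μ(N)` and nonnegative integers `m_1,…,m_N`,
`∑_{(k_{i,j}) : ∑_i i·k_{i,j} = m_j ∀j} (-1)^{∑_j κ_j - 1} (∏_j μ(j)^{κ_j}) (∏_j m_j!) /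
 (∏_j ∏_i i^{k_{i,j}} k_{i,j}!) = -∏_{j=1}^N ∏_{i=1}^{m_j} (i - 1 - μ(j))`,
where `κ_j = ∑_i k_{i,j}`.  In any such array `k_{i,j} = 0` for `i > m_j` and
`k_{i,j} ≤ m_j`, so the arrays are faithfully encoded as functions
`Fin N → Fin M → ℕ` with `M = ∑ m_j` (the index `i : Fin M` standing for `i+1 ∈ {1,…,M}`)
with all values at most `M`. -/
theorem stmt2 (N : ℕ) (hN : 1 ≤ N) (m : Fin N → ℕ) (μ : Fin N → ℝ) :
    (∑ k ∈ (Fintype.piFinset fun _ : Fin N =>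
          Fintype.piFinset fun _ : Fin (∑ j, m j) => Finset.range ((∑ j, m j) + 1)).filter
        (fun k : Fin N → Fin (∑ j, m j) → ℕ =>
          ∀ j : Fin N, ∑ i : Fin (∑ j, m j), ((i : ℕ) + 1) * k j i = m j),
        (-1 : ℝ) ^ ((∑ j : Fin N, ∑ i : Fin (∑ j, m j), (k j i : ℤ)) - 1) *
          (∏ j : Fin N, μ j ^ (∑ i : Fin (∑ j, m j), k j i)) *
          (∏ j : Fin N, ((m j).factorial : ℝ)) /
          ∏ j : Fin N, ∏ i : Fin (∑ j, m j),
            (((i : ℕ) + 1 : ℝ) ^ (k j i) * ((k j i).factorial : ℝ)))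
      = -∏ j : Fin N, ∏ i ∈ Finset.range (m j), ((i : ℝ) - μ j) := by
  have hM : ∀ j : Fin N, m j ≤ ∑ j', m j' := fun j =>
    Finset.single_le_sum (fun _ _ => Nat.zero_le _) (mem_univ j)
  have hset : ((Fintype.piFinset fun _ : Fin N =>
          Fintype.piFinset fun _ : Fin (∑ j, m j) => Finset.range ((∑ j, m j) + 1)).filter
        (fun k : Fin N → Fin (∑ j, m j) → ℕ =>
          ∀ j : Fin N, ∑ i : Fin (∑ j, m j), ((i : ℕ) + 1) * k j i = m j))
      = Fintype.piFinset (fun j : Fin N => Aset (∑ j', m j') (m j)) := by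
    ext k
    simp only [Finset.mem_filter, Fintype.mem_piFinset, Aset]
    rw [forall_and]
  rw [hset]
  have hterm : ∀ k ∈ Fintype.piFinset (fun j : Fin N => Aset (∑ j', m j') (m j)),
      (-1 : ℝ) ^ ((∑ j : Fin N, ∑ i : Fin (∑ j, m j), (k j i : ℤ)) - 1) *
          (∏ j : Fin N, μ j ^ (∑ i : Fin (∑ j, m j), k j i)) *
          (∏ j : Fin N, ((m j).factorial : ℝ)) /
          ∏ j : Fin N, ∏ i : Fin (∑ j, m j),
            (((i : ℕ) + 1 : ℝ) ^ (k j i) * ((k j i).factorial : ℝ))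
      = -(∏ j : Fin N, ((-μ j) ^ (∑ i : Fin (∑ j', m j'), k j i) * ((m j).factorial : ℝ)
            / Dfun (∑ j', m j') (k j))) := by
    intro k _
    have hA : (∑ j : Fin N, ∑ i : Fin (∑ j, m j), (k j i : ℤ))
        = ((∑ j : Fin N, ∑ i : Fin (∑ j, m j), k j i : ℕ) : ℤ) := by
      push_cast
      ring
    rw [hA, zpow_sub₀ (by norm_num : (-1 : ℝ) ≠ 0), zpow_natCast, zpow_one, div_neg, div_one]
    rw [← Finset.prod_pow_eq_pow_sum]
    simp only [Dfun]
    rw [neg_mul, neg_mul, neg_div, neg_inj]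
    rw [← Finset.prod_mul_distrib, ← Finset.prod_mul_distrib, ← Finset.prod_div_distrib]
    refine Finset.prod_congr rfl fun j _ => ?_
    rw [show -μ j = -1 * μ j by ring, mul_pow]
  rw [Finset.sum_congr rfl hterm, Finset.sum_neg_distrib,
    ← Finset.prod_univ_sum (fun j : Fin N => Aset (∑ j', m j') (m j))
      (fun (j : Fin N) (c : Fin (∑ j', m j') → ℕ) =>
        (-μ j) ^ (∑ i, c i) * ((m j).factorial : ℝ) / Dfun (∑ j', m j') c)]
  rw [Finset.prod_congr rfl (fun j _ => Ssum (hM j) (μ j))]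
end

section
/- Let N ≥ 1, let μ be probability weights on {1,…,N}, and let m_1,…,m_N be nonnegative integers with n = m_1+⋯+m_N ≥ 1. Define B(m_1,…,m_N) = −Σ over all tuples (i_1,…,i_{N−1}) of nonnegative integers satisfying i_j ≤ (m_1+⋯+m_j) − (i_1+⋯+i_{j−1}) for each 1 ≤ j ≤ N−1, of [∏_{j=1}^{N−1} binom((m_1+⋯+m_j) − (i_1+⋯+i_{j−1}), i_j) · ∏_{i=1}^{i_j} (i − 1 − μ(j))] · ∏_{i=1}^{n − (i_1+⋯+i_{N−1})} (i − 1 − μ(N)). Then B(m_1,…,m_N) ≥ 0. -/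
open Finset


variable {M : Type*} [AddCommMonoid M]

lemma filter_le_range {a b : ℕ} (h : a < b) :
    (range b).filter (fun k => k ≤ a) = range (a+1) := by
  ext k; simp only [mem_filter, mem_range]; omega

lemma sum_Iio_fin {n : ℕ} (g : Fin n → M) (J : Fin n) :
    ∑ s ∈ Iio J, g s = ∑ s : Fin n, if s < J then g s else 0 := by
  rw [Finset.sum_ite, Finset.sum_const_zero, add_zero]
  apply Finset.sum_congr _ (fun _ _ => rfl)
  ext s; simp

lemma sum_Iic_fin' {n : ℕ} (g : Fin n → M) (J : Fin n) :
    ∑ s ∈ Iic J, g s = ∑ s : Fin n, if s ≤ J then g s else 0 := by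
  rw [Finset.sum_ite, Finset.sum_const_zero, add_zero]
  apply Finset.sum_congr _ (fun _ _ => rfl)
  ext s; simp

lemma sum_Iio_zero {K : ℕ} (g : Fin (K+1) → M) : ∑ s ∈ Iio (0 : Fin (K+1)), g s = 0 := by
  rw [sum_Iio_fin]; simp

lemma sum_Iio_cons {K : ℕ} (x : M) (i : Fin K → M) (j : Fin K) :
    ∑ s ∈ Iio (j.succ), (Fin.cons x i : Fin (K+1) → M) s = x + ∑ s ∈ Iio j, i s := by
  rw [sum_Iio_fin, sum_Iio_fin, Fin.sum_univ_succ]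
  simp [Fin.succ_pos, Fin.succ_lt_succ_iff]

lemma sum_Iic_fin {n : ℕ} (g : Fin n → M) (J : Fin n) :
    ∑ s ∈ Iic J, g s = ∑ t ∈ range (J.1+1), (fun t => if h : t < n then g ⟨t, h⟩ else 0) t := by
  rw [sum_Iic_fin' g J]
  have h1 : ∀ s : Fin n, (if s ≤ J then g s else 0)
      = (fun t => if t ≤ J.1 then (if h : t < n then g ⟨t, h⟩ else 0) else 0) s.1 := by
    intro s
    simp only [Fin.le_def, s.2, dif_pos, Fin.eta]
  rw [Finset.sum_congr rfl (fun s _ => h1 s),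
    Fin.sum_univ_eq_sum_range (fun t => if t ≤ J.1 then (if h : t < n then g ⟨t, h⟩ else 0) else 0),
    ← Finset.sum_filter, filter_le_range J.2]

lemma sum_univ_ext {n : ℕ} (g : Fin n → M) :
    ∑ s : Fin n, g s = ∑ t ∈ range n, (fun t => if h : t < n then g ⟨t, h⟩ else 0) t := by
  rw [← Fin.sum_univ_eq_sum_range]
  exact Finset.sum_congr rfl (fun s _ => by simp [Fin.eta, s.2])

lemma sum_Ioc_shift (g : ℕ → M) (a b : ℕ) :
    ∑ s ∈ Ioc (a+1) (b+1), g s = ∑ s ∈ Ioc a b, g (s+1) := by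
  rw [← Finset.map_add_right_Ioc a b 1, Finset.sum_map]
  rfl

lemma sum_Icc_shift (g : ℕ → M) (a b : ℕ) :
    ∑ s ∈ Icc (a+1) (b+1), g s = ∑ s ∈ Icc a b, g (s+1) := by
  rw [← Finset.map_add_right_Icc a b 1, Finset.sum_map]
  rfl

lemma sum_piFinset_cons {K b : ℕ} (f : (Fin (K+1) → ℕ) → M) :
    ∑ i ∈ Fintype.piFinset (fun _ : Fin (K+1) => range (b+1)), f i
    = ∑ k ∈ range (b+1), ∑ i ∈ Fintype.piFinset (fun _ : Fin K => range (b+1)),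
        f (Fin.cons k i) := by
  have := Finset.filter_piFinset_eq_map_consEquiv
    (α := fun _ : Fin (K+1) => ℕ) (fun _ => range (b+1)) (fun _ => True)
  simp only [Finset.filter_true] at this
  rw [this, Finset.sum_map, Finset.sum_product]
  rfl



lemma vand (x y : ℝ) : ∀ m : ℕ, ∑ k ∈ range (m+1), (m.choose k : ℝ) *
    (∏ l ∈ range k, (x + l)) * ∏ l ∈ range (m-k), (y + l)
    = ∏ l ∈ range m, (x + y + l) := by
  intro m
  induction m with
  | zero => simp
  | succ m ih =>
    have key : ∀ k, k ∈ range (m+1) → ((m+1).choose (k+1) : ℝ) *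
        (∏ l ∈ range (k+1), (x + l)) * ∏ l ∈ range (m+1-(k+1)), (y + l)
        = (m.choose k : ℝ) * ((∏ l ∈ range k, (x + l)) * (x + k)) * ∏ l ∈ range (m-k), (y + l)
          + (m.choose (k+1) : ℝ) * (∏ l ∈ range (k+1), (x + l)) * ∏ l ∈ range (m-k), (y + l) := by
      intro k _
      rw [Nat.choose_succ_succ, Nat.cast_add, Nat.succ_sub_succ, prod_range_succ]
      ring
    rw [Finset.sum_range_succ', Finset.sum_congr rfl key, Finset.sum_add_distrib]
    have claim1 : (∑ k ∈ range (m+1), (m.choose (k+1) : ℝ) *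
          (∏ l ∈ range (k+1), (x + l)) * ∏ l ∈ range (m-k), (y + l))
        + ((m+1).choose 0 : ℝ) * (∏ l ∈ range 0, (x + l)) * ∏ l ∈ range (m+1-0), (y + l)
        = ∑ k ∈ range (m+1), (m.choose k : ℝ) * (∏ l ∈ range k, (x + l)) *
            ∏ l ∈ range (m+1-k), (y + l) := by
      rw [Finset.sum_range_succ' (fun k => (m.choose k : ℝ) * (∏ l ∈ range k, (x + l)) *
            ∏ l ∈ range (m+1-k), (y + l)) m]
      rw [Finset.sum_range_succ]
      simp [Nat.succ_sub_succ, Nat.choose_succ_self]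
    rw [add_assoc, claim1]
    have claim2 : ∀ k, k ∈ range (m+1) → (m.choose k : ℝ) * (∏ l ∈ range k, (x + l)) *
          ∏ l ∈ range (m+1-k), (y + l)
        = (m.choose k : ℝ) * (∏ l ∈ range k, (x + l)) *
            ((∏ l ∈ range (m-k), (y + l)) * (y + (m-k : ℕ))) := by
      intro k hk
      simp only [mem_range] at hk
      have : m + 1 - k = (m - k) + 1 := by omega
      rw [this, prod_range_succ]
    rw [Finset.sum_congr rfl claim2]
    have claim3 : ∀ k, k ∈ range (m+1) →
        (m.choose k : ℝ) * ((∏ l ∈ range k, (x + l)) * (x + k)) * ∏ l ∈ range (m-k), (y + l)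
        + (m.choose k : ℝ) * (∏ l ∈ range k, (x + l)) *
            ((∏ l ∈ range (m-k), (y + l)) * (y + (m-k : ℕ)))
        = (x + y + m) * ((m.choose k : ℝ) * (∏ l ∈ range k, (x + l)) *
            ∏ l ∈ range (m-k), (y + l)) := by
      intro k hk
      simp only [mem_range] at hk
      have : ((m - k : ℕ) : ℝ) = (m : ℝ) - k := by
        rw [Nat.cast_sub (by omega)]
      rw [this]; ring
    rw [← Finset.sum_add_distrib, Finset.sum_congr rfl claim3, ← Finset.mul_sum, ih,
      prod_range_succ]
    ring

lemma kcor (a t : ℝ) (r m p : ℕ) :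
    ∑ k ∈ range (m+1), (m.choose k : ℝ) * (∏ l ∈ range k, ((l:ℝ) - a)) *
      ∏ l ∈ range (m+p-k), ((r:ℝ) + l - t)
    = (∏ l ∈ range p, ((r:ℝ) + l - t)) * ∏ l ∈ range m, ((r:ℝ) + p + l - (a + t)) := by
  have h1 : ∀ k ∈ range (m+1), (m.choose k : ℝ) * (∏ l ∈ range k, ((l:ℝ) - a)) *
      ∏ l ∈ range (m+p-k), ((r:ℝ) + l - t)
      = (∏ l ∈ range p, ((r:ℝ) + l - t)) * ((m.choose k : ℝ) * (∏ l ∈ range k, (-a + l)) *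
          ∏ l ∈ range (m-k), (((r:ℝ) + p - t) + l)) := by
    intro k hk
    simp only [mem_range, Nat.lt_succ_iff] at hk
    have h2 : m + p - k = p + (m - k) := by omega
    rw [h2, Finset.prod_range_add]
    have h3 : ∀ l ∈ range (m-k), ((r:ℝ) + (p + l : ℕ) - t) = (((r:ℝ) + p - t) + l) := by
      intro l _; push_cast; ring
    rw [Finset.prod_congr rfl h3,
      Finset.prod_congr rfl (fun l (_ : l ∈ range k) => show ((l:ℝ) - a) = (-a + l) by ring)]
    ring
  rw [Finset.sum_congr rfl h1, ← Finset.mul_sum, vand (-a) ((r:ℝ)+p-t) m]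
  congr 1
  exact Finset.prod_congr rfl (fun l _ => by ring)


lemma mshift (m : ℕ → ℕ) (k : ℕ) (hk : k ≤ m 0) (jv : ℕ) (m2 : ℕ → ℕ)
    (hm2 : m2 = fun t => if t = 0 then m 0 + m 1 - k else m (t+1)) :
    (∑ s ∈ range (jv+1+1), m s) - k = ∑ s ∈ range (jv+1), m2 s := by
  subst hm2
  have e1 : ∑ s ∈ range (jv+1+1), m s = m 0 + m 1 + ∑ s ∈ range jv, m (s+2) := by
    rw [Finset.sum_range_succ' m (jv+1), Finset.sum_range_succ' (fun s => m (s+1)) jv]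
    ring
  have e2 : ∑ s ∈ range (jv+1), (fun t => if t = 0 then m 0 + m 1 - k else m (t+1)) s
      = (m 0 + m 1 - k) + ∑ s ∈ range jv, m (s+2) := by
    rw [Finset.sum_range_succ' (fun t => if t = 0 then m 0 + m 1 - k else m (t+1)) jv]
    norm_num
    have e3 : ∑ x ∈ range jv, m (x+1+1) = ∑ x ∈ range jv, m (x+2) := rfl
    omega
  omega



theorem auxid : ∀ (K : ℕ) (b : ℕ) (μ : ℕ → ℝ) (m : ℕ → ℕ), (∑ j ∈ range (K+1), m j) ≤ b →
    (∑ i ∈ (Fintype.piFinset fun _ : Fin K => range (b+1)).filter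
        (fun i : Fin K → ℕ => ∀ j : Fin K,
          i j ≤ (∑ s ∈ range (j.1+1), m s) - ∑ s ∈ Iio j, i s),
      (∏ j : Fin K, (((∑ s ∈ range (j.1+1), m s) - ∑ s ∈ Iio j, i s).choose (i j) : ℝ) *
          ∏ l ∈ range (i j), ((l:ℝ) - μ j.1)) *
        ∏ l ∈ range ((∑ j ∈ range (K+1), m j) - ∑ s : Fin K, i s), ((l:ℝ) - μ K))
    = ∏ j ∈ range (K+1), ∏ l ∈ range (m j),
        (((∑ s ∈ Ioc j K, m s : ℕ) : ℝ) + (l:ℝ) - ∑ s ∈ Icc j K, μ s) := by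
  intro K
  induction K with
  | zero =>
    intro b μ m hb
    have hset : (Fintype.piFinset fun _ : Fin 0 => range (b+1)) = {fun j => j.elim0} := by
      ext f
      simp only [Fintype.mem_piFinset, Finset.mem_singleton]
      constructor
      · intro _; funext j; exact j.elim0
      · intro _ j; exact j.elim0
    rw [Finset.filter_true_of_mem (fun f _ => fun j => j.elim0), hset, Finset.sum_singleton]
    simp [Finset.sum_range_one, Finset.prod_range_one]
  | succ K ih =>
    intro b μ m hb
    rw [Finset.sum_filter, sum_piFinset_cons]
    have hm0b : m 0 < b + 1 := by
      have h0 : m 0 ≤ ∑ j ∈ range (K+1+1), m j :=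
        Finset.single_le_sum (fun s _ => Nat.zero_le (m s)) (by simp)
      omega
    have inner : ∀ k ∈ range (b+1),
        (∑ i ∈ Fintype.piFinset fun _ : Fin K => range (b+1),
          if ∀ j : Fin (K+1), (Fin.cons k i : Fin (K+1) → ℕ) j ≤ (∑ s ∈ range (j.1+1), m s)
              - ∑ s ∈ Iio j, (Fin.cons k i : Fin (K+1) → ℕ) s
          then (∏ j : Fin (K+1),
              ((((∑ s ∈ range (j.1+1), m s) - ∑ s ∈ Iio j, (Fin.cons k i : Fin (K+1) → ℕ) s).choose
                ((Fin.cons k i : Fin (K+1) → ℕ) j) : ℕ) : ℝ) *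
                ∏ l ∈ range ((Fin.cons k i : Fin (K+1) → ℕ) j), ((l:ℝ) - μ j.1)) *
            ∏ l ∈ range ((∑ j ∈ range (K+1+1), m j) - ∑ s : Fin (K+1), (Fin.cons k i : Fin (K+1) → ℕ) s),
              ((l:ℝ) - μ (K+1))
          else 0)
        = if k ≤ m 0 then (((m 0).choose k : ℝ) * ∏ l ∈ range k, ((l:ℝ) - μ 0)) *
            ∏ j ∈ range (K+1),
              ∏ l ∈ range ((fun t => if t = 0 then m 0 + m 1 - k else m (t+1)) j),
                ((((∑ s ∈ Ioc j K, (fun t => if t = 0 then m 0 + m 1 - k else m (t+1)) s) : ℕ) : ℝ)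
                  + (l:ℝ) - ∑ s ∈ Icc j K, (fun t => μ (t+1)) s)
          else 0 := by
      intro k hkb
      set m2 : ℕ → ℕ := fun t => if t = 0 then m 0 + m 1 - k else m (t+1) with hm2
      set μ2 : ℕ → ℝ := fun t => μ (t+1) with hμ2
      by_cases hk : k ≤ m 0
      · rw [if_pos hk]
        have hbound : ∀ (i : Fin K → ℕ) (j : Fin K),
            (∑ s ∈ range (j.1+1+1), m s) - (k + ∑ s ∈ Iio j, i s)
            = (∑ s ∈ range (j.1+1), m2 s) - ∑ s ∈ Iio j, i s := by
          intro i j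
          have h1 := mshift m k hk j.1 m2 hm2
          omega
        have hb2 : ∑ j ∈ range (K+1), m2 j ≤ b := by
          have h1 := mshift m k hk K m2 hm2
          omega
        have hpt : ∀ i ∈ Fintype.piFinset (fun _ : Fin K => range (b+1)),
            (if ∀ j : Fin (K+1), (Fin.cons k i : Fin (K+1) → ℕ) j ≤ (∑ s ∈ range (j.1+1), m s)
                - ∑ s ∈ Iio j, (Fin.cons k i : Fin (K+1) → ℕ) s
            then (∏ j : Fin (K+1),
                ((((∑ s ∈ range (j.1+1), m s) - ∑ s ∈ Iio j, (Fin.cons k i : Fin (K+1) → ℕ) s).choose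
                  ((Fin.cons k i : Fin (K+1) → ℕ) j) : ℕ) : ℝ) *
                  ∏ l ∈ range ((Fin.cons k i : Fin (K+1) → ℕ) j), ((l:ℝ) - μ j.1)) *
              ∏ l ∈ range ((∑ j ∈ range (K+1+1), m j) - ∑ s : Fin (K+1), (Fin.cons k i : Fin (K+1) → ℕ) s),
                ((l:ℝ) - μ (K+1))
            else 0)
            = (((m 0).choose k : ℝ) * ∏ l ∈ range k, ((l:ℝ) - μ 0)) *
              (if ∀ j : Fin K, i j ≤ (∑ s ∈ range (j.1+1), m2 s) - ∑ s ∈ Iio j, i s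
              then (∏ j : Fin K,
                  ((((∑ s ∈ range (j.1+1), m2 s) - ∑ s ∈ Iio j, i s).choose (i j) : ℕ) : ℝ) *
                    ∏ l ∈ range (i j), ((l:ℝ) - μ2 j.1)) *
                ∏ l ∈ range ((∑ j ∈ range (K+1), m2 j) - ∑ s : Fin K, i s), ((l:ℝ) - μ2 K)
              else 0) := by
          intro i _
          have hC : (∀ j : Fin (K+1), (Fin.cons k i : Fin (K+1) → ℕ) j ≤ (∑ s ∈ range (j.1+1), m s)
                - ∑ s ∈ Iio j, (Fin.cons k i : Fin (K+1) → ℕ) s)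
              ↔ (∀ j : Fin K, i j ≤ (∑ s ∈ range (j.1+1), m2 s) - ∑ s ∈ Iio j, i s) := by
            rw [Fin.forall_fin_succ]
            simp only [Fin.cons_zero, Fin.cons_succ, Fin.val_zero, Fin.val_succ, zero_add,
              Finset.sum_range_one, sum_Iio_zero, sum_Iio_cons, Nat.sub_zero]
            rw [and_iff_right hk]
            apply forall_congr'
            intro j
            rw [hbound i j]
          by_cases hC2 : ∀ j : Fin K, i j ≤ (∑ s ∈ range (j.1+1), m2 s) - ∑ s ∈ Iio j, i s
          · rw [if_pos (hC.mpr hC2), if_pos hC2, Fin.prod_univ_succ, Fin.sum_cons]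
            simp only [Fin.cons_zero, Fin.cons_succ, Fin.val_zero, Fin.val_succ, zero_add,
              Finset.sum_range_one, sum_Iio_zero, sum_Iio_cons, Nat.sub_zero]
            have e1 : ∀ j : Fin K, (∑ s ∈ range (j.1+1+1), m s) - (k + ∑ s ∈ Iio j, i s)
                = (∑ s ∈ range (j.1+1), m2 s) - ∑ s ∈ Iio j, i s := hbound i
            have e2 : (∑ s ∈ range (K+1+1), m s) - (k + ∑ s : Fin K, i s)
                = (∑ j ∈ range (K+1), m2 j) - ∑ s : Fin K, i s := by
              have h1 := mshift m k hk K m2 hm2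
              omega
            simp only [e1, e2]
            have e3 : ∀ j : Fin K, μ (j.1+1) = μ2 j.1 := fun j => rfl
            have e4 : μ (K+1) = μ2 K := rfl
            simp only [e3, e4]
            ring
          · rw [if_neg (fun h => hC2 (hC.mp h)), if_neg hC2, mul_zero]
        rw [Finset.sum_congr rfl hpt, ← Finset.mul_sum, ← Finset.sum_filter, ih b μ2 m2 hb2]
      · rw [if_neg hk]
        apply Finset.sum_eq_zero
        intro i _
        rw [if_neg]
        intro hCC
        have h0 := hCC 0
        simp only [Fin.cons_zero, Fin.val_zero, zero_add, Finset.sum_range_one, sum_Iio_zero,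
          Nat.sub_zero] at h0
        exact hk h0
    rw [Finset.sum_congr rfl inner, ← Finset.sum_filter, filter_le_range hm0b]
    have hCF : ∀ k ∈ range (m 0 + 1),
        (((m 0).choose k : ℝ) * ∏ l ∈ range k, ((l:ℝ) - μ 0)) *
          ∏ j ∈ range (K+1),
            ∏ l ∈ range ((fun t => if t = 0 then m 0 + m 1 - k else m (t+1)) j),
              ((((∑ s ∈ Ioc j K, (fun t => if t = 0 then m 0 + m 1 - k else m (t+1)) s) : ℕ) : ℝ)
                + (l:ℝ) - ∑ s ∈ Icc j K, (fun t => μ (t+1)) s)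
        = (((m 0).choose k : ℝ) * (∏ l ∈ range k, ((l:ℝ) - μ 0)) *
            ∏ l ∈ range (m 0 + m 1 - k),
              (((∑ s ∈ Ioc 1 (K+1), m s : ℕ) : ℝ) + (l:ℝ) - ∑ s ∈ Icc 1 (K+1), μ s)) *
          ∏ j ∈ range K, ∏ l ∈ range (m (j+1+1)),
            (((∑ s ∈ Ioc (j+1+1) (K+1), m s : ℕ) : ℝ) + (l:ℝ)
              - ∑ s ∈ Icc (j+1+1) (K+1), μ s) := by
      intro k hkk
      set m2 : ℕ → ℕ := fun t => if t = 0 then m 0 + m 1 - k else m (t+1) with hm2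
      set μ2 : ℕ → ℝ := fun t => μ (t+1) with hμ2
      rw [Finset.prod_range_succ']
      have hA : ∀ j ∈ range K,
          (∏ l ∈ range (m2 (j+1)),
            (((∑ s ∈ Ioc (j+1) K, m2 s : ℕ) : ℝ) + (l:ℝ) - ∑ s ∈ Icc (j+1) K, μ2 s))
          = ∏ l ∈ range (m (j+1+1)),
            (((∑ s ∈ Ioc (j+1+1) (K+1), m s : ℕ) : ℝ) + (l:ℝ)
              - ∑ s ∈ Icc (j+1+1) (K+1), μ s) := by
        intro j _
        have hmm : m2 (j+1) = m (j+1+1) := by rw [hm2]; simp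
        have hIoc : ∑ s ∈ Ioc (j+1) K, m2 s = ∑ s ∈ Ioc (j+1+1) (K+1), m s := by
          rw [sum_Ioc_shift m (j+1) K]
          apply Finset.sum_congr rfl
          intro s hs
          simp only [mem_Ioc] at hs
          rw [hm2]
          simp only []
          rw [if_neg (by omega : ¬ s = 0)]
        have hIcc : ∑ s ∈ Icc (j+1) K, μ2 s = ∑ s ∈ Icc (j+1+1) (K+1), μ s := by
          rw [sum_Icc_shift μ (j+1) K]
        rw [hmm, hIoc, hIcc]
      have hm0 : m2 0 = m 0 + m 1 - k := by rw [hm2]; simp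
      have hI0 : ∑ s ∈ Ioc 0 K, m2 s = ∑ s ∈ Ioc 1 (K+1), m s := by
        have h1 := sum_Ioc_shift m 0 K
        norm_num at h1
        rw [h1]
        apply Finset.sum_congr rfl
        intro s hs
        simp only [mem_Ioc] at hs
        rw [hm2]
        simp only []
        rw [if_neg (by omega : ¬ s = 0)]
      have hIc0 : ∑ s ∈ Icc 0 K, μ2 s = ∑ s ∈ Icc 1 (K+1), μ s := by
        have h1 := sum_Icc_shift μ 0 K
        norm_num at h1
        rw [h1]
      rw [Finset.prod_congr rfl hA, hm0, hI0, hIc0]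
      ring
    rw [Finset.sum_congr rfl hCF, ← Finset.sum_mul,
      kcor (μ 0) (∑ s ∈ Icc 1 (K+1), μ s) (∑ s ∈ Ioc 1 (K+1), m s) (m 0) (m 1)]
    rw [Finset.prod_range_succ', Finset.prod_range_succ']
    simp only [Nat.zero_add]
    have hsplitm : ∑ s ∈ Ioc 0 (K+1), m s = m 1 + ∑ s ∈ Ioc 1 (K+1), m s := by
      have h1 : Ioc 0 (K+1) = insert 1 (Ioc 1 (K+1)) := by
        ext s; simp only [mem_Ioc, mem_insert]; omega
      rw [h1, Finset.sum_insert (by simp)]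
    have hsplitμ : ∑ s ∈ Icc 0 (K+1), μ s = μ 0 + ∑ s ∈ Icc 1 (K+1), μ s := by
      have h1 : Icc 0 (K+1) = insert 0 (Icc 1 (K+1)) := by
        ext s; simp only [mem_Icc, mem_insert]; omega
      rw [h1, Finset.sum_insert (by simp)]
    have hG0 : (∏ l ∈ range (m 0),
          (((∑ s ∈ Ioc 0 (K+1), m s : ℕ) : ℝ) + (l:ℝ) - ∑ s ∈ Icc 0 (K+1), μ s))
        = ∏ l ∈ range (m 0),
          (((∑ s ∈ Ioc 1 (K+1), m s : ℕ) : ℝ) + (m 1 : ℝ) + (l:ℝ)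
            - (μ 0 + ∑ s ∈ Icc 1 (K+1), μ s)) := by
      apply Finset.prod_congr rfl
      intro l _
      rw [hsplitm, hsplitμ]
      push_cast
      ring
    rw [hG0]
    ring

/-- Let `μ` be probability weights on `{1,…,N}` and `m_1,…,m_N ≥ 0` with
`n = m_1+⋯+m_N ≥ 1`.  Then
`B(m_1,…,m_N) = -∑_{(i_1,…,i_{N-1})} [∏_{j=1}^{N-1} C(M_j - I_{j-1}, i_j) ∏_{i=1}^{i_j}(i-1-μ(j))]
   ∏_{i=1}^{n - I_{N-1}} (i-1-μ(N)) ≥ 0`,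
where `M_j = m_1+⋯+m_j`, `I_j = i_1+⋯+i_j`, and the sum runs over tuples of nonnegative
integers with `i_j ≤ M_j - I_{j-1}` for each `j`.  Tuples are encoded 0-indexed as
`i : Fin (N-1) → ℕ` (constraints force `i_j ≤ n`, so values range over `range (n+1)`);
the 1-based index `j ∈ {1,…,N-1}` corresponds to `j : Fin (N-1)`, with `μ(j)` given by
`μ (Fin.castLE _ j)` and `μ(N)` by `μ ⟨N-1, _⟩`. -/
theorem stmt5 (N : ℕ) (hN : 1 ≤ N)
    (μ : Fin N → ℝ) (hμ0 : ∀ j, 0 ≤ μ j) (hμ1 : ∑ j, μ j = 1)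
    (m : Fin N → ℕ) (hn : 1 ≤ ∑ j, m j) :
    0 ≤ -∑ i ∈ (Fintype.piFinset fun _ : Fin (N - 1) =>
            Finset.range ((∑ j, m j) + 1)).filter
          (fun i : Fin (N - 1) → ℕ => ∀ j : Fin (N - 1),
            i j ≤ (∑ s ∈ Finset.Iic (Fin.castLE (Nat.sub_le N 1) j), m s)
                    - ∑ s ∈ Finset.Iio j, i s),
        (∏ j : Fin (N - 1),
            (((∑ s ∈ Finset.Iic (Fin.castLE (Nat.sub_le N 1) j), m s)
                - ∑ s ∈ Finset.Iio j, i s).choose (i j) : ℝ) *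
              ∏ l ∈ Finset.range (i j), ((l : ℝ) - μ (Fin.castLE (Nat.sub_le N 1) j))) *
          ∏ l ∈ Finset.range ((∑ j, m j) - ∑ s : Fin (N - 1), i s),
            ((l : ℝ) - μ ⟨N - 1, by omega⟩) := by
  set mm : ℕ → ℕ := fun t => if h : t < N then m ⟨t, h⟩ else 0 with hmm
  set μμ : ℕ → ℝ := fun t => if h : t < N then μ ⟨t, h⟩ else 0 with hμμ
  have hsum : (∑ j, m j) = ∑ j ∈ range (N-1+1), mm j := by
    rw [sum_univ_ext m, ← hmm, show N - 1 + 1 = N by omega]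
  have hsumμ : (∑ j, μ j) = ∑ j ∈ range N, μμ j := by
    rw [sum_univ_ext μ, ← hμμ]
  have hIic : ∀ (j : Fin (N-1)), (∑ s ∈ Iic (Fin.castLE (Nat.sub_le N 1) j), m s)
      = ∑ s ∈ range (j.1+1), mm s := by
    intro j
    rw [sum_Iic_fin m (Fin.castLE (Nat.sub_le N 1) j), ← hmm]
    simp only [Fin.coe_castLE]
  have hμc : ∀ j : Fin (N-1), μ (Fin.castLE (Nat.sub_le N 1) j) = μμ j.1 := by
    intro j
    rw [hμμ]
    simp only []
    rw [dif_pos (show (j : ℕ) < N by omega)]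
    exact congrArg μ (Fin.ext rfl)
  have hμlast : ∀ (h : N - 1 < N), μ ⟨N-1, h⟩ = μμ (N-1) := by
    intro h
    rw [hμμ]
    simp only []
    rw [dif_pos h]
  have key := auxid (N-1) (∑ j, m j) μμ mm (le_of_eq hsum.symm)
  have hset : ((Fintype.piFinset fun _ : Fin (N - 1) => Finset.range ((∑ j, m j) + 1)).filter
        (fun i : Fin (N - 1) → ℕ => ∀ j : Fin (N - 1),
          i j ≤ (∑ s ∈ Finset.Iic (Fin.castLE (Nat.sub_le N 1) j), m s) - ∑ s ∈ Finset.Iio j, i s))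
      = ((Fintype.piFinset fun _ : Fin (N - 1) => Finset.range ((∑ j, m j) + 1)).filter
        (fun i : Fin (N - 1) → ℕ => ∀ j : Fin (N - 1),
          i j ≤ (∑ s ∈ range (j.1+1), mm s) - ∑ s ∈ Finset.Iio j, i s)) := by
    apply Finset.filter_congr
    intro i _
    simp only [hIic]
  have hterm : ∀ i ∈ ((Fintype.piFinset fun _ : Fin (N - 1) => Finset.range ((∑ j, m j) + 1)).filter
        (fun i : Fin (N - 1) → ℕ => ∀ j : Fin (N - 1),
          i j ≤ (∑ s ∈ range (j.1+1), mm s) - ∑ s ∈ Finset.Iio j, i s)),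
      (∏ j : Fin (N-1),
          (((∑ s ∈ Finset.Iic (Fin.castLE (Nat.sub_le N 1) j), m s)
              - ∑ s ∈ Finset.Iio j, i s).choose (i j) : ℝ) *
            ∏ l ∈ Finset.range (i j), ((l : ℝ) - μ (Fin.castLE (Nat.sub_le N 1) j))) *
        ∏ l ∈ Finset.range ((∑ j, m j) - ∑ s : Fin (N - 1), i s),
          ((l : ℝ) - μ ⟨N - 1, by omega⟩)
      = (∏ j : Fin (N-1),
          (((∑ s ∈ range (j.1+1), mm s) - ∑ s ∈ Finset.Iio j, i s).choose (i j) : ℝ) *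
            ∏ l ∈ Finset.range (i j), ((l : ℝ) - μμ j.1)) *
        ∏ l ∈ Finset.range ((∑ j ∈ range (N-1+1), mm j) - ∑ s : Fin (N - 1), i s),
          ((l : ℝ) - μμ (N-1)) := by
    intro i _
    simp only [hIic, hμc, hμlast, ← hsum]
  rw [Finset.sum_congr hset hterm, key]
  -- positivity of the negated closed form
  have hmm0 : ∀ t, N ≤ t → mm t = 0 := by
    intro t ht; rw [hmm]; simp only []; rw [dif_neg (by omega)]
  have hμμ0 : ∀ t, 0 ≤ μμ t := by
    intro t; rw [hμμ]; simp only []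
    by_cases h : t < N
    · rw [dif_pos h]; exact hμ0 _
    · rw [dif_neg h]
  have hT1 : ∀ j : ℕ, (∑ s ∈ Icc j (N-1), μμ s) ≤ 1 := by
    intro j
    have hsub : Icc j (N-1) ⊆ range N := by
      intro s hs; simp only [mem_Icc] at hs; simp only [mem_range]; omega
    calc (∑ s ∈ Icc j (N-1), μμ s) ≤ ∑ s ∈ range N, μμ s :=
          Finset.sum_le_sum_of_subset_of_nonneg hsub (fun s _ _ => hμμ0 s)
      _ = 1 := by rw [← hsumμ, hμ1]
  have hT0 : ∀ j : ℕ, 0 ≤ (∑ s ∈ Icc j (N-1), μμ s) :=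
    fun j => Finset.sum_nonneg (fun s _ => hμμ0 s)
  -- find the last index with positive mass
  have hsne : ∑ j ∈ range (N-1+1), mm j ≠ 0 := by rw [← hsum]; omega
  obtain ⟨j0, hj0mem, hj0⟩ := Finset.exists_ne_zero_of_sum_ne_zero hsne
  set P := (range (N-1+1)).filter (fun j => mm j ≠ 0) with hP
  have hPne : P.Nonempty := ⟨j0, by rw [hP]; exact Finset.mem_filter.mpr ⟨hj0mem, hj0⟩⟩
  set js := P.max' hPne with hjs
  have hjsP : js ∈ P := P.max'_mem hPne
  have hjsmem : js ∈ range (N-1+1) := (Finset.mem_filter.mp hjsP).1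
  have hjsne : mm js ≠ 0 := (Finset.mem_filter.mp hjsP).2
  have hjsle : js ≤ N-1 := by have := mem_range.mp hjsmem; omega
  have habove : ∀ s, js < s → mm s = 0 := by
    intro s hs
    by_cases h : s < N
    · by_contra hne
      have hsP : s ∈ P := mem_filter.mpr ⟨mem_range.mpr (by omega), hne⟩
      have := Finset.le_max' P s hsP
      omega
    · exact hmm0 s (by omega)
  have hR0 : ∑ s ∈ Ioc js (N-1), mm s = 0 :=
    Finset.sum_eq_zero (fun s hs => habove s (mem_Ioc.mp hs).1)
  have hFjs : (∏ l ∈ range (mm js),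
      (((∑ s ∈ Ioc js (N-1), mm s : ℕ) : ℝ) + (l:ℝ) - ∑ s ∈ Icc js (N-1), μμ s)) ≤ 0 := by
    obtain ⟨q, hq⟩ := Nat.exists_eq_succ_of_ne_zero hjsne
    rw [hR0, hq, Finset.prod_range_succ']
    have h1 : 0 ≤ ∏ l ∈ range q,
        (((0:ℕ):ℝ) + ((l+1 : ℕ):ℝ) - ∑ s ∈ Icc js (N-1), μμ s) := by
      apply Finset.prod_nonneg
      intro l _
      have := hT1 js
      have hc : (1:ℝ) ≤ ((l+1 : ℕ):ℝ) := by exact_mod_cast Nat.one_le_iff_ne_zero.mpr (Nat.succ_ne_zero l)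
      push_cast
      push_cast at hc
      linarith
    have h2 : (((0:ℕ):ℝ) + ((0:ℕ):ℝ) - ∑ s ∈ Icc js (N-1), μμ s) ≤ 0 := by
      have := hT0 js
      push_cast
      linarith
    exact mul_nonpos_iff.mpr (Or.inl ⟨h1, h2⟩)
  have hFother : ∀ j ∈ range (N-1+1), j ≠ js →
      0 ≤ ∏ l ∈ range (mm j),
        (((∑ s ∈ Ioc j (N-1), mm s : ℕ) : ℝ) + (l:ℝ) - ∑ s ∈ Icc j (N-1), μμ s) := by
    intro j hjm hne
    by_cases hmj : mm j = 0
    · rw [hmj]; simp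
    · have hjP : j ∈ P := mem_filter.mpr ⟨hjm, hmj⟩
      have hjlt : j < js := lt_of_le_of_ne (Finset.le_max' P j hjP) hne
      have hRge : 1 ≤ ∑ s ∈ Ioc j (N-1), mm s := by
        have hjsIoc : js ∈ Ioc j (N-1) := mem_Ioc.mpr ⟨hjlt, hjsle⟩
        calc 1 ≤ mm js := Nat.one_le_iff_ne_zero.mpr hjsne
          _ ≤ ∑ s ∈ Ioc j (N-1), mm s :=
              Finset.single_le_sum (fun s _ => Nat.zero_le _) hjsIoc
      apply Finset.prod_nonneg
      intro l _
      have hc : (1:ℝ) ≤ ((∑ s ∈ Ioc j (N-1), mm s : ℕ):ℝ) := by exact_mod_cast hRge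
      have := hT1 j
      have hl : (0:ℝ) ≤ (l:ℝ) := Nat.cast_nonneg l
      linarith
  have hprod : (∏ j ∈ range (N-1+1), ∏ l ∈ range (mm j),
      (((∑ s ∈ Ioc j (N-1), mm s : ℕ) : ℝ) + (l:ℝ) - ∑ s ∈ Icc j (N-1), μμ s)) ≤ 0 := by
    rw [← Finset.mul_prod_erase (range (N-1+1)) (fun j => ∏ l ∈ range (mm j),
      (((∑ s ∈ Ioc j (N-1), mm s : ℕ) : ℝ) + (l:ℝ) - ∑ s ∈ Icc j (N-1), μμ s)) hjsmem]
    have herase : 0 ≤ ∏ j ∈ (range (N-1+1)).erase js, ∏ l ∈ range (mm j),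
        (((∑ s ∈ Ioc j (N-1), mm s : ℕ) : ℝ) + (l:ℝ) - ∑ s ∈ Icc j (N-1), μμ s) :=
      Finset.prod_nonneg (fun j hj =>
        hFother j (Finset.mem_of_mem_erase hj) (Finset.ne_of_mem_erase hj))
    exact mul_nonpos_iff.mpr (Or.inr ⟨hFjs, herase⟩)
  linarith [hprod]
end

section
/- Suppose that for every integer n ≥ 1 and every tuple (k_1,…,k_n) of positive integers one has E_n(p_{k_1},…,p_{k_n}) ≥ 0. Then every coefficient of the formal power series 1 − ∏_{ω∈Ω}(1−p(ω))^{μ(ω)} in ℝ[[t]] is nonnegative. -/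
open Finset

/-- The formal power series `p(ω) = ∑_{k ≥ 1} p_k(ω) t^k` (zero constant term). -/
noncomputable def pSer {Ω : Type*} (p : ℕ → Ω → ℝ) (ω : Ω) : PowerSeries ℝ :=
  PowerSeries.mk fun k => if k = 0 then 0 else p k ω

/-- `log (1 - q) = -∑_{i ≥ 1} q^i / i` for a power series `q` with zero constant term;
since the constant term of `q` vanishes, the coefficient of `t^m` only involves
`i ≤ m`, so the defining sum may be truncated. -/
noncomputable def logOneSub (q : PowerSeries ℝ) : PowerSeries ℝ :=
  PowerSeries.mk fun m => -∑ i ∈ Finset.Icc 1 m, PowerSeries.coeff (R := ℝ) m (q ^ i) / i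

/-- `exp q = ∑_{i ≥ 0} q^i / i!` for a power series `q` with zero constant term;
since the constant term of `q` vanishes, the coefficient of `t^m` only involves
`i ≤ m`, so the defining sum may be truncated. -/
noncomputable def expSer (q : PowerSeries ℝ) : PowerSeries ℝ :=
  PowerSeries.mk fun m =>
    ∑ i ∈ Finset.range (m + 1), PowerSeries.coeff (R := ℝ) m (q ^ i) / i.factorial


section Aux

section Helpers

/-- compositions: tuples of positive integers of length `j` summing to `d` -/
def comps (j d : ℕ) : Finset (Fin j → ℕ) :=
  (Fintype.piFinset fun _ => Finset.Icc 1 d).filter fun k => ∑ s, k s = d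

lemma mem_comps {j d : ℕ} {k : Fin j → ℕ} :
    k ∈ comps j d ↔ (∀ s, 1 ≤ k s) ∧ ∑ s, k s = d := by
  simp only [comps, Finset.mem_filter, Fintype.mem_piFinset, Finset.mem_Icc]
  constructor
  · rintro ⟨h1, h2⟩; exact ⟨fun s => (h1 s).1, h2⟩
  · rintro ⟨h1, h2⟩
    refine ⟨fun s => ⟨h1 s, ?_⟩, h2⟩
    calc k s ≤ ∑ t, k t := Finset.single_le_sum (fun t _ => Nat.zero_le _) (Finset.mem_univ s)
    _ = d := h2

lemma comps_eq_empty {j d : ℕ} (h : d < j) : comps j d = ∅ := by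
  rw [Finset.eq_empty_iff_forall_notMem]
  intro k hk
  rw [mem_comps] at hk
  have : j ≤ d := by
    calc j = ∑ _s : Fin j, 1 := by simp
    _ ≤ ∑ s, k s := Finset.sum_le_sum fun s _ => hk.1 s
    _ = d := hk.2
  omega

lemma comps_zero {d : ℕ} (hd : 1 ≤ d) : comps 0 d = ∅ := by
  rw [Finset.eq_empty_iff_forall_notMem]
  intro k hk
  rw [mem_comps] at hk
  have h2 := hk.2
  simp at h2
  omega

end Helpers

section Count

variable {n j : ℕ}

lemma sigma_fin_ext {i : Fin j → ℕ} {a b : Σ r : Fin j, Fin (i r)}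
    (h1 : a.1 = b.1) (h2 : (a.2 : ℕ) = (b.2 : ℕ)) : a = b := by
  obtain ⟨a1, a2⟩ := a
  obtain ⟨b1, b2⟩ := b
  dsimp at h1
  subst h1
  dsimp at h2
  exact congrArg _ (Fin.ext h2)

/-- The fiber of `f` over `r`. -/
def fibf (f : Fin n → Fin j) (r : Fin j) : Finset (Fin n) :=
  Finset.univ.filter fun x => f x = r

/-- `E2`: equivalences refining a function with prescribed fiber structure. -/
def E2 (i : Fin j → ℕ) (f : Fin n → Fin j) :
    {φ : Fin n ≃ (Σ r : Fin j, Fin (i r)) // ∀ x, (φ x).1 = f x} ≃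
      (∀ r : Fin j, {x : Fin n // f x = r} ≃ Fin (i r)) where
  toFun := fun ⟨φ, hφ⟩ r =>
    { toFun := fun x => Fin.cast (congrArg i ((hφ x.1).trans x.2)) (φ x.1).2
      invFun := fun t => ⟨φ.symm ⟨r, t⟩, by
        rw [← hφ (φ.symm ⟨r, t⟩), Equiv.apply_symm_apply]⟩
      left_inv := by
        rintro ⟨x, hx⟩
        apply Subtype.ext
        dsimp only
        have : (⟨r, Fin.cast (congrArg i ((hφ x).trans hx)) (φ x).2⟩ :
            Σ r' : Fin j, Fin (i r')) = φ x :=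
          sigma_fin_ext (((hφ x).trans hx).symm) (by simp)
        rw [this, Equiv.symm_apply_apply]
      right_inv := by
        intro t
        apply Fin.ext
        simp only [Fin.coe_cast]
        have h := φ.apply_symm_apply ⟨r, t⟩
        exact congrArg (fun z : Σ r' : Fin j, Fin (i r') => (z.2 : ℕ)) h }
  invFun := fun fam =>
    ⟨{ toFun := fun x => ⟨f x, fam (f x) ⟨x, rfl⟩⟩
       invFun := fun z => ((fam z.1).symm z.2).1
       left_inv := by
         intro x
         dsimp only
         rw [Equiv.symm_apply_apply]
       right_inv := by
         rintro ⟨r, t⟩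
         dsimp only
         have key : ∀ y : {x : Fin n // f x = r},
             (⟨f y.1, fam (f y.1) ⟨y.1, rfl⟩⟩ : Σ r' : Fin j, Fin (i r')) = ⟨r, fam r y⟩ := by
           rintro ⟨x, hx⟩
           subst hx
           rfl
         rw [key ((fam r).symm t), Equiv.apply_symm_apply] },
     fun x => rfl⟩
  left_inv := by
    rintro ⟨φ, hφ⟩
    apply Subtype.ext
    apply Equiv.ext
    intro x
    dsimp only
    exact sigma_fin_ext ((hφ x).symm) (by simp)
  right_inv := by
    intro fam
    funext r
    apply Equiv.ext
    rintro ⟨a, ha⟩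
    subst ha
    apply Fin.ext
    simp

end Count


section CardLemmas

lemma card_equiv_fin (α : Type*) [Fintype α] [DecidableEq α] (m : ℕ) :
    Fintype.card (α ≃ Fin m) = if Fintype.card α = m then m.factorial else 0 := by
  split_ifs with h
  · rw [Fintype.card_equiv (Fintype.equivOfCardEq (by simp [h])), h]
  · rw [Fintype.card_eq_zero_iff]
    constructor
    intro e
    exact h (by simpa using Fintype.card_congr e)

variable {n j : ℕ}

lemma card_subtype_fib (f : Fin n → Fin j) (r : Fin j) :
    Fintype.card {x : Fin n // f x = r} = (fibf f r).card := by
  rw [Fintype.card_subtype]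
  rfl

/-- COUNT2: number of bijective refinements of `f` with block sizes `i`. -/
lemma count2 (i : Fin j → ℕ) (f : Fin n → Fin j) :
    Fintype.card {φ : Fin n ≃ (Σ r : Fin j, Fin (i r)) // ∀ x, (φ x).1 = f x} =
      if (∀ r, (fibf f r).card = i r) then ∏ r, (i r).factorial else 0 := by
  rw [Fintype.card_congr (E2 i f), Fintype.card_pi]
  split_ifs with h
  · refine Finset.prod_congr rfl fun r _ => ?_
    rw [card_equiv_fin, card_subtype_fib, if_pos (h r)]
  · push_neg at h
    obtain ⟨r, hr⟩ := h
    refine Finset.prod_eq_zero (Finset.mem_univ r) ?_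
    rw [card_equiv_fin, card_subtype_fib, if_neg hr]

end CardLemmas

section PartitionCount

variable {n j : ℕ}

def fiberPartition (f : Fin n → Fin j) : Finpartition (Finset.univ : Finset (Fin n)) :=
  @Finpartition.ofSetoid _ _ _ (Setoid.ker f) (fun a b => decidable_of_iff (f a = f b) Iff.rfl)

lemma part_fiberPartition (f : Fin n → Fin j) (x : Fin n) :
    (fiberPartition f).part x = fibf f (f x) := by
  ext y
  rw [fibf, Finset.mem_filter]
  letI : DecidableRel ⇑(Setoid.ker f) := fun a b => decidable_of_iff (f a = f b) Iff.rfl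
  rw [fiberPartition, Finpartition.mem_part_ofSetoid_iff_rel]
  constructor
  · intro h; exact ⟨Finset.mem_univ y, h.symm⟩
  · intro h; exact h.2.symm

lemma Finpartition.eq_of_part {α : Type*} [DecidableEq α] {s : Finset α}
    {P Q : Finpartition s} (h : ∀ a ∈ s, P.part a = Q.part a) : P = Q := by
  have key : ∀ (P Q : Finpartition s), (∀ a ∈ s, P.part a = Q.part a) →
      P.parts ⊆ Q.parts := by
    intro P Q h b hb
    obtain ⟨x, hx⟩ := P.nonempty_of_mem_parts hb
    have hxs : x ∈ s := P.le hb hx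
    have : b = P.part x := (P.part_eq_of_mem hb hx).symm
    rw [this, h x hxs]
    exact Q.part_mem.2 hxs
  apply Finpartition.ext
  exact Finset.Subset.antisymm (key P Q h) (key Q P fun a ha => (h a ha).symm)

noncomputable def E1 (σ : Finpartition (Finset.univ : Finset (Fin n))) :
    {f : Fin n → Fin j // Function.Surjective f ∧ fiberPartition f = σ} ≃
      ({b // b ∈ σ.parts} ≃ Fin j) where
  toFun := fun ⟨f, hs, hP⟩ => by
    have fact1 : ∀ x, σ.part x = fibf f (f x) := fun x => by
      rw [← hP]; exact part_fiberPartition f x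
    have fact2 : ∀ x y, f x = f y ↔ σ.part x = σ.part y := by
      intro x y
      constructor
      · intro h; rw [fact1, fact1, h]
      · intro h
        have : y ∈ σ.part x := by
          rw [h]; exact σ.mem_part (Finset.mem_univ y)
        rw [fact1] at this
        exact ((Finset.mem_filter.mp this).2).symm
    exact Equiv.ofBijective
      (fun b => f (b.1.min' (σ.nonempty_of_mem_parts b.2)))
      ⟨by
        rintro ⟨b, hb⟩ ⟨b', hb'⟩ hee
        have h3 : σ.part (b.min' (σ.nonempty_of_mem_parts hb)) = b :=
          σ.part_eq_of_mem hb (b.min'_mem _)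
        have h3' : σ.part (b'.min' (σ.nonempty_of_mem_parts hb')) = b' :=
          σ.part_eq_of_mem hb' (b'.min'_mem _)
        apply Subtype.ext
        dsimp only at hee ⊢
        rw [← h3, ← h3']
        exact (fact2 _ _).mp hee,
       by
        intro r
        obtain ⟨x, hx⟩ := hs r
        refine ⟨⟨σ.part x, σ.part_mem.2 (Finset.mem_univ x)⟩, ?_⟩
        dsimp only
        have hne : (σ.part x).Nonempty :=
          σ.nonempty_of_mem_parts (σ.part_mem.2 (Finset.mem_univ x))
        have h3 : σ.part ((σ.part x).min' hne) = σ.part x :=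
          σ.part_eq_of_mem (σ.part_mem.2 (Finset.mem_univ x)) ((σ.part x).min'_mem hne)
        exact ((fact2 _ x).mpr h3).trans hx⟩
  invFun := fun e =>
    ⟨fun x => e ⟨σ.part x, σ.part_mem.2 (Finset.mem_univ x)⟩, by
      intro r
      set b := e.symm r with hb
      have h3 : σ.part (b.1.min' (σ.nonempty_of_mem_parts b.2)) = b.1 :=
        σ.part_eq_of_mem b.2 (b.1.min'_mem _)
      refine ⟨b.1.min' (σ.nonempty_of_mem_parts b.2), ?_⟩
      have h4 : (⟨σ.part (b.1.min' (σ.nonempty_of_mem_parts b.2)),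
          σ.part_mem.2 (Finset.mem_univ _)⟩ : {c // c ∈ σ.parts}) = b := Subtype.ext h3
      show e ⟨σ.part (b.1.min' (σ.nonempty_of_mem_parts b.2)),
          σ.part_mem.2 (Finset.mem_univ _)⟩ = r
      rw [h4, hb, Equiv.apply_symm_apply], by
      apply Finpartition.eq_of_part
      intro x _
      rw [part_fiberPartition]
      ext y
      rw [fibf, Finset.mem_filter]
      rw [σ.mem_part_iff_part_eq_part (Finset.mem_univ y) (Finset.mem_univ x)]
      constructor
      · rintro ⟨-, h⟩
        exact Subtype.ext_iff.mp (e.injective h)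
      · intro h
        exact ⟨Finset.mem_univ y, congrArg e (Subtype.ext h)⟩⟩
  left_inv := by
    rintro ⟨f, hs, hP⟩
    apply Subtype.ext
    funext x
    dsimp only [Equiv.ofBijective_apply]
    have fact1 : ∀ z, σ.part z = fibf f (f z) := fun z => by
      rw [← hP]; exact part_fiberPartition f z
    have h3 : σ.part ((σ.part x).min' (σ.nonempty_of_mem_parts (σ.part_mem.2 (Finset.mem_univ x)))) = σ.part x :=
      σ.part_eq_of_mem (σ.part_mem.2 (Finset.mem_univ x)) ((σ.part x).min'_mem _)
    have : x ∈ σ.part ((σ.part x).min' (σ.nonempty_of_mem_parts (σ.part_mem.2 (Finset.mem_univ x)))) := by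
      rw [h3]; exact σ.mem_part (Finset.mem_univ x)
    rw [fact1] at this
    exact ((Finset.mem_filter.mp this).2).symm
  right_inv := by
    intro e
    apply Equiv.ext
    rintro ⟨b, hb⟩
    dsimp only [Equiv.ofBijective_apply]
    have h3 : σ.part (b.min' (σ.nonempty_of_mem_parts hb)) = b :=
      σ.part_eq_of_mem hb (b.min'_mem _)
    exact congrArg e (Subtype.ext h3)

lemma count1 (σ : Finpartition (Finset.univ : Finset (Fin n))) :
    Fintype.card {f : Fin n → Fin j // Function.Surjective f ∧ fiberPartition f = σ} =
      if σ.parts.card = j then j.factorial else 0 := by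
  rw [Fintype.card_congr (E1 σ), card_equiv_fin, Fintype.card_coe]

end PartitionCount

section Sums

variable {n j : ℕ}

lemma fib_card (i : Fin j → ℕ) (φ : Fin n ≃ (Σ r : Fin j, Fin (i r))) (r : Fin j) :
    (fibf (fun x => (φ x).1) r).card = i r := by
  rw [← card_subtype_fib,
    Fintype.card_congr ((E2 i (fun x => (φ x).1)) ⟨φ, fun x => rfl⟩ r), Fintype.card_fin]

lemma prod_fib {M : Type*} [CommMonoid M] (i : Fin j → ℕ)
    (φ : Fin n ≃ (Σ r : Fin j, Fin (i r))) (r : Fin j) (g : Fin n → M) :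
    ∏ x ∈ fibf (fun x => (φ x).1) r, g x = ∏ s : Fin (i r), g (φ.symm ⟨r, s⟩) := by
  rw [Finset.prod_subtype (fibf (fun x => (φ x).1) r)
      (p := fun x => (φ x).1 = r) (fun x => by simp [fibf]) g]
  exact (Fintype.prod_equiv ((E2 i (fun x => (φ x).1)) ⟨φ, fun x => rfl⟩ r).symm
    (fun s => g (φ.symm ⟨r, s⟩)) (fun x => g x.1) (fun s => rfl)).symm

lemma prod_fibf_eq {M : Type*} [CommMonoid M] (f : Fin n → Fin j)
    (hf : Function.Surjective f) (σ : Finpartition (Finset.univ : Finset (Fin n)))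
    (hP : fiberPartition f = σ) (w : Finset (Fin n) → M) :
    ∏ r, w (fibf f r) = ∏ b ∈ σ.parts, w b := by
  have fact1 : ∀ x, σ.part x = fibf f (f x) := fun x => by
    rw [← hP]; exact part_fiberPartition f x
  refine Finset.prod_nbij (fibf f) ?_ ?_ ?_ ?_
  · intro r _
    obtain ⟨x, hx⟩ := hf r
    rw [← hx, ← fact1]
    exact σ.part_mem.2 (Finset.mem_univ x)
  · intro r _ r' _ h
    obtain ⟨x, hx⟩ := hf r
    have hx1 : x ∈ fibf f r := by simp [fibf, hx]
    have hx2 : x ∈ fibf f r' := by rw [← h]; exact hx1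
    simp only [fibf, Finset.mem_filter] at hx2
    rw [← hx, hx2.2]
  · intro b hb
    obtain ⟨x, hx⟩ := σ.nonempty_of_mem_parts hb
    refine ⟨f x, Finset.mem_coe.mpr (Finset.mem_univ _), ?_⟩
    rw [← fact1, σ.part_eq_of_mem hb hx]
  · intro r _
    rfl

end Sums

section CountSums

variable {n j : ℕ}

lemma surj_to_partition (w : Finset (Fin n) → ℝ) :
    ∑ f ∈ Finset.univ.filter (fun f : Fin n → Fin j => Function.Surjective f),
      ∏ r, w (fibf f r)
    = (j.factorial : ℝ) * ∑ σ ∈ Finset.univ.filter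
        (fun σ : Finpartition (Finset.univ : Finset (Fin n)) => σ.parts.card = j),
        ∏ b ∈ σ.parts, w b := by
  classical
  rw [← Finset.sum_fiberwise_of_maps_to (g := fiberPartition) (t := Finset.univ)
      (fun f _ => Finset.mem_univ _) (fun f => ∏ r, w (fibf f r))]
  have key : ∀ σ : Finpartition (Finset.univ : Finset (Fin n)),
      ∑ f ∈ (Finset.univ.filter (fun f : Fin n → Fin j => Function.Surjective f)).filter
          (fun f => fiberPartition f = σ), ∏ r, w (fibf f r)
      = ((if σ.parts.card = j then j.factorial else 0 : ℕ) : ℝ) * ∏ b ∈ σ.parts, w b := by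
    intro σ
    have hconst : ∀ f ∈ (Finset.univ.filter
        (fun f : Fin n → Fin j => Function.Surjective f)).filter
          (fun f => fiberPartition f = σ),
        ∏ r, w (fibf f r) = ∏ b ∈ σ.parts, w b := by
      intro f hf
      simp only [Finset.mem_filter, Finset.mem_univ, true_and] at hf
      exact prod_fibf_eq f hf.1 σ hf.2 w
    rw [Finset.sum_congr rfl hconst, Finset.sum_const, nsmul_eq_mul]
    congr 2
    rw [Finset.filter_filter]
    rw [← count1 (j := j) σ, Fintype.card_subtype]
  rw [Finset.sum_congr rfl fun σ _ => key σ, Finset.mul_sum, Finset.sum_filter]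
  refine Finset.sum_congr rfl fun σ _ => ?_
  by_cases h : σ.parts.card = j
  · rw [if_pos h, if_pos h]
  · rw [if_neg h, if_neg h, Nat.cast_zero, zero_mul]

lemma phis_to_surj (w : Finset (Fin n) → ℝ) :
    ∑ i ∈ comps j n, (((∏ r, (i r).factorial : ℕ) : ℝ))⁻¹ *
      ∑ φ : Fin n ≃ (Σ r : Fin j, Fin (i r)), ∏ r, w (fibf (fun x => (φ x).1) r)
    = ∑ f ∈ Finset.univ.filter (fun f : Fin n → Fin j => Function.Surjective f),
        ∏ r, w (fibf f r) := by
  classical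
  have step1 : ∀ i : Fin j → ℕ,
      (∑ φ : Fin n ≃ (Σ r : Fin j, Fin (i r)), ∏ r, w (fibf (fun x => (φ x).1) r))
      = ∑ f : Fin n → Fin j,
          ((if (∀ r, (fibf f r).card = i r) then ∏ r, (i r).factorial else 0 : ℕ) : ℝ) *
            ∏ r, w (fibf f r) := by
    intro i
    rw [← Finset.sum_fiberwise_of_maps_to
        (g := fun φ : Fin n ≃ (Σ r : Fin j, Fin (i r)) => (fun x => (φ x).1))
        (t := Finset.univ) (fun φ _ => Finset.mem_univ _)
        (fun φ => ∏ r, w (fibf (fun x => (φ x).1) r))]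
    refine Finset.sum_congr rfl fun f _ => ?_
    have hconst : ∀ φ ∈ Finset.univ.filter
        (fun φ : Fin n ≃ (Σ r : Fin j, Fin (i r)) => (fun x => (φ x).1) = f),
        ∏ r, w (fibf (fun x => (φ x).1) r) = ∏ r, w (fibf f r) := by
      intro φ hφ
      rw [(Finset.mem_filter.mp hφ).2]
    rw [Finset.sum_congr rfl hconst, Finset.sum_const, nsmul_eq_mul]
    congr 2
    rw [← count2 i f, Fintype.card_subtype]
    congr 1
    refine Finset.filter_congr fun φ _ => ?_
    exact funext_iff
  calc ∑ i ∈ comps j n, (((∏ r, (i r).factorial : ℕ) : ℝ))⁻¹ *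
      ∑ φ : Fin n ≃ (Σ r : Fin j, Fin (i r)), ∏ r, w (fibf (fun x => (φ x).1) r)
      = ∑ i ∈ comps j n, ∑ f : Fin n → Fin j,
          (((∏ r, (i r).factorial : ℕ) : ℝ))⁻¹ *
          (((if (∀ r, (fibf f r).card = i r) then ∏ r, (i r).factorial else 0 : ℕ) : ℝ) *
            ∏ r, w (fibf f r)) := by
        refine Finset.sum_congr rfl fun i _ => ?_
        rw [step1 i, Finset.mul_sum]
    _ = ∑ f : Fin n → Fin j, ∑ i ∈ comps j n,
          (((∏ r, (i r).factorial : ℕ) : ℝ))⁻¹ *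
          (((if (∀ r, (fibf f r).card = i r) then ∏ r, (i r).factorial else 0 : ℕ) : ℝ) *
            ∏ r, w (fibf f r)) := Finset.sum_comm
    _ = ∑ f : Fin n → Fin j,
          (if Function.Surjective f then ∏ r, w (fibf f r) else 0) := by
        refine Finset.sum_congr rfl fun f _ => ?_
        have hre : ∀ i ∈ comps j n,
            (((∏ r, (i r).factorial : ℕ) : ℝ))⁻¹ *
            (((if (∀ r, (fibf f r).card = i r) then ∏ r, (i r).factorial else 0 : ℕ) : ℝ) *
              ∏ r, w (fibf f r))
            = if i = (fun r => (fibf f r).card) then ∏ r, w (fibf f r) else 0 := by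
          intro i _
          by_cases h : (∀ r, (fibf f r).card = i r)
          · have : i = fun r => (fibf f r).card := funext fun r => (h r).symm
            rw [if_pos h, if_pos this, ← mul_assoc,
              inv_mul_cancel₀ (Nat.cast_ne_zero.mpr (Finset.prod_ne_zero_iff.mpr
                fun r _ => Nat.factorial_ne_zero _)), one_mul]
          · have : ¬ (i = fun r => (fibf f r).card) := by
              intro hc
              exact h fun r => by rw [hc]
            rw [if_neg h, if_neg this, Nat.cast_zero, zero_mul, mul_zero]
        rw [Finset.sum_congr rfl hre, Finset.sum_ite_eq' (comps j n)
          (fun r => (fibf f r).card) (fun _ => ∏ r, w (fibf f r))]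
        congr 1
        rw [eq_iff_iff]
        rw [mem_comps]
        constructor
        · rintro ⟨h1, -⟩
          intro r
          obtain ⟨x, hx⟩ := Finset.card_pos.mp (h1 r)
          simp only [fibf, Finset.mem_filter] at hx
          exact ⟨x, hx.2⟩
        · intro hs
          constructor
          · intro r
            obtain ⟨x, hx⟩ := hs r
            refine Finset.card_pos.mpr ⟨x, ?_⟩
            simp [fibf, hx]
          · have hcard : (Finset.univ : Finset (Fin n)).card = ∑ r : Fin j, (fibf f r).card :=
              Finset.card_eq_sum_card_fiberwise (fun x _ => Finset.mem_univ (f x))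
            simpa using hcard.symm

    _ = ∑ f ∈ Finset.univ.filter (fun f : Fin n → Fin j => Function.Surjective f),
        ∏ r, w (fibf f r) := (Finset.sum_filter _ _).symm

end CountSums

section Main

variable {Ω : Type*} [Fintype Ω] (μ : Ω → ℝ) (p : ℕ → Ω → ℝ)

noncomputable def Mw {i : ℕ} (a : Fin i → ℕ) : ℝ := ∑ ω, μ ω * ∏ s, p (a s) ω

noncomputable def Mb {n : ℕ} (k : Fin n → ℕ) (b : Finset (Fin n)) : ℝ :=
  ∑ ω, μ ω * ∏ s ∈ b, p (k s) ω

noncomputable def Xterm (j n : ℕ) (k : Fin n → ℕ) : ℝ :=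
  ∑ i ∈ comps j n, ∑ φ : Fin n ≃ (Σ r : Fin j, Fin (i r)),
    ∏ r, ((i r : ℝ))⁻¹ * Mw μ p (fun s => k (φ.symm ⟨r, s⟩))

noncomputable def Epart (n : ℕ) (k : Fin n → ℕ) : ℝ :=
  ∑ σ : Finpartition (Finset.univ : Finset (Fin n)),
    (-1 : ℝ) ^ (σ.parts.card + 1) *
      (∏ b ∈ σ.parts, ((b.card - 1).factorial : ℝ)) *
      ∏ b ∈ σ.parts, Mb μ p k b

lemma claimA (n : ℕ) (k : Fin n → ℕ) :
    Epart μ p n k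
      = ∑ j ∈ Finset.range (n+1),
          (-1:ℝ)^(j+1) * (j.factorial : ℝ)⁻¹ * Xterm μ p j n k := by
  classical
  set w : Finset (Fin n) → ℝ := fun b => ((b.card - 1).factorial : ℝ) * Mb μ p k b with hw
  have e1 : Epart μ p n k = ∑ σ : Finpartition (Finset.univ : Finset (Fin n)),
      (-1 : ℝ) ^ (σ.parts.card + 1) * ∏ b ∈ σ.parts, w b := by
    unfold Epart
    refine Finset.sum_congr rfl fun σ _ => ?_
    rw [hw, Finset.prod_mul_distrib, mul_assoc]
  rw [e1]
  rw [← Finset.sum_fiberwise_of_maps_to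
      (g := fun σ : Finpartition (Finset.univ : Finset (Fin n)) => σ.parts.card)
      (t := Finset.range (n+1))
      (fun σ _ => Finset.mem_range.mpr (Nat.lt_succ_of_le
        ((σ.card_parts_le_card).trans (by simp))))
      (fun σ => (-1 : ℝ) ^ (σ.parts.card + 1) * ∏ b ∈ σ.parts, w b)]
  refine Finset.sum_congr rfl fun j hj => ?_
  have e2 : ∑ σ ∈ Finset.univ.filter
      (fun σ : Finpartition (Finset.univ : Finset (Fin n)) => σ.parts.card = j),
      (-1:ℝ)^(σ.parts.card+1) * ∏ b ∈ σ.parts, w b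
      = (-1:ℝ)^(j+1) * ∑ σ ∈ Finset.univ.filter
          (fun σ : Finpartition (Finset.univ : Finset (Fin n)) => σ.parts.card = j),
          ∏ b ∈ σ.parts, w b := by
    rw [Finset.mul_sum]
    refine Finset.sum_congr rfl fun σ hσ => ?_
    rw [(Finset.mem_filter.mp hσ).2]
  rw [e2]
  have e3 : ∑ σ ∈ Finset.univ.filter
      (fun σ : Finpartition (Finset.univ : Finset (Fin n)) => σ.parts.card = j),
      ∏ b ∈ σ.parts, w b
      = (j.factorial : ℝ)⁻¹ * ∑ i ∈ comps j n, (((∏ r, (i r).factorial : ℕ) : ℝ))⁻¹ *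
          ∑ φ : Fin n ≃ (Σ r : Fin j, Fin (i r)), ∏ r, w (fibf (fun x => (φ x).1) r) := by
    rw [phis_to_surj w, surj_to_partition w, ← mul_assoc,
      inv_mul_cancel₀ (Nat.cast_ne_zero.mpr (Nat.factorial_ne_zero j)), one_mul]
  rw [e3]
  have e4 : ∑ i ∈ comps j n, (((∏ r, (i r).factorial : ℕ) : ℝ))⁻¹ *
      ∑ φ : Fin n ≃ (Σ r : Fin j, Fin (i r)), ∏ r, w (fibf (fun x => (φ x).1) r)
      = Xterm μ p j n k := by
    unfold Xterm
    refine Finset.sum_congr rfl fun i hi => ?_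
    rw [Finset.mul_sum]
    refine Finset.sum_congr rfl fun φ _ => ?_
    have hpos : ∀ r, 1 ≤ i r := (mem_comps.mp hi).1
    have hwf : ∀ r, w (fibf (fun x => (φ x).1) r)
        = ((i r - 1).factorial : ℝ) * Mw μ p (fun s => k (φ.symm ⟨r, s⟩)) := by
      intro r
      rw [hw]
      dsimp only
      rw [fib_card i φ r]
      congr 1
      unfold Mb Mw
      refine Finset.sum_congr rfl fun ω _ => ?_
      rw [prod_fib i φ r (fun x => p (k x) ω)]
    rw [Finset.prod_congr rfl (fun r _ => hwf r), Nat.cast_prod,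
      ← Finset.prod_inv_distrib, ← Finset.prod_mul_distrib]
    refine Finset.prod_congr rfl fun r _ => ?_
    have hfac : (((i r).factorial : ℝ))⁻¹ * ((i r - 1).factorial : ℝ) = ((i r : ℝ))⁻¹ := by
      have h1 : (i r) * (i r - 1).factorial = (i r).factorial :=
        Nat.mul_factorial_pred (Nat.one_le_iff_ne_zero.mp (hpos r))
      have h2 : ((i r).factorial : ℝ) = (i r : ℝ) * ((i r - 1).factorial : ℝ) := by
        rw [← h1]; push_cast; ring
      rw [h2, mul_inv, mul_assoc,
        inv_mul_cancel₀ (Nat.cast_ne_zero.mpr (Nat.factorial_ne_zero _)), mul_one]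
    rw [← mul_assoc, hfac]
  rw [e4]
  ring
end Main


section SeriesSide

lemma coeff_pow_comps (f : PowerSeries ℝ) (hf : PowerSeries.coeff (R := ℝ) 0 f = 0) (i d : ℕ) :
    PowerSeries.coeff (R := ℝ) d (f ^ i)
      = ∑ k ∈ comps i d, ∏ s : Fin i, PowerSeries.coeff (R := ℝ) (k s) f := by
  rw [PowerSeries.coeff_pow]
  rw [← Finset.sum_filter_add_sum_filter_not _ (fun l => ∀ r ∈ Finset.range i, 1 ≤ l r)]
  have hzero : ∑ l ∈ (Finset.finsuppAntidiag (Finset.range i) d).filter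
      (fun l => ¬ ∀ r ∈ Finset.range i, 1 ≤ l r),
      ∏ r ∈ Finset.range i, PowerSeries.coeff (R := ℝ) (l r) f = 0 := by
    apply Finset.sum_eq_zero
    intro l hl
    rw [Finset.mem_filter] at hl
    push_neg at hl
    obtain ⟨r, hr, hlr⟩ := hl.2
    refine Finset.prod_eq_zero hr ?_
    have h0 : l r = 0 := by omega
    rw [h0, hf]
  rw [hzero, add_zero]
  refine Finset.sum_nbij' (i := fun l => fun s : Fin i => l s.val)
    (j := fun k => Finsupp.onFinset (Finset.range i)
      (fun r => if h : r < i then k ⟨r, h⟩ else 0)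
      (fun r hr => by
        rw [dite_ne_right_iff] at hr
        obtain ⟨h, -⟩ := hr
        exact Finset.mem_range.mpr h)) ?_ ?_ ?_ ?_ ?_
  · intro l hl
    rw [Finset.mem_filter, Finset.mem_finsuppAntidiag] at hl
    rw [mem_comps]
    refine ⟨fun s => hl.2 s.val (Finset.mem_range.mpr s.isLt), ?_⟩
    rw [Fin.sum_univ_eq_sum_range (fun r => l r) i]
    exact hl.1.1
  · intro k hk
    rw [mem_comps] at hk
    rw [Finset.mem_filter, Finset.mem_finsuppAntidiag]
    refine ⟨⟨?_, Finsupp.support_onFinset_subset⟩, ?_⟩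
    · show ∑ r ∈ Finset.range i, (if h : r < i then k ⟨r, h⟩ else 0) = d
      rw [← Fin.sum_univ_eq_sum_range (fun r => if h : r < i then k ⟨r, h⟩ else 0) i, ← hk.2]
      exact Finset.sum_congr rfl fun s _ => by rw [dif_pos s.isLt]
    · intro r hr
      show 1 ≤ (if h : r < i then k ⟨r, h⟩ else 0)
      rw [dif_pos (Finset.mem_range.mp hr)]
      exact hk.1 _
  · intro l hl
    rw [Finset.mem_filter, Finset.mem_finsuppAntidiag] at hl
    apply Finsupp.ext
    intro r
    simp only [Finsupp.onFinset_apply]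
    by_cases h : r < i
    · rw [dif_pos h]
    · rw [dif_neg h]
      by_contra hne
      have : r ∈ l.support := Finsupp.mem_support_iff.mpr fun h0 => hne h0.symm
      exact h (Finset.mem_range.mp (hl.1.2 this))
  · intro k hk
    funext s
    simp only [Finsupp.onFinset_apply]
    rw [dif_pos s.isLt]
  · intro l hl
    rw [← Fin.prod_univ_eq_prod_range (fun r => PowerSeries.coeff (R := ℝ) (l r) f) i]

variable {Ω : Type*} [Fintype Ω] (μ : Ω → ℝ) (p : ℕ → Ω → ℝ)

lemma coeff_pSer_zero (ω : Ω) : PowerSeries.coeff (R := ℝ) 0 (pSer p ω) = 0 := by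
  rw [pSer, PowerSeries.coeff_mk, if_pos rfl]

lemma coeff_logOneSub_pSer (ω : Ω) (d : ℕ) :
    PowerSeries.coeff (R := ℝ) d (logOneSub (pSer p ω))
      = -∑ i ∈ Finset.Icc 1 d, (i : ℝ)⁻¹ * ∑ kk ∈ comps i d, ∏ s, p (kk s) ω := by
  rw [logOneSub, PowerSeries.coeff_mk]
  congr 1
  refine Finset.sum_congr rfl fun i hi => ?_
  rw [coeff_pow_comps (pSer p ω) (coeff_pSer_zero p ω) i d]
  rw [div_eq_inv_mul]
  congr 1
  refine Finset.sum_congr rfl fun kk hkk => ?_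
  refine Finset.prod_congr rfl fun s _ => ?_
  rw [pSer, PowerSeries.coeff_mk, if_neg]
  have := (mem_comps.mp hkk).1 s
  omega

lemma coeff_L (d : ℕ) :
    PowerSeries.coeff (R := ℝ) d (∑ ω, PowerSeries.C (R := ℝ) (μ ω) * logOneSub (pSer p ω))
      = -∑ i ∈ Finset.Icc 1 d, (i : ℝ)⁻¹ * ∑ kk ∈ comps i d, Mw μ p kk := by
  rw [map_sum]
  have h1 : ∀ ω : Ω, PowerSeries.coeff (R := ℝ) d (PowerSeries.C (R := ℝ) (μ ω) * logOneSub (pSer p ω))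
      = -∑ i ∈ Finset.Icc 1 d, ∑ kk ∈ comps i d,
          (i : ℝ)⁻¹ * (μ ω * ∏ s, p (kk s) ω) := by
    intro ω
    rw [PowerSeries.coeff_C_mul, coeff_logOneSub_pSer p ω d, mul_neg]
    congr 1
    rw [Finset.mul_sum]
    refine Finset.sum_congr rfl fun i _ => ?_
    rw [Finset.mul_sum, Finset.mul_sum]
    refine Finset.sum_congr rfl fun kk _ => ?_
    ring
  rw [Finset.sum_congr rfl fun ω _ => h1 ω, sum_neg_distrib]
  congr 1
  rw [Finset.sum_comm]
  refine Finset.sum_congr rfl fun i _ => ?_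
  rw [Finset.sum_comm]
  rw [Finset.mul_sum]
  refine Finset.sum_congr rfl fun kk _ => ?_
  unfold Mw
  rw [Finset.mul_sum]

lemma coeff_L_zero :
    PowerSeries.coeff (R := ℝ) 0 (∑ ω, PowerSeries.C (R := ℝ) (μ ω) * logOneSub (pSer p ω)) = 0 := by
  rw [coeff_L]
  simp

end SeriesSide

section ClaimB

variable {Ω : Type*} [Fintype Ω] (μ : Ω → ℝ) (p : ℕ → Ω → ℝ)

/-- Words of weight `d`: pairs (length, entries) with positive entries summing to `d`. -/
def WS (d : ℕ) : Finset ((i : ℕ) × (Fin i → ℕ)) :=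
  (Finset.Icc 1 d).sigma (fun i => comps i d)

lemma claimB (N : ℕ) (hN : 1 ≤ N) (j : ℕ) :
    PowerSeries.coeff (R := ℝ) N ((∑ ω, PowerSeries.C (R := ℝ) (μ ω) * logOneSub (pSer p ω)) ^ j)
      = (-1:ℝ)^j * ∑ n ∈ Finset.Icc 1 N, ((n.factorial : ℝ))⁻¹ *
          ∑ k ∈ comps n N, Xterm μ p j n k := by
  have hj : ∀ l ∈ comps j N, 1 ≤ j := by
    intro l hl
    by_contra h
    have hj0 : j = 0 := by omega
    subst hj0
    have := (mem_comps.mp hl).2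
    simp at this
    omega
  -- step 1: expand the coefficient of the j-th power
  rw [coeff_pow_comps _ (coeff_L_zero μ p) j N]
  -- step 2: expand each factor
  have step2 : ∀ l ∈ comps j N,
      (∏ r, PowerSeries.coeff (R := ℝ) (l r) (∑ ω, PowerSeries.C (R := ℝ) (μ ω) * logOneSub (pSer p ω)))
      = (-1:ℝ)^j * ∏ r, ∑ v ∈ WS (l r), ((v.1 : ℝ))⁻¹ * Mw μ p v.2 := by
    intro l _
    have hcoeff : ∀ r, PowerSeries.coeff (R := ℝ) (l r)
        (∑ ω, PowerSeries.C (R := ℝ) (μ ω) * logOneSub (pSer p ω))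
        = -(∑ v ∈ WS (l r), ((v.1 : ℝ))⁻¹ * Mw μ p v.2) := by
      intro r
      rw [coeff_L μ p (l r)]
      congr 1
      rw [WS]
      rw [Finset.sum_congr rfl fun i _ =>
        Finset.mul_sum (comps i (l r)) (fun kk => Mw μ p kk) ((i : ℝ))⁻¹]
      exact Finset.sum_sigma' (Finset.Icc 1 (l r)) (fun i => comps i (l r))
        (fun i kk => ((i : ℝ))⁻¹ * Mw μ p kk)
    rw [Finset.prod_congr rfl fun r _ => hcoeff r]
    rw [Finset.prod_congr rfl fun r _ =>
      (neg_one_mul (∑ v ∈ WS (l r), ((v.1 : ℝ))⁻¹ * Mw μ p v.2)).symm]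
    rw [Finset.prod_mul_distrib, Finset.prod_const]
    simp
  rw [Finset.sum_congr rfl step2, ← Finset.mul_sum]
  congr 1
  -- step 3+4: expand products of sums into the sigma finset T
  have step34 :
      ∑ l ∈ comps j N, ∏ r, ∑ v ∈ WS (l r), ((v.1 : ℝ))⁻¹ * Mw μ p v.2
      = ∑ x ∈ (comps j N).sigma
          (fun l => Fintype.piFinset (fun r : Fin j => WS (l r))),
          ∏ r, (((x.2 r).1 : ℝ))⁻¹ * Mw μ p (x.2 r).2 := by
    rw [Finset.sum_sigma]
    exact Finset.sum_congr rfl fun l _ => Finset.prod_univ_sum _ _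
  rw [step34]
  -- step 5: group by total length and length profile
  have hmaps : ∀ x ∈ (comps j N).sigma
      (fun l => Fintype.piFinset (fun r : Fin j => WS (l r))),
      (⟨∑ r, (x.2 r).1, fun r => (x.2 r).1⟩ : (n : ℕ) × (Fin j → ℕ))
        ∈ (Finset.Icc 1 N).sigma (fun n => comps j n) := by
    intro x hx
    rw [Finset.mem_sigma] at hx
    obtain ⟨hx1, hx2⟩ := hx
    rw [Fintype.mem_piFinset] at hx2
    have hWS : ∀ r, 1 ≤ (x.2 r).1 ∧ (x.2 r).1 ≤ x.1 r := by
      intro r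
      have := hx2 r
      rw [WS, Finset.mem_sigma, Finset.mem_Icc] at this
      exact ⟨this.1.1, this.1.2⟩
    rw [Finset.mem_sigma, Finset.mem_Icc, mem_comps]
    refine ⟨⟨?_, ?_⟩, fun r => (hWS r).1, rfl⟩
    · have hj1 : 1 ≤ j := hj x.1 hx1
      calc (1 : ℕ) ≤ ∑ _r : Fin j, 1 := by
            simpa using hj1
      _ ≤ ∑ r, (x.2 r).1 := Finset.sum_le_sum fun r _ => (hWS r).1
    · calc ∑ r, (x.2 r).1 ≤ ∑ r, x.1 r := Finset.sum_le_sum fun r _ => (hWS r).2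
      _ = N := (mem_comps.mp hx1).2
  rw [← Finset.sum_fiberwise_of_maps_to hmaps
    (fun x => ∏ r, (((x.2 r).1 : ℝ))⁻¹ * Mw μ p (x.2 r).2)]
  -- step 6: per fiber
  rw [Finset.sum_sigma]
  refine Finset.sum_congr rfl fun n hn => ?_
  have key : ∀ i ∈ comps j n,
      (∑ x ∈ (((comps j N).sigma
          (fun l => Fintype.piFinset (fun r : Fin j => WS (l r)))).filter
          (fun x => (⟨∑ r, (x.2 r).1, fun r => (x.2 r).1⟩ : (m : ℕ) × (Fin j → ℕ))
            = ⟨n, i⟩)),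
          ∏ r, (((x.2 r).1 : ℝ))⁻¹ * Mw μ p (x.2 r).2)
      = ((n.factorial : ℝ))⁻¹ *
          ∑ φ : Fin n ≃ (Σ r : Fin j, Fin (i r)), ∑ k ∈ comps n N,
            ∏ r, ((i r : ℝ))⁻¹ * Mw μ p (fun s => k (φ.symm ⟨r, s⟩)) := by
    intro i hi
    have hisum : ∑ r, i r = n := (mem_comps.mp hi).2
    have hipos : ∀ r, 1 ≤ i r := (mem_comps.mp hi).1
    have hcard : Fintype.card (Fin n ≃ (Σ r : Fin j, Fin (i r))) = n.factorial := by
      rw [Fintype.card_equiv (Fintype.equivOfCardEq (by simp [hisum]))]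
      simp
    have perphi : ∀ φ : Fin n ≃ (Σ r : Fin j, Fin (i r)),
        ∑ k ∈ comps n N, ∏ r, ((i r : ℝ))⁻¹ * Mw μ p (fun s => k (φ.symm ⟨r, s⟩))
        = ∑ x ∈ (((comps j N).sigma
            (fun l => Fintype.piFinset (fun r : Fin j => WS (l r)))).filter
            (fun x => (⟨∑ r, (x.2 r).1, fun r => (x.2 r).1⟩ : (m : ℕ) × (Fin j → ℕ))
              = ⟨n, i⟩)),
            ∏ r, (((x.2 r).1 : ℝ))⁻¹ * Mw μ p (x.2 r).2 := by
      intro φ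
      refine Finset.sum_bij
        (i := fun k _ => (⟨fun r => ∑ s : Fin (i r), k (φ.symm ⟨r, s⟩),
          fun r => ⟨i r, fun s => k (φ.symm ⟨r, s⟩)⟩⟩ :
          (l : Fin j → ℕ) × (Fin j → (m : ℕ) × (Fin m → ℕ)))) ?_ ?_ ?_ ?_
      · -- maps to the fiber
        intro k hk
        obtain ⟨hk1, hk2⟩ := mem_comps.mp hk
        have hle : ∀ r, i r ≤ ∑ s : Fin (i r), k (φ.symm ⟨r, s⟩) := by
          intro r
          calc i r = ∑ _s : Fin (i r), 1 := by simp
          _ ≤ ∑ s : Fin (i r), k (φ.symm ⟨r, s⟩) :=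
            Finset.sum_le_sum fun s _ => hk1 _
        have hsum : ∑ r, ∑ s : Fin (i r), k (φ.symm ⟨r, s⟩) = N := by
          have e1 : ∑ z : (Σ r : Fin j, Fin (i r)), k (φ.symm z) = ∑ y, k y :=
            Equiv.sum_comp φ.symm k
          rw [← Finset.univ_sigma_univ, Finset.sum_sigma] at e1
          rw [e1, hk2]
        rw [Finset.mem_filter]
        constructor
        · rw [Finset.mem_sigma]
          constructor
          · rw [mem_comps]
            exact ⟨fun r => le_trans (hipos r) (hle r), hsum⟩
          · rw [Fintype.mem_piFinset]
            intro r
            rw [WS, Finset.mem_sigma, Finset.mem_Icc, mem_comps]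
            exact ⟨⟨hipos r, hle r⟩, fun s => hk1 _, rfl⟩
        · show (⟨∑ r, i r, i⟩ : (m : ℕ) × (Fin j → ℕ)) = ⟨n, i⟩
          rw [hisum]
      · -- injective
        intro k1 hk1 k2 hk2 he
        have h2 := congrArg Sigma.snd he
        funext y
        have h3 := congrFun h2 (φ y).1
        dsimp only at h3
        rw [Sigma.ext_iff] at h3
        have h5 := congrFun (eq_of_heq h3.2) (φ y).2
        dsimp only at h5
        rwa [Sigma.eta, Equiv.symm_apply_apply] at h5
      · -- surjective
        intro x hx
        rw [Finset.mem_filter] at hx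
        obtain ⟨hxT, hxq⟩ := hx
        rw [Finset.mem_sigma] at hxT
        obtain ⟨hxl, hxg⟩ := hxT
        rw [Fintype.mem_piFinset] at hxg
        rw [Sigma.ext_iff] at hxq
        have hq2 : (fun r => (x.2 r).1) = i := eq_of_heq hxq.2
        have hw2 : ∀ r, (x.2 r).2 ∈ comps (x.2 r).1 (x.1 r) :=
          fun r => (Finset.mem_sigma.mp (hxg r)).2
        set k : Fin n → ℕ := fun y =>
          (x.2 (φ y).1).2 (Fin.cast (congrFun hq2 (φ y).1).symm (φ y).2) with hkdef
        have keyz : ∀ (z : Σ r : Fin j, Fin (i r)) (y : Fin n), φ y = z →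
            k y = (x.2 z.1).2 (Fin.cast ((congrFun hq2 z.1).symm) z.2) := by
          intro z y hy
          subst hy
          rfl
        have hrow : ∀ r, ∑ s : Fin (i r), k (φ.symm ⟨r, s⟩) = x.1 r := by
          intro r
          have e2 : ∀ s : Fin (i r), k (φ.symm ⟨r, s⟩)
              = (x.2 r).2 (Fin.cast ((congrFun hq2 r).symm) s) := by
            intro s
            exact keyz ⟨r, s⟩ _ (φ.apply_symm_apply ⟨r, s⟩)
          rw [Finset.sum_congr rfl fun s _ => e2 s]
          rw [Fintype.sum_equiv (finCongr ((congrFun hq2 r).symm))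
            (fun s => (x.2 r).2 (Fin.cast ((congrFun hq2 r).symm) s))
            (fun s' => (x.2 r).2 s') (fun s => rfl)]
          exact (mem_comps.mp (hw2 r)).2
        have hkmem : k ∈ comps n N := by
          rw [mem_comps]
          constructor
          · intro y
            exact (mem_comps.mp (hw2 (φ y).1)).1 _
          · have e1 : ∑ z : (Σ r : Fin j, Fin (i r)), k (φ.symm z) = ∑ y, k y :=
              Equiv.sum_comp φ.symm k
            rw [← Finset.univ_sigma_univ, Finset.sum_sigma] at e1
            rw [← e1, Finset.sum_congr rfl fun r _ => hrow r]
            exact (mem_comps.mp hxl).2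
        refine ⟨k, hkmem, ?_⟩
        have hl' : (fun r => ∑ s : Fin (i r), k (φ.symm ⟨r, s⟩)) = x.1 :=
          funext fun r => hrow r
        have hg' : (fun r => (⟨i r, fun s => k (φ.symm ⟨r, s⟩)⟩ :
            (m : ℕ) × (Fin m → ℕ))) = x.2 := by
          funext r
          refine Sigma.ext ((congrFun hq2 r).symm) ?_
          show HEq (fun s : Fin (i r) => k (φ.symm ⟨r, s⟩)) (x.2 r).2
          rw [Fin.heq_fun_iff ((congrFun hq2 r).symm)]
          intro s
          exact keyz ⟨r, s⟩ _ (φ.apply_symm_apply ⟨r, s⟩)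
        show (⟨fun r => ∑ s : Fin (i r), k (φ.symm ⟨r, s⟩),
          fun r => ⟨i r, fun s => k (φ.symm ⟨r, s⟩)⟩⟩ :
          (l : Fin j → ℕ) × (Fin j → (m : ℕ) × (Fin m → ℕ))) = x
        rw [hl', hg', Sigma.eta]
      · -- values agree
        intro k hk
        rfl
    rw [Finset.sum_congr rfl fun φ (_ : φ ∈ Finset.univ) => perphi φ,
      Finset.sum_const, nsmul_eq_mul, Finset.card_univ, hcard, ← mul_assoc,
      inv_mul_cancel₀ (Nat.cast_ne_zero.mpr (Nat.factorial_ne_zero n)), one_mul]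
  rw [Finset.sum_congr rfl key]
  rw [← Finset.mul_sum]
  congr 1
  unfold Xterm
  rw [Finset.sum_comm]
  refine Finset.sum_congr rfl fun i hi => ?_
  rw [Finset.sum_comm]
end ClaimB

section Final

variable {Ω : Type*} [Fintype Ω] (μ : Ω → ℝ) (p : ℕ → Ω → ℝ)

lemma Xterm_zero {jj n : ℕ} (hjn : n < jj) (k : Fin n → ℕ) : Xterm μ p jj n k = 0 := by
  unfold Xterm
  rw [comps_eq_empty hjn, Finset.sum_empty]

lemma claimA' {n m : ℕ} (hnm : n ≤ m) (k : Fin n → ℕ) :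
    Epart μ p n k = ∑ jj ∈ Finset.range (m+1),
      (-1:ℝ)^(jj+1) * (jj.factorial : ℝ)⁻¹ * Xterm μ p jj n k := by
  rw [claimA]
  refine Finset.sum_subset (Finset.range_subset_range.mpr (by omega)) ?_
  intro jj hjj hjj'
  rw [Finset.mem_range] at hjj hjj'
  rw [Xterm_zero μ p (by omega) k, mul_zero]

theorem stmt6' (hμ0 : ∀ ω, 0 ≤ μ ω)
    (hE : ∀ n : ℕ, 1 ≤ n → ∀ k : Fin n → ℕ, (∀ s, 1 ≤ k s) →
      0 ≤ ∑ σ : Finpartition (Finset.univ : Finset (Fin n)),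
          (-1 : ℝ) ^ (σ.parts.card + 1) *
            (∏ b ∈ σ.parts, ((b.card - 1).factorial : ℝ)) *
            ∏ b ∈ σ.parts, (∑ ω, μ ω * ∏ s ∈ b, p (k s) ω)) :
    ∀ m : ℕ, 0 ≤ PowerSeries.coeff (R := ℝ) m
        (1 - expSer (∑ ω, PowerSeries.C (R := ℝ) (μ ω) * logOneSub (pSer p ω))) := by
  intro m
  rcases Nat.eq_zero_or_pos m with hm | hm
  · subst hm
    rw [map_sub, PowerSeries.coeff_one, if_pos rfl, expSer, PowerSeries.coeff_mk,
      Finset.sum_range_one, pow_zero, PowerSeries.coeff_one, if_pos rfl]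
    norm_num
  · have key : PowerSeries.coeff (R := ℝ) m
        (1 - expSer (∑ ω, PowerSeries.C (R := ℝ) (μ ω) * logOneSub (pSer p ω)))
        = ∑ n ∈ Finset.Icc 1 m, ((n.factorial : ℝ))⁻¹ *
            ∑ k ∈ comps n m, Epart μ p n k := by
      rw [map_sub, PowerSeries.coeff_one, if_neg (by omega), expSer, PowerSeries.coeff_mk]
      have hB : ∀ jj ∈ Finset.range (m+1),
          PowerSeries.coeff (R := ℝ) m
            ((∑ ω, PowerSeries.C (R := ℝ) (μ ω) * logOneSub (pSer p ω)) ^ jj) / jj.factorial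
          = ∑ n ∈ Finset.Icc 1 m, ∑ k ∈ comps n m,
              ((n.factorial : ℝ))⁻¹ * ((-1:ℝ)^jj * (jj.factorial : ℝ)⁻¹ *
                Xterm μ p jj n k) := by
        intro jj _
        rw [claimB μ p m hm jj, div_eq_mul_inv, mul_assoc, Finset.sum_mul, Finset.mul_sum]
        refine Finset.sum_congr rfl fun n _ => ?_
        rw [Finset.mul_sum, Finset.sum_mul, Finset.mul_sum]
        refine Finset.sum_congr rfl fun k _ => ?_
        ring
      rw [Finset.sum_congr rfl hB, Finset.sum_comm]
      rw [zero_sub, ← Finset.sum_neg_distrib]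
      refine Finset.sum_congr rfl fun n hn => ?_
      rw [Finset.sum_comm, Finset.mul_sum, ← Finset.sum_neg_distrib]
      refine Finset.sum_congr rfl fun k _ => ?_
      rw [claimA' μ p (Finset.mem_Icc.mp hn).2 k, Finset.mul_sum, ← Finset.sum_neg_distrib]
      refine Finset.sum_congr rfl fun jj _ => ?_
      ring
    rw [key]
    refine Finset.sum_nonneg fun n hn => ?_
    refine mul_nonneg (by positivity) ?_
    refine Finset.sum_nonneg fun k hk => ?_
    have := hE n (Finset.mem_Icc.mp hn).1 k (mem_comps.mp hk).1
    unfold Epart Mb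
    exact this

end Final

end Aux

/-- If `E_n(p_{k_1},…,p_{k_n}) ≥ 0` for every `n ≥ 1` and all positive
integers `k_1,…,k_n`, then every coefficient of
`1 - ∏_{ω ∈ Ω} (1 - p(ω))^{μ(ω)} = 1 - exp (∑_ω μ(ω) log (1 - p(ω)))` is nonnegative. -/
theorem stmt6 (Ω : Type*) [Fintype Ω] [Nonempty Ω]
    (μ : Ω → ℝ) (hμ0 : ∀ ω, 0 ≤ μ ω) (hμ1 : ∑ ω, μ ω = 1)
    (p : ℕ → Ω → ℝ)
    (hE : ∀ n : ℕ, 1 ≤ n → ∀ k : Fin n → ℕ, (∀ s, 1 ≤ k s) →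
      0 ≤ ∑ σ : Finpartition (Finset.univ : Finset (Fin n)),
          (-1 : ℝ) ^ (σ.parts.card + 1) *
            (∏ b ∈ σ.parts, ((b.card - 1).factorial : ℝ)) *
            ∏ b ∈ σ.parts, (∑ ω, μ ω * ∏ s ∈ b, p (k s) ω)) :
    ∀ m : ℕ, 0 ≤ PowerSeries.coeff (R := ℝ) m
        (1 - expSer (∑ ω, PowerSeries.C (R := ℝ) (μ ω) * logOneSub (pSer p ω))) := by
  exact stmt6' μ p hμ0 hE
end

section
/- Let N ≥ 1, let μ be probability weights on {1,…,N}, and for each integer k ≥ 1 let p_k : {1,…,N} → ℝ be nonnegative and nondecreasing (0 ≤ p_k(j) ≤ p_k(j') whenever j ≤ j'). Let p(j) = Σ_{k≥1} p_k(j) t^k ∈ ℝ[[t]]. Then every coefficient of the formal power series 1 − ∏_{j=1}^N (1−p(j))^{μ(j)} is nonnegative. -/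
open Finset

namespace Stmt9Aux

open PowerSeries

local notation "cf" => PowerSeries.coeff (R := ℝ)
local notation "cc" => PowerSeries.constantCoeff (R := ℝ)
local notation "CC" => PowerSeries.C (R := ℝ)
local notation "D" => PowerSeries.derivative ℝ

/-- nonnegative coefficients -/
def Pos (f : PowerSeries ℝ) : Prop := ∀ m, 0 ≤ cf m f

lemma Pos.add {f g} (hf : Pos f) (hg : Pos g) : Pos (f + g) := fun m => by
  rw [map_add]; exact add_nonneg (hf m) (hg m)

lemma Pos.mul {f g} (hf : Pos f) (hg : Pos g) : Pos (f * g) := fun m => by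
  rw [PowerSeries.coeff_mul]
  exact Finset.sum_nonneg fun p _ => mul_nonneg (hf _) (hg _)

lemma Pos.one : Pos 1 := fun m => by
  rw [PowerSeries.coeff_one]; split <;> norm_num

lemma Pos.pow {f} (hf : Pos f) : ∀ n, Pos (f ^ n)
  | 0 => by rw [pow_zero]; exact Pos.one
  | (n+1) => by rw [pow_succ]; exact Pos.mul (Pos.pow hf n) hf

/-- vanishing of low coefficients of powers -/
lemma coeff_pow_zero {q : PowerSeries ℝ} (hq : cc q = 0) :
    ∀ {n m : ℕ}, m < n → cf m (q ^ n) = 0 := by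
  intro n
  induction n with
  | zero => intro m hm; omega
  | succ n ih =>
    intro m hm
    rw [pow_succ, PowerSeries.coeff_mul]
    apply Finset.sum_eq_zero
    intro p hp
    rw [Finset.HasAntidiagonal.mem_antidiagonal] at hp
    by_cases h : p.1 < n
    · rw [ih h, zero_mul]
    · have : p.2 = 0 := by omega
      rw [this, PowerSeries.coeff_zero_eq_constantCoeff, hq, mul_zero]

/-- agreement of coefficients up to level m -/
def EqTo (m : ℕ) (f g : PowerSeries ℝ) : Prop := ∀ k ≤ m, cf k f = cf k g

lemma EqTo.refl {m f} : EqTo m f f := fun _ _ => rfl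

lemma eqTo_of_eq {m : ℕ} {f g} (h : f = g) : EqTo m f g := fun _ _ => by rw [h]

lemma EqTo.symm {m f g} (h : EqTo m f g) : EqTo m g f := fun k hk => (h k hk).symm

lemma EqTo.trans {m f g h} (h1 : EqTo m f g) (h2 : EqTo m g h) : EqTo m f h :=
  fun k hk => (h1 k hk).trans (h2 k hk)

lemma EqTo.mul {m f f' g g'} (h1 : EqTo m f f') (h2 : EqTo m g g') :
    EqTo m (f * g) (f' * g') := by
  intro k hk
  rw [PowerSeries.coeff_mul, PowerSeries.coeff_mul]
  apply Finset.sum_congr rfl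
  intro p hp
  rw [Finset.HasAntidiagonal.mem_antidiagonal] at hp
  rw [h1 p.1 (by omega), h2 p.2 (by omega)]

lemma EqTo.sub {m f f' g g'} (h1 : EqTo m f f') (h2 : EqTo m g g') :
    EqTo m (f - g) (f' - g') := by
  intro k hk; rw [map_sub, map_sub, h1 k hk, h2 k hk]

lemma EqTo.deriv {m f g} (h : EqTo (m+1) f g) : EqTo m (D f) (D g) := by
  intro k hk
  rw [PowerSeries.coeff_derivative, PowerSeries.coeff_derivative, h (k+1) (by omega)]

lemma EqTo.coeff {m f g} (h : EqTo m f g) : cf m f = cf m g := h m le_rfl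

lemma eq_of_eqTo {f g} (h : ∀ m, EqTo m f g) : f = g :=
  PowerSeries.ext fun m => (h m).coeff

/-- truncated substitution sums -/
noncomputable def Ssum (c : ℕ → ℝ) (q : PowerSeries ℝ) : PowerSeries ℝ :=
  PowerSeries.mk fun m => ∑ n ∈ range (m+1), c n * cf m (q ^ n)

noncomputable def T (c : ℕ → ℝ) (q : PowerSeries ℝ) (M : ℕ) : PowerSeries ℝ :=
  ∑ n ∈ range (M+1), CC (c n) * q ^ n

lemma coeff_T (c : ℕ → ℝ) (q : PowerSeries ℝ) (M k : ℕ) :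
    cf k (T c q M) = ∑ n ∈ range (M+1), c n * cf k (q ^ n) := by
  rw [T, map_sum]
  exact Finset.sum_congr rfl fun n _ => PowerSeries.coeff_C_mul _ _ _

lemma Ssum_eqTo {c : ℕ → ℝ} {q : PowerSeries ℝ} (hq : cc q = 0) {m M : ℕ} (h : m ≤ M) :
    EqTo m (Ssum c q) (T c q M) := by
  intro k hk
  rw [Ssum, PowerSeries.coeff_mk, coeff_T]
  apply Finset.sum_subset
  · exact Finset.range_subset_range.2 (by omega)
  · intro n _ hn
    rw [Finset.mem_range, not_lt] at hn
    rw [coeff_pow_zero hq (by omega), mul_zero]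

lemma T_congr {c d : ℕ → ℝ} {q : PowerSeries ℝ} {M : ℕ} (h : ∀ n ≤ M, c n = d n) :
    T c q M = T d q M := by
  apply Finset.sum_congr rfl
  intro n hn
  rw [Finset.mem_range] at hn
  rw [h n (by omega)]

lemma T_sub (c d : ℕ → ℝ) (q : PowerSeries ℝ) (M : ℕ) :
    T c q M - T d q M = T (fun n => c n - d n) q M := by
  rw [T, T, T, ← Finset.sum_sub_distrib]
  apply Finset.sum_congr rfl
  intro n _
  rw [← sub_mul, ← map_sub]

lemma C_mul_T (a : ℝ) (c : ℕ → ℝ) (q : PowerSeries ℝ) (M : ℕ) :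
    CC a * T c q M = T (fun n => a * c n) q M := by
  rw [T, T, Finset.mul_sum]
  apply Finset.sum_congr rfl
  intro n _
  rw [← mul_assoc, ← map_mul]

lemma one_eq_T (q : PowerSeries ℝ) (M : ℕ) :
    (1 : PowerSeries ℝ) = T (fun n => if n = 0 then 1 else 0) q M := by
  rw [T, Finset.sum_eq_single_of_mem 0 (Finset.mem_range.2 (by omega))]
  · simp
  · intro n _ hn
    simp [hn]

lemma shift_T (c : ℕ → ℝ) (q : PowerSeries ℝ) (M : ℕ) :
    q * T c q M = T (fun n => if n = 0 then 0 else c (n-1)) q (M+1) := by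
  rw [T, T, Finset.sum_range_succ' (fun n => CC (if n = 0 then 0 else c (n-1)) * q ^ n) (M+1),
    Finset.mul_sum]
  norm_num
  exact Finset.sum_congr rfl fun n _ => by ring

lemma pad_T (c : ℕ → ℝ) (q : PowerSeries ℝ) (M : ℕ) :
    T c q (M+1) = T c q M + CC (c (M+1)) * q ^ (M+1) := by
  rw [T, T, Finset.sum_range_succ]

lemma one_sub_mul_T_eqTo {q : PowerSeries ℝ} (hq : cc q = 0) (c : ℕ → ℝ) (m : ℕ) :
    EqTo m ((1 - q) * T c q m)
      (T (fun n => c n - (if n = 0 then 0 else c (n-1))) q (m+1)) := by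
  have h1 : (1 - q) * T c q m
      = (T c q (m+1) - T (fun n => if n = 0 then 0 else c (n-1)) q (m+1))
        - CC (c (m+1)) * q ^ (m+1) := by
    rw [sub_mul, one_mul, shift_T c q m, pad_T c q m]
    ring
  rw [h1, T_sub]
  intro k hk
  rw [map_sub]
  have h2 : cf k (CC (c (m+1)) * q ^ (m+1)) = 0 := by
    rw [PowerSeries.coeff_C_mul, coeff_pow_zero hq (by omega), mul_zero]
  rw [h2, sub_zero]

/-- derivative of a truncated sum -/
lemma D_T (c : ℕ → ℝ) (q : PowerSeries ℝ) (M : ℕ) :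
    D (T c q (M+1)) = D q * T (fun k => c (k+1) * (k+1)) q M := by
  rw [T, map_sum, Finset.sum_range_succ' (fun n => D (CC (c n) * q ^ n)) (M+1)]
  have h0 : D (CC (c 0) * q ^ 0) = 0 := by
    rw [pow_zero, mul_one, PowerSeries.derivative_C]
  rw [h0, add_zero, T, Finset.mul_sum]
  apply Finset.sum_congr rfl
  intro n _
  rw [← PowerSeries.smul_eq_C_mul, Derivation.map_smul, Derivation.leibniz_pow,
    Nat.add_sub_cancel, smul_eq_mul (α := PowerSeries ℝ), ← Nat.cast_smul_eq_nsmul ℝ,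
    smul_smul, PowerSeries.smul_eq_C_mul]
  push_cast
  ring

lemma D_Ssum {c : ℕ → ℝ} {q : PowerSeries ℝ} (hq : cc q = 0) (m : ℕ) :
    EqTo m (D (Ssum c q)) (D q * T (fun k => c (k+1) * (k+1)) q m) := by
  have h1 : EqTo (m+1) (Ssum c q) (T c q (m+1)) := Ssum_eqTo hq (by omega)
  have := h1.deriv
  rw [D_T] at this
  exact this

/-- the ODE uniqueness lemma -/
lemma ode_unique {c f g : PowerSeries ℝ} (hf : D f = c * f) (hg : D g = c * g)
    (h0 : cf 0 f = cf 0 g) : f = g := by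
  apply PowerSeries.ext
  intro m
  induction m using Nat.strong_induction_on with
  | _ m ih =>
    match m with
    | 0 => exact h0
    | (m+1) =>
      have hDf : cf m (D f) = cf m (D g) := by
        rw [hf, hg, PowerSeries.coeff_mul, PowerSeries.coeff_mul]
        apply Finset.sum_congr rfl
        intro p hp
        rw [Finset.HasAntidiagonal.mem_antidiagonal] at hp
        rw [ih p.2 (by omega)]
      rw [PowerSeries.coeff_derivative, PowerSeries.coeff_derivative] at hDf
      have hm1 : ((m:ℝ) + 1) ≠ 0 := by positivity
      exact mul_right_cancel₀ hm1 hDf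

/- expSer and logOneSub as Ssum -/
lemma expSer_eq_Ssum (q : PowerSeries ℝ) :
    expSer q = Ssum (fun n => ((n.factorial : ℝ))⁻¹) q := by
  apply PowerSeries.ext
  intro m
  rw [expSer, Ssum, PowerSeries.coeff_mk, PowerSeries.coeff_mk]
  apply Finset.sum_congr rfl
  intro n _
  rw [div_eq_inv_mul]

lemma logOneSub_eq_Ssum (q : PowerSeries ℝ) :
    logOneSub q = Ssum (fun n => if n = 0 then 0 else -((n:ℝ))⁻¹) q := by
  apply PowerSeries.ext
  intro m
  rw [logOneSub, Ssum, PowerSeries.coeff_mk, PowerSeries.coeff_mk]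
  rcases Nat.eq_zero_or_pos m with hm | hm
  · subst hm; simp
  · rw [Finset.range_eq_Ico, Finset.sum_eq_sum_Ico_succ_bot (by omega)]
    norm_num
    rw [Finset.Ico_add_one_right_eq_Icc, ← Finset.sum_neg_distrib]
    apply Finset.sum_congr rfl
    intro n hn
    rw [Finset.mem_Icc] at hn
    rw [if_neg (by omega), div_eq_inv_mul]

lemma constantCoeff_expSer (q : PowerSeries ℝ) : cc (expSer q) = 1 := by
  rw [← PowerSeries.coeff_zero_eq_constantCoeff]
  rw [expSer, PowerSeries.coeff_mk]
  simp

lemma constantCoeff_logOneSub (q : PowerSeries ℝ) : cc (logOneSub q) = 0 := by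
  rw [← PowerSeries.coeff_zero_eq_constantCoeff]
  rw [logOneSub, PowerSeries.coeff_mk]
  simp

/-- ODE for expSer -/
lemma D_expSer {q : PowerSeries ℝ} (hq : cc q = 0) :
    D (expSer q) = D q * expSer q := by
  apply eq_of_eqTo
  intro m
  rw [expSer_eq_Ssum]
  have h1 := D_Ssum (c := fun n => ((n.factorial : ℝ))⁻¹) hq m
  have h2 : T (fun k => ((k+1).factorial : ℝ)⁻¹ * (k+1)) q m
      = T (fun k => ((k.factorial : ℝ))⁻¹) q m := by
    apply T_congr
    intro n _
    rw [Nat.factorial_succ]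
    push_cast
    rw [mul_inv]
    field_simp
  rw [h2] at h1
  refine h1.trans (EqTo.mul EqTo.refl ?_)
  exact (Ssum_eqTo hq le_rfl).symm

/-- ODE for logOneSub -/
lemma D_logOneSub {q : PowerSeries ℝ} (hq : cc q = 0) :
    (1 - q) * D (logOneSub q) = -(D q) := by
  apply eq_of_eqTo
  intro m
  rw [logOneSub_eq_Ssum]
  have h1 := D_Ssum (c := fun n => if n = 0 then 0 else -((n:ℝ))⁻¹) hq m
  have h2 : T (fun k => (if k+1 = 0 then 0 else -(((k+1:ℕ):ℝ))⁻¹) * ((k:ℝ)+1)) q m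
      = T (fun _ => -1) q m := by
    apply T_congr
    intro n _
    rw [if_neg (Nat.succ_ne_zero n)]
    push_cast
    field_simp
  rw [h2] at h1
  have h3 : EqTo m ((1-q) * D (Ssum (fun n => if n = 0 then 0 else -((n:ℝ))⁻¹) q))
      ((1-q) * (D q * T (fun _ => -1) q m)) := EqTo.mul EqTo.refl h1
  refine h3.trans ?_
  have h4 : (1-q) * (D q * T (fun _ => -1) q m) = D q * ((1-q) * T (fun _ => -1) q m) := by
    ring
  rw [h4]
  have h5 : EqTo m ((1-q) * T (fun _ => -1) q m)
      (T (fun n => (-1 : ℝ) - (if n = 0 then 0 else -1)) q (m+1)) :=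
    one_sub_mul_T_eqTo hq _ m
  have h6 : T (fun n => (-1 : ℝ) - (if n = 0 then 0 else -1)) q (m+1)
      = T (fun n => (-1 : ℝ) * (if n = 0 then 1 else 0)) q (m+1) := by
    apply T_congr
    intro n _
    rcases Nat.eq_zero_or_pos n with h | h
    · subst h; norm_num
    · rw [if_neg (by omega), if_neg (by omega)]; ring
  have h7 : T (fun n => (-1 : ℝ) * (if n = 0 then 1 else 0)) q (m+1) = -1 := by
    rw [← C_mul_T, ← one_eq_T]
    simp
  refine (EqTo.mul EqTo.refl (h5.trans (eqTo_of_eq (h6.trans h7)))).trans ?_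
  apply eqTo_of_eq
  ring

/- exp/log algebra -/

lemma exp_add {a b : PowerSeries ℝ} (ha : cc a = 0) (hb : cc b = 0) :
    expSer (a + b) = expSer a * expSer b := by
  refine ode_unique (c := D (a+b)) (D_expSer (by rw [map_add, ha, hb, add_zero])) ?_ ?_
  · rw [Derivation.leibniz, smul_eq_mul, smul_eq_mul, D_expSer ha, D_expSer hb, map_add]
    ring
  · simp only [PowerSeries.coeff_zero_eq_constantCoeff]
    rw [map_mul, constantCoeff_expSer, constantCoeff_expSer, constantCoeff_expSer, mul_one]

lemma exp_log {q : PowerSeries ℝ} (hq : cc q = 0) : expSer (logOneSub q) = 1 - q := by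
  have hinv : cc (1 - q) ≠ 0 := by
    rw [map_sub, map_one, hq, sub_zero]; exact one_ne_zero
  refine ode_unique (c := (1-q)⁻¹ * (-(D q))) ?_ ?_ ?_
  · rw [D_expSer (constantCoeff_logOneSub q)]
    have h1 : D (logOneSub q) = (1-q)⁻¹ * (-(D q)) := by
      rw [← D_logOneSub hq, ← mul_assoc, PowerSeries.inv_mul_cancel _ hinv, one_mul]
    rw [h1]
  · have h2 : ((1-q)⁻¹ * (-(D q))) * (1-q) = -(D q) * ((1-q)⁻¹ * (1-q)) := by ring
    rw [h2, PowerSeries.inv_mul_cancel _ hinv, mul_one, map_sub,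
      Derivation.map_one_eq_zero, zero_sub]
  · simp only [PowerSeries.coeff_zero_eq_constantCoeff]
    rw [constantCoeff_expSer, map_sub, map_one, hq, sub_zero]

lemma exp_inj {a b : PowerSeries ℝ} (ha : cc a = 0) (hb : cc b = 0)
    (h : expSer a = expSer b) : a = b := by
  have hE : expSer a ≠ 0 := by
    intro h0
    have h1 := constantCoeff_expSer a
    rw [h0, map_zero] at h1
    exact one_ne_zero h1.symm
  have h1 : D a * expSer a = D b * expSer a := by
    calc D a * expSer a = D (expSer a) := (D_expSer ha).symm
      _ = D (expSer b) := by rw [h]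
      _ = D b * expSer b := D_expSer hb
      _ = D b * expSer a := by rw [h]
  have hD : D a = D b := mul_right_cancel₀ hE h1
  apply PowerSeries.ext
  intro m
  match m with
  | 0 => rw [PowerSeries.coeff_zero_eq_constantCoeff]; rw [ha, hb]
  | (m+1) =>
    have h2 : cf m (D a) = cf m (D b) := by rw [hD]
    rw [PowerSeries.coeff_derivative, PowerSeries.coeff_derivative] at h2
    exact mul_right_cancel₀ (by positivity : ((m:ℝ)+1) ≠ 0) h2

/- geometric series -/

lemma geom_inv {p : PowerSeries ℝ} (hp : cc p = 0) :
    (1-p)⁻¹ = Ssum (fun _ => 1) p := by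
  have hinv : cc (1 - p) ≠ 0 := by
    rw [map_sub, map_one, hp, sub_zero]; exact one_ne_zero
  symm
  rw [PowerSeries.eq_inv_iff_mul_eq_one hinv]
  apply eq_of_eqTo
  intro m
  have e1 : EqTo m (Ssum (fun _ => 1) p * (1-p)) ((1-p) * T (fun _ => 1) p m) := by
    rw [mul_comm]
    exact EqTo.mul EqTo.refl (Ssum_eqTo hp le_rfl)
  refine e1.trans ((one_sub_mul_T_eqTo hp _ m).trans ?_)
  have e2 : T (fun n => (1:ℝ) - (if n = 0 then 0 else 1)) p (m+1)
      = T (fun n => if n = 0 then 1 else 0) p (m+1) := by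
    apply T_congr
    intro n _
    rcases Nat.eq_zero_or_pos n with h | h
    · subst h; norm_num
    · rw [if_neg (by omega), if_neg (by omega)]; ring
  rw [e2, ← one_eq_T]
  exact EqTo.refl

lemma Pos_Ssum {c : ℕ → ℝ} {p : PowerSeries ℝ} (hc : ∀ n, 0 ≤ c n) (hp : Pos p) :
    Pos (Ssum c p) := by
  intro m
  rw [Ssum, PowerSeries.coeff_mk]
  exact Finset.sum_nonneg fun n _ => mul_nonneg (hc n) (Pos.pow hp n m)

lemma Pos_inv_one_sub {p : PowerSeries ℝ} (hp0 : cc p = 0) (hp : Pos p) :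
    Pos ((1-p)⁻¹) := by
  rw [geom_inv hp0]
  exact Pos_Ssum (fun _ => zero_le_one) hp

/- binomial coefficients -/

noncomputable def binc (θ : ℝ) : ℕ → ℝ
  | 0 => 0
  | 1 => θ
  | (n+2) => binc θ (n+1) * (((n:ℝ)+1) - θ) / ((n:ℝ)+2)

lemma binc_zero (θ : ℝ) : binc θ 0 = 0 := rfl
lemma binc_one (θ : ℝ) : binc θ 1 = θ := rfl

lemma binc_rec (θ : ℝ) (k : ℕ) :
    binc θ (k+2) * ((k:ℝ)+2) = binc θ (k+1) * (((k:ℝ)+1) - θ) := by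
  show binc θ (k+1) * (((k:ℝ)+1) - θ) / ((k:ℝ)+2) * ((k:ℝ)+2) = _
  have : ((k:ℝ)+2) ≠ 0 := by positivity
  field_simp

lemma binc_nonneg {θ : ℝ} (hθ0 : 0 ≤ θ) (hθ1 : θ ≤ 1) : ∀ n, 0 ≤ binc θ n
  | 0 => le_refl 0
  | 1 => hθ0
  | (n+2) => by
    have h1 := binc_nonneg hθ0 hθ1 (n+1)
    have h2 : (0:ℝ) ≤ ((n:ℝ)+1) - θ := by
      have hn : (0:ℝ) ≤ (n:ℝ) := Nat.cast_nonneg n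
      linarith
    have h3 : (0:ℝ) < (n:ℝ)+2 := by positivity
    show 0 ≤ binc θ (n+1) * (((n:ℝ)+1) - θ) / ((n:ℝ)+2)
    exact div_nonneg (mul_nonneg h1 h2) (le_of_lt h3)

/- the binomial theorem -/

lemma exp_theta_log {s : PowerSeries ℝ} (hs0 : cc s = 0) (θ : ℝ) :
    expSer (CC θ * logOneSub s) = 1 - Ssum (binc θ) s := by
  have hinv : cc (1 - s) ≠ 0 := by
    rw [map_sub, map_one, hs0, sub_zero]; exact one_ne_zero
  have hl0 : cc (CC θ * logOneSub s) = 0 := by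
    rw [map_mul, constantCoeff_logOneSub, mul_zero]
  have hBin0 : cf 0 (Ssum (binc θ) s) = 0 := by
    rw [Ssum, PowerSeries.coeff_mk]
    simp [binc_zero]
  -- the ODE for the binomial sum
  have hDBin : (1 - s) * D (Ssum (binc θ) s) = CC θ * D s * (1 - Ssum (binc θ) s) := by
    apply eq_of_eqTo
    intro m
    have s1 : EqTo m (D (Ssum (binc θ) s)) (D s * T (fun k => binc θ (k+1) * (k+1)) s m) :=
      D_Ssum hs0 m
    have s2 : EqTo m ((1 - s) * D (Ssum (binc θ) s))
        (D s * ((1 - s) * T (fun k => binc θ (k+1) * (k+1)) s m)) :=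
      (EqTo.mul EqTo.refl s1).trans (eqTo_of_eq (by ring))
    have s3 : EqTo m ((1 - s) * T (fun k => binc θ (k+1) * (k+1)) s m)
        (T (fun n => (binc θ (n+1) * (n+1)) -
          (if n = 0 then 0 else binc θ (n-1+1) * ((n-1:ℕ)+1))) s (m+1)) :=
      one_sub_mul_T_eqTo hs0 _ m
    have s4 : T (fun n => (binc θ (n+1) * (n+1)) -
          (if n = 0 then 0 else binc θ (n-1+1) * ((n-1:ℕ)+1))) s (m+1)
        = T (fun n => θ * ((if n = 0 then 1 else 0) - binc θ n)) s (m+1) := by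
      apply T_congr
      intro n _
      rcases n with _ | k
      · simp [binc_one, binc_zero]
      · rw [if_neg (Nat.succ_ne_zero k), if_neg (Nat.succ_ne_zero k)]
        simp only [Nat.add_sub_cancel]
        have hc : (((k+1:ℕ):ℝ)+1) = (k:ℝ)+2 := by push_cast; ring
        rw [hc, binc_rec θ k]
        ring
    -- right-hand side
    have s5 : EqTo m (CC θ * D s * (1 - Ssum (binc θ) s))
        (D s * (CC θ * ((T (fun n => if n = 0 then 1 else 0) s (m+1)) - T (binc θ) s (m+1)))) := by
      have e1 : EqTo m (1 - Ssum (binc θ) s)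
          ((T (fun n => if n = 0 then 1 else 0) s (m+1)) - T (binc θ) s (m+1)) := by
        refine EqTo.sub (eqTo_of_eq (one_eq_T s (m+1))) (Ssum_eqTo hs0 (by omega))
      exact (eqTo_of_eq (by ring : CC θ * D s * (1 - Ssum (binc θ) s)
          = D s * (CC θ * (1 - Ssum (binc θ) s)))).trans
        (EqTo.mul EqTo.refl (EqTo.mul EqTo.refl e1))
    have s6 : CC θ * ((T (fun n => if n = 0 then 1 else 0) s (m+1)) - T (binc θ) s (m+1))
        = T (fun n => θ * ((if n = 0 then 1 else 0) - binc θ n)) s (m+1) := by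
      rw [T_sub, C_mul_T]
    refine (s2.trans ?_).trans s5.symm
    refine EqTo.mul EqTo.refl (s3.trans (eqTo_of_eq ?_))
    rw [s4, ← s6]
  -- now apply uniqueness
  have hBcc : cf 0 (1 - Ssum (binc θ) s) = 1 := by
    rw [map_sub, hBin0, sub_zero, PowerSeries.coeff_one, if_pos rfl]
  refine ode_unique (c := (1-s)⁻¹ * (CC θ * (-(D s)))) ?_ ?_ ?_
  · rw [D_expSer hl0]
    have hD1 : D (CC θ * logOneSub s) = CC θ * D (logOneSub s) := by
      rw [← PowerSeries.smul_eq_C_mul, Derivation.map_smul, PowerSeries.smul_eq_C_mul]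
    rw [hD1]
    have h2 : CC θ * D (logOneSub s) = (1-s)⁻¹ * (CC θ * (-(D s))) := by
      rw [← D_logOneSub hs0]
      rw [show CC θ * ((1-s) * D (logOneSub s)) = (1-s) * (CC θ * D (logOneSub s)) by ring]
      rw [← mul_assoc, PowerSeries.inv_mul_cancel _ hinv, one_mul]
    rw [h2]
  · have h3 : D (1 - Ssum (binc θ) s) = -(D (Ssum (binc θ) s)) := by
      rw [map_sub, Derivation.map_one_eq_zero, zero_sub]
    rw [h3]
    have h4 : (1-s) * (-(D (Ssum (binc θ) s))) = -(CC θ * D s * (1 - Ssum (binc θ) s)) := by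
      rw [← hDBin]; ring
    have h5 : -(D (Ssum (binc θ) s)) = (1-s)⁻¹ * ((1-s) * (-(D (Ssum (binc θ) s)))) := by
      rw [← mul_assoc, PowerSeries.inv_mul_cancel _ hinv, one_mul]
    rw [h5, h4]
    ring
  · rw [hBcc]
    simp only [PowerSeries.coeff_zero_eq_constantCoeff]
    rw [constantCoeff_expSer]

/- key positivity lemma -/

lemma key_pos {p d : PowerSeries ℝ} (hp0 : cc p = 0) (hd0 : cc d = 0)
    (hpPos : Pos p) (hdPos : Pos d) {θ : ℝ} (hθ0 : 0 ≤ θ) (hθ1 : θ ≤ 1) :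
    Pos ((1 - p) * Ssum (binc θ) (d * (1-p)⁻¹)) := by
  have hinv : cc (1 - p) ≠ 0 := by
    rw [map_sub, map_one, hp0, sub_zero]; exact one_ne_zero
  set s := d * (1-p)⁻¹ with hs
  have hs0 : cc s = 0 := by rw [hs, map_mul, hd0, zero_mul]
  intro m
  have e1 : EqTo m ((1-p) * Ssum (binc θ) s) ((1-p) * T (binc θ) s m) :=
    EqTo.mul EqTo.refl (Ssum_eqTo hs0 le_rfl)
  rw [e1.coeff]
  have e2 : (1-p) * T (binc θ) s m
      = ∑ n ∈ range (m+1), CC (binc θ n) * ((1-p) * s ^ n) := by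
    rw [T, Finset.mul_sum]
    exact Finset.sum_congr rfl fun n _ => by ring
  rw [e2, map_sum]
  apply Finset.sum_nonneg
  intro n _
  rw [PowerSeries.coeff_C_mul]
  rcases n with _ | k
  · rw [binc_zero, zero_mul]
  · apply mul_nonneg (binc_nonneg hθ0 hθ1 _)
    have e3 : (1-p) * s ^ (k+1) = d^(k+1) * ((1-p)⁻¹)^k := by
      rw [hs, mul_pow, pow_succ ((1-p)⁻¹) k]
      rw [show (1-p) * (d^(k+1) * (((1-p)⁻¹)^k * (1-p)⁻¹))
          = (d^(k+1) * ((1-p)⁻¹)^k) * ((1-p)⁻¹ * (1-p)) by ring]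
      rw [PowerSeries.inv_mul_cancel _ hinv, mul_one]
    rw [e3]
    exact Pos.mul (Pos.pow hdPos (k+1)) (Pos.pow (Pos_inv_one_sub hp0 hpPos) k) m

/- the merge lemma -/

lemma merge {p p' : PowerSeries ℝ} (hp0 : cc p = 0) (hp'0 : cc p' = 0)
    (hpPos : Pos p) (hle : Pos (p' - p)) {θ : ℝ} (hθ0 : 0 ≤ θ) (hθ1 : θ ≤ 1) :
    Pos ((1 - expSer (CC (1-θ) * logOneSub p + CC θ * logOneSub p')) - p)
    ∧ cc (1 - expSer (CC (1-θ) * logOneSub p + CC θ * logOneSub p')) = 0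
    ∧ logOneSub (1 - expSer (CC (1-θ) * logOneSub p + CC θ * logOneSub p'))
        = CC (1-θ) * logOneSub p + CC θ * logOneSub p' := by
  have hinv : cc (1 - p) ≠ 0 := by
    rw [map_sub, map_one, hp0, sub_zero]; exact one_ne_zero
  set d := p' - p with hd
  set s := d * (1-p)⁻¹ with hs
  have hd0 : cc d = 0 := by rw [hd, map_sub, hp0, hp'0, sub_zero]
  have hs0 : cc s = 0 := by rw [hs, map_mul, hd0, zero_mul]
  have hfact : (1-p) * (1-s) = 1 - p' := by
    have h1 : (1-p) * s = d := by
      rw [hs, show (1-p) * (d * (1-p)⁻¹) = d * ((1-p)⁻¹ * (1-p)) by ring,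
        PowerSeries.inv_mul_cancel _ hinv, mul_one]
    rw [mul_sub, mul_one, h1, hd]
    ring
  have hlsum : cc (logOneSub p + logOneSub s) = 0 := by
    rw [map_add, constantCoeff_logOneSub, constantCoeff_logOneSub, add_zero]
  have hlog : logOneSub p' = logOneSub p + logOneSub s := by
    apply exp_inj (constantCoeff_logOneSub _) hlsum
    rw [exp_log hp'0, exp_add (constantCoeff_logOneSub p) (constantCoeff_logOneSub s),
      exp_log hp0, exp_log hs0, hfact]
  have hql : CC (1-θ) * logOneSub p + CC θ * logOneSub p'
      = logOneSub p + CC θ * logOneSub s := by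
    rw [hlog, map_sub, map_one]
    ring
  have hcl : cc (CC θ * logOneSub s) = 0 := by
    rw [map_mul, constantCoeff_logOneSub, mul_zero]
  have hexp : expSer (CC (1-θ) * logOneSub p + CC θ * logOneSub p')
      = (1-p) * (1 - Ssum (binc θ) s) := by
    rw [hql, exp_add (constantCoeff_logOneSub p) hcl, exp_log hp0, exp_theta_log hs0]
  have hkey : (1 - expSer (CC (1-θ) * logOneSub p + CC θ * logOneSub p')) - p
      = (1-p) * Ssum (binc θ) s := by
    rw [hexp]; ring
  have hPpos : Pos ((1 - expSer (CC (1-θ) * logOneSub p + CC θ * logOneSub p')) - p) := by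
    rw [hkey, hs]
    exact key_pos hp0 hd0 hpPos (hd ▸ hle) hθ0 hθ1
  have hq0 : cc (CC (1-θ) * logOneSub p + CC θ * logOneSub p') = 0 := by
    rw [map_add, map_mul, map_mul, constantCoeff_logOneSub, constantCoeff_logOneSub,
      mul_zero, mul_zero, add_zero]
  have hPcc : cc (1 - expSer (CC (1-θ) * logOneSub p + CC θ * logOneSub p')) = 0 := by
    rw [map_sub, map_one, constantCoeff_expSer, sub_self]
  refine ⟨hPpos, hPcc, ?_⟩
  apply exp_inj (constantCoeff_logOneSub _) hq0
  rw [exp_log hPcc, sub_sub_cancel]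

/- the main induction -/

lemma main (n : ℕ) : ∀ (q : Fin (n+1) → PowerSeries ℝ) (w : Fin (n+1) → ℝ),
    (∀ j, cc (q j) = 0) → (∀ j, Pos (q j)) →
    (∀ j k : Fin (n+1), j ≤ k → Pos (q k - q j)) →
    (∀ j, 0 ≤ w j) → (∑ j, w j = 1) →
    Pos (1 - expSer (∑ j, CC (w j) * logOneSub (q j))) := by
  induction n with
  | zero =>
    intro q w h0 hP hchain hw hw1
    rw [Fin.sum_univ_one] at hw1
    rw [Fin.sum_univ_one, hw1, map_one, one_mul, exp_log (h0 0), sub_sub_cancel]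
    exact hP 0
  | succ n ih =>
    intro q w h0 hP hchain hw hw1
    set j1 : Fin (n+2) := (Fin.last n).castSucc with hj1
    set j2 : Fin (n+2) := Fin.last (n+1) with hj2
    set c : ℝ := w j1 + w j2 with hc
    set θ : ℝ := if c = 0 then 0 else w j2 / c with hθ
    have hc0 : 0 ≤ c := add_nonneg (hw j1) (hw j2)
    have hθ0 : 0 ≤ θ := by
      rw [hθ]; split
      · exact le_refl 0
      · exact div_nonneg (hw j2) hc0
    have hθ1 : θ ≤ 1 := by
      rw [hθ]; split
      · exact zero_le_one
      · rw [div_le_one (lt_of_le_of_ne hc0 (Ne.symm (by assumption)))]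
        have := hw j1; linarith
    have hcθ2 : c * θ = w j2 := by
      rw [hθ]; split
      · rename_i h
        have h2 := (add_eq_zero_iff_of_nonneg (hw j1) (hw j2)).1 (hc ▸ h)
        rw [h2.2, mul_zero]
      · field_simp
    have hcθ1 : c * (1-θ) = w j1 := by
      have : c * (1-θ) = c - c * θ := by ring
      rw [this, hcθ2, hc]; ring
    have hj1le : j1 ≤ j2 := Fin.le_last j1
    obtain ⟨hPpos, hPcc, hPlog⟩ :=
      merge (h0 j1) (h0 j2) (hP j1) (hchain j1 j2 hj1le) hθ0 hθ1
    set P : PowerSeries ℝ :=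
      1 - expSer (CC (1-θ) * logOneSub (q j1) + CC θ * logOneSub (q j2)) with hPdef
    have hPPos : Pos P := by
      intro m
      have h1 := (Pos.add (hP j1) hPpos) m
      rwa [show q j1 + (P - q j1) = P by ring] at h1
    set q' : Fin (n+1) → PowerSeries ℝ :=
      Fin.snoc (fun j : Fin n => q j.castSucc.castSucc) P with hq'
    set w' : Fin (n+1) → ℝ := Fin.snoc (fun j : Fin n => w j.castSucc.castSucc) c with hw'
    have htrans : ∑ j, CC (w' j) * logOneSub (q' j) = ∑ j, CC (w j) * logOneSub (q j) := by
      rw [Fin.sum_univ_castSucc (f := fun j => CC (w' j) * logOneSub (q' j))]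
      rw [Fin.sum_univ_castSucc (f := fun j => CC (w j) * logOneSub (q j))]
      rw [Fin.sum_univ_castSucc (f := fun j : Fin (n+1) => CC (w j.castSucc) * logOneSub (q j.castSucc))]
      have e1 : ∀ j : Fin n, CC (w' j.castSucc) * logOneSub (q' j.castSucc)
          = CC (w j.castSucc.castSucc) * logOneSub (q j.castSucc.castSucc) := by
        intro j
        rw [hq', hw', Fin.snoc_castSucc, Fin.snoc_castSucc]
      rw [Finset.sum_congr rfl (fun j _ => e1 j)]
      have e2 : CC (w' (Fin.last n)) * logOneSub (q' (Fin.last n))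
          = CC (w j1) * logOneSub (q j1) + CC (w j2) * logOneSub (q j2) := by
        rw [hq', hw', Fin.snoc_last, Fin.snoc_last, hPlog, ← hcθ1, ← hcθ2,
          map_mul, map_mul]
        ring
      rw [e2]
      ring
    have h0' : ∀ j, cc (q' j) = 0 := by
      intro j
      refine Fin.lastCases ?_ ?_ j
      · rw [hq', Fin.snoc_last]; exact hPcc
      · intro i; rw [hq', Fin.snoc_castSucc]; exact h0 _
    have hP' : ∀ j, Pos (q' j) := by
      intro j
      refine Fin.lastCases ?_ ?_ j
      · rw [hq', Fin.snoc_last]; exact hPPos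
      · intro i; rw [hq', Fin.snoc_castSucc]; exact hP _
    have hchain' : ∀ j k : Fin (n+1), j ≤ k → Pos (q' k - q' j) := by
      intro j k hjk
      rcases Fin.eq_castSucc_or_eq_last k with ⟨k', rfl⟩ | rfl
      · rcases Fin.eq_castSucc_or_eq_last j with ⟨j', rfl⟩ | rfl
        · rw [hq']
          simp only [Fin.snoc_castSucc]
          exact hchain _ _ (Fin.castSucc_le_castSucc_iff.2 (Fin.castSucc_le_castSucc_iff.1 hjk))
        · exfalso
          exact (Fin.castSucc_lt_last k').ne (Fin.last_le_iff.1 hjk)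
      · rcases Fin.eq_castSucc_or_eq_last j with ⟨j', rfl⟩ | rfl
        · rw [hq']
          simp only [Fin.snoc_last, Fin.snoc_castSucc]
          intro m
          have h1 := (Pos.add hPpos (hchain j'.castSucc.castSucc j1
            (by rw [hj1]; exact Fin.castSucc_le_castSucc_iff.2 (Fin.le_last _)))) m
          rwa [show (P - q j1) + (q j1 - q j'.castSucc.castSucc)
            = P - q j'.castSucc.castSucc by ring] at h1
        · rw [hq', Fin.snoc_last]
          intro m; rw [sub_self, map_zero]
    have hw0' : ∀ j, 0 ≤ w' j := by
      intro j
      refine Fin.lastCases ?_ ?_ j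
      · rw [hw', Fin.snoc_last]; exact hc0
      · intro i; rw [hw', Fin.snoc_castSucc]; exact hw _
    have hw1' : ∑ j, w' j = 1 := by
      rw [Fin.sum_univ_castSucc (f := w')]
      rw [Fin.sum_univ_castSucc (f := w)] at hw1
      rw [Fin.sum_univ_castSucc (f := fun j : Fin (n+1) => w j.castSucc)] at hw1
      have e1 : ∀ j : Fin n, w' j.castSucc = w j.castSucc.castSucc := by
        intro j; rw [hw', Fin.snoc_castSucc]
      rw [Finset.sum_congr rfl (fun j _ => e1 j)]
      rw [hw', Fin.snoc_last, hc, hj1, hj2]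
      rw [← hw1]
      ring
    have := ih q' w' h0' hP' hchain' hw0' hw1'
    rwa [htrans] at this

end Stmt9Aux

/-- Let `N ≥ 1`, let `μ` be probability weights on `{1,…,N}`, and for
each `k ≥ 1` let `p_k : {1,…,N} → ℝ` be nonnegative and nondecreasing.  Then every
coefficient of `1 - ∏_{j=1}^N (1 - p(j))^{μ(j)} = 1 - exp (∑_j μ(j) log (1 - p(j)))`
is nonnegative. -/
theorem stmt9 (N : ℕ) (hN : 1 ≤ N)
    (μ : Fin N → ℝ) (hμ0 : ∀ j, 0 ≤ μ j) (hμ1 : ∑ j, μ j = 1)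
    (p : ℕ → Fin N → ℝ)
    (hp0 : ∀ k, 1 ≤ k → ∀ j, 0 ≤ p k j)
    (hpmono : ∀ k, 1 ≤ k → Monotone (p k)) :
    ∀ m : ℕ, 0 ≤ PowerSeries.coeff (R := ℝ) m
        (1 - expSer (∑ j, PowerSeries.C (R := ℝ) (μ j) * logOneSub (pSer p j))) := by
  obtain ⟨n, rfl⟩ : ∃ n, N = n + 1 := ⟨N - 1, by omega⟩
  have h0 : ∀ j : Fin (n+1), PowerSeries.constantCoeff (R := ℝ) (pSer p j) = 0 := by
    intro j
    rw [← PowerSeries.coeff_zero_eq_constantCoeff_apply, pSer, PowerSeries.coeff_mk, if_pos rfl]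
  have hPos : ∀ j : Fin (n+1), Stmt9Aux.Pos (pSer p j) := by
    intro j m
    rw [pSer, PowerSeries.coeff_mk]
    split
    · exact le_refl 0
    · exact hp0 m (by omega) j
  have hchain : ∀ j k : Fin (n+1), j ≤ k → Stmt9Aux.Pos (pSer p k - pSer p j) := by
    intro j k hjk m
    rw [map_sub, pSer, pSer, PowerSeries.coeff_mk, PowerSeries.coeff_mk]
    split
    · rw [sub_self]
    · exact sub_nonneg.2 (hpmono m (by omega) hjk)
  exact Stmt9Aux.main n (fun j => pSer p j) μ h0 hPos hchain hμ0 hμ1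
end
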